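/- arXiv:1501.02470 — 5 statements merged into one kernel-verified Lean document; each statement's English description precedes it below -/
import Mathlib

section
/- Let K be a finite field with |K| = q, let W be a finite-dimensional K-vector space, and let (U,V) be a nontrivial solution of the isometry equation with tuples of length m = q+1 such that max_i dim_K V_i = max_i dim_K U_i = n > 1. Then there exists a subspace S ⊆ W with dim_K S = n−2 such that S ⊆ U_i and S ⊆ V_i for all i ∈ {1,…,m}. -/
open Finset
open scoped Classical

set_option linter.unusedSectionVars false
set_option maxHeartbeats 1600000

noncomputable section IsomAux

namespace IsomAux

open Module Submodule

variable {K E : Type*} [Field K] [Fintype K] [AddCommGroup E] [Module K E] [Fintype E]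
  [FiniteDimensional K E]

/-- number of indices whose submodule contains `x` -/
def cnt {m : ℕ} (A : Fin m → Submodule K E) (x : E) : ℕ :=
  (Finset.univ.filter (fun i => x ∈ A i)).card

/-- the elements of a submodule, as a finset -/
def fset (X : Submodule K E) : Finset E := Finset.univ.filter (fun x => x ∈ X)

lemma mem_fset {X : Submodule K E} {x : E} : x ∈ fset X ↔ x ∈ X := by simp [fset]

lemma fset_card (X : Submodule K E) :
    (fset X).card = Fintype.card K ^ Module.finrank K X := by
  rw [fset, ← Fintype.card_subtype]
  exact card_eq_pow_finrank

lemma fset_mono {X Y : Submodule K E} (h : X ≤ Y) : fset X ⊆ fset Y := by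
  intro x hx; rw [mem_fset] at *; exact h hx

lemma eq_of_le_of_fset_card_le {X Y : Submodule K E} (h : X ≤ Y)
    (hc : (fset Y).card ≤ (fset X).card) : X = Y := by
  have heq := Finset.eq_of_subset_of_card_le (fset_mono h) hc
  apply SetLike.ext
  intro x
  constructor
  · exact fun hx => h hx
  · intro hx
    exact mem_fset.1 (heq ▸ (mem_fset.2 hx))

/-- basic covering count: if the nonzero elements of `X` are covered by the `C i ⊓ X`, then
`q^dim X - 1 ≤ ∑ (q^dim (C i ⊓ X) - 1)`. -/
lemma cover_count {ι : Type*} (s : Finset ι) (X : Submodule K E) (C : ι → Submodule K E)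
    (hcov : ∀ x ∈ X, x ≠ 0 → ∃ i ∈ s, x ∈ C i) :
    Fintype.card K ^ Module.finrank K X - 1 ≤
      ∑ i ∈ s, (Fintype.card K ^ Module.finrank K (C i ⊓ X : Submodule K E) - 1) := by
  have hsub : (fset X).erase 0 ⊆ s.biUnion (fun i => (fset (C i ⊓ X)).erase 0) := by
    intro x hx
    rw [Finset.mem_erase, mem_fset] at hx
    obtain ⟨i, hi, hxi⟩ := hcov x hx.2 hx.1
    rw [Finset.mem_biUnion]
    exact ⟨i, hi, by rw [Finset.mem_erase, mem_fset]; exact ⟨hx.1, Submodule.mem_inf.2 ⟨hxi, hx.2⟩⟩⟩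
  have h1 := (Finset.card_le_card hsub).trans Finset.card_biUnion_le
  rw [Finset.card_erase_of_mem (mem_fset.2 X.zero_mem), fset_card] at h1
  refine h1.trans (Finset.sum_le_sum ?_)
  intro i _
  rw [Finset.card_erase_of_mem (mem_fset.2 (Submodule.zero_mem _)), fset_card]

/-- a vector space over `K` cannot be covered by at most `card K` proper subspaces -/
lemma union_lemma {ι : Type*} (s : Finset ι) (hs : s.card ≤ Fintype.card K)
    (X : Submodule K E) (C : ι → Submodule K E)
    (hcov : ∀ x ∈ X, ∃ i ∈ s, x ∈ C i) : ∃ i ∈ s, X ≤ C i := by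
  by_contra hcon
  push_neg at hcon
  obtain ⟨i0, hi0s, _⟩ := hcov 0 X.zero_mem
  have hq2 : 2 ≤ Fintype.card K := Fintype.one_lt_card
  rcases Nat.eq_zero_or_pos (Module.finrank K X) with h0 | hdpos
  · have hbot : X = ⊥ := Submodule.finrank_eq_zero.mp h0
    exact hcon i0 hi0s (hbot ▸ bot_le)
  have hcc := cover_count s X C (fun x hx _ => hcov x hx)
  have hterm : ∀ i ∈ s, Fintype.card K ^ Module.finrank K (C i ⊓ X : Submodule K E) - 1
      ≤ Fintype.card K ^ (Module.finrank K X - 1) - 1 := by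
    intro i hi
    have hlt : (C i ⊓ X : Submodule K E) < X := by
      refine lt_of_le_of_ne inf_le_right (fun h => hcon i hi ?_)
      intro x hx
      exact (Submodule.mem_inf.1 (h.symm ▸ hx : x ∈ C i ⊓ X)).1
    have hrk := Submodule.finrank_lt_finrank_of_lt hlt
    exact Nat.sub_le_sub_right
      (Nat.pow_le_pow_right (by omega) (by omega)) 1
  have h2 : Fintype.card K ^ Module.finrank K X - 1
      ≤ Fintype.card K * (Fintype.card K ^ (Module.finrank K X - 1) - 1) := by
    calc Fintype.card K ^ Module.finrank K X - 1
        ≤ ∑ i ∈ s, (Fintype.card K ^ Module.finrank K (C i ⊓ X : Submodule K E) - 1) := hcc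
      _ ≤ ∑ _i ∈ s, (Fintype.card K ^ (Module.finrank K X - 1) - 1) := Finset.sum_le_sum hterm
      _ = s.card * (Fintype.card K ^ (Module.finrank K X - 1) - 1) := by
          rw [Finset.sum_const, smul_eq_mul]
      _ ≤ Fintype.card K * (Fintype.card K ^ (Module.finrank K X - 1) - 1) :=
          Nat.mul_le_mul_right _ hs
  have e1 : Fintype.card K ^ Module.finrank K X
      = Fintype.card K * Fintype.card K ^ (Module.finrank K X - 1) := by
    conv_lhs => rw [show Module.finrank K X = (Module.finrank K X - 1) + 1 by omega]
    ring
  have e2 : Fintype.card K * (Fintype.card K ^ (Module.finrank K X - 1) - 1)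
      = Fintype.card K * Fintype.card K ^ (Module.finrank K X - 1) - Fintype.card K := by
    rw [Nat.mul_sub]; ring_nf
  have hp1 : 1 ≤ Fintype.card K ^ (Module.finrank K X - 1) := Nat.one_le_pow _ _ (by omega)
  have hBq : Fintype.card K ≤ Fintype.card K * Fintype.card K ^ (Module.finrank K X - 1) :=
    Nat.le_mul_of_pos_right _ hp1
  omega

lemma zero_ne_one' : (0 : Fin (Fintype.card K + 1)) ≠ 1 := by
  have hq := Fintype.one_lt_card (α := K)
  have h1 : ((1 : Fin (Fintype.card K + 1)) : ℕ) = 1 := by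
    rw [Fin.val_one']
    exact Nat.mod_eq_of_lt (by omega)
  intro h
  rw [Fin.ext_iff, Fin.val_zero, h1] at h
  omega

section CoverStructure

variable (X : Submodule K E) (C : Fin (Fintype.card K + 1) → Submodule K E)
  (hle : ∀ j, C j ≤ X) (hne : ∀ j, C j ≠ X) (hcov : ∀ x ∈ X, ∃ j, x ∈ C j)

include hle hne hcov

/-- each `C j` has a "private" point -/
lemma exists_private (j : Fin (Fintype.card K + 1)) :
    ∃ x, x ∈ C j ∧ ∀ l, l ≠ j → x ∉ C l := by
  have hcard : (Finset.univ.erase j).card ≤ Fintype.card K := by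
    rw [Finset.card_erase_of_mem (Finset.mem_univ j), Finset.card_univ, Fintype.card_fin]
    omega
  by_cases hall : ∀ x ∈ X, ∃ l ∈ Finset.univ.erase j, x ∈ C l
  · obtain ⟨l, hl, hXl⟩ := union_lemma _ hcard X C hall
    exact absurd (le_antisymm (hle l) hXl) (hne l)
  · push_neg at hall
    obtain ⟨x, hxX, hx⟩ := hall
    obtain ⟨l', hxl'⟩ := hcov x hxX
    have : l' = j := by
      by_contra hne'
      exact hx l' (Finset.mem_erase.2 ⟨hne', Finset.mem_univ _⟩) hxl'
    exact ⟨x, this ▸ hxl', fun l hl hxl => hx l (Finset.mem_erase.2 ⟨hl, Finset.mem_univ _⟩) hxl⟩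

/-- any two members of a `(q+1)`-cover have the whole space as their sup -/
lemma cover_sup_eq {j j' : Fin (Fintype.card K + 1)} (hjj : j ≠ j') : C j ⊔ C j' = X := by
  refine le_antisymm (sup_le (hle j) (hle j')) ?_
  by_contra hcon
  obtain ⟨y, hyX, hy⟩ := SetLike.not_le_iff_exists.1 hcon
  obtain ⟨xj, hxj, hxjpriv⟩ := exists_private X C hle hne hcov j
  have hxjX : xj ∈ X := hle j hxj
  have hz : ∀ c : K, y + c • xj ∈ X := fun c => X.add_mem hyX (X.smul_mem c hxjX)
  have hmaps : ∀ c ∈ (Finset.univ : Finset K),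
      (Classical.choose (hcov _ (hz c))) ∈ (Finset.univ.erase j).erase j' := by
    intro c _
    have hmem := Classical.choose_spec (hcov _ (hz c))
    refine Finset.mem_erase.2 ⟨?_, Finset.mem_erase.2 ⟨?_, Finset.mem_univ _⟩⟩
    · intro heq
      rw [heq] at hmem
      exact hy (by
        have h'' := (C j ⊔ C j').sub_mem ((le_sup_right : C j' ≤ C j ⊔ C j') hmem)
          ((le_sup_left : C j ≤ C j ⊔ C j') ((C j).smul_mem c hxj))
        rwa [add_sub_cancel_right] at h'')
    · intro heq
      rw [heq] at hmem
      have h'' := (C j).sub_mem hmem ((C j).smul_mem c hxj)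
      rw [add_sub_cancel_right] at h''
      exact hy ((le_sup_left : C j ≤ C j ⊔ C j') h'')
  have hcard : ((Finset.univ.erase j).erase j').card < (Finset.univ : Finset K).card := by
    rw [Finset.card_erase_of_mem (Finset.mem_erase.2 ⟨hjj.symm, Finset.mem_univ _⟩),
      Finset.card_erase_of_mem (Finset.mem_univ j), Finset.card_univ, Finset.card_univ,
      Fintype.card_fin]
    have := Fintype.one_lt_card (α := K)
    omega
  obtain ⟨c, _, c', _, hcc, heq⟩ :=
    Finset.exists_ne_map_eq_of_card_lt_of_maps_to hcard hmaps
  have hcm := Classical.choose_spec (hcov _ (hz c))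
  have hcm' := Classical.choose_spec (hcov _ (hz c'))
  rw [← heq] at hcm'
  set l := Classical.choose (hcov _ (hz c)) with hldef
  have hsub : (c - c') • xj ∈ C l := by
    have h' := (C l).sub_mem hcm hcm'
    have e : y + c • xj - (y + c' • xj) = (c - c') • xj := by
      rw [sub_smul]; abel
    rwa [e] at h'
  have hxjl : xj ∈ C l := by
    have hcc0 : c - c' ≠ 0 := sub_ne_zero.2 hcc
    have h' := (C l).smul_mem (c - c')⁻¹ hsub
    rwa [inv_smul_smul₀ hcc0] at h'
  have hlj : l ≠ j := by
    have h' := hmaps c (Finset.mem_univ c)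
    rw [← hldef] at h'
    exact (Finset.mem_erase.1 (Finset.mem_erase.1 h').2).1
  exact hxjpriv l hlj hxjl

/-- pairwise intersections are contained in every other member -/
lemma cover_inf_le {j j' l : Fin (Fintype.card K + 1)} (h1 : j ≠ j') (h2 : l ≠ j) (h3 : l ≠ j') :
    C j ⊓ C j' ≤ C l := by
  intro z hz
  obtain ⟨hzj, hzj'⟩ := Submodule.mem_inf.1 hz
  by_contra hzl
  obtain ⟨xl, hxl, hxlpriv⟩ := exists_private X C hle hne hcov l
  have hxlX : xl ∈ X := hle l hxl
  have hzX : z ∈ X := hle j hzj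
  have hw : ∀ c : K, z + c • xl ∈ X := fun c => X.add_mem hzX (X.smul_mem c hxlX)
  have hxlnotj : xl ∉ C j := hxlpriv j h2.symm
  have hxlnotj' : xl ∉ C j' := hxlpriv j' h3.symm
  have hmaps : ∀ c ∈ (Finset.univ.erase (0 : K)),
      (Classical.choose (hcov _ (hw c))) ∈ (((Finset.univ.erase j).erase j').erase l) := by
    intro c hc
    have hc0 : c ≠ 0 := (Finset.mem_erase.1 hc).1
    have hmem := Classical.choose_spec (hcov _ (hw c))
    refine Finset.mem_erase.2 ⟨?_, Finset.mem_erase.2 ⟨?_, Finset.mem_erase.2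
      ⟨?_, Finset.mem_univ _⟩⟩⟩
    · intro heq
      rw [heq] at hmem
      have h'' := (C l).sub_mem hmem ((C l).smul_mem c hxl)
      rw [add_sub_cancel_right] at h''
      exact hzl h''
    · intro heq
      rw [heq] at hmem
      have h'' := (C j').sub_mem hmem hzj'
      rw [add_sub_cancel_left] at h''
      have h3' := (C j').smul_mem c⁻¹ h''
      rw [inv_smul_smul₀ hc0] at h3'
      exact hxlnotj' h3'
    · intro heq
      rw [heq] at hmem
      have h'' := (C j).sub_mem hmem hzj
      rw [add_sub_cancel_left] at h''
      have h3' := (C j).smul_mem c⁻¹ h''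
      rw [inv_smul_smul₀ hc0] at h3'
      exact hxlnotj h3'
  have hcard : ((((Finset.univ.erase j).erase j').erase l)).card
      < (Finset.univ.erase (0 : K)).card := by
    rw [Finset.card_erase_of_mem (Finset.mem_erase.2 ⟨h3, Finset.mem_erase.2
        ⟨h2, Finset.mem_univ _⟩⟩),
      Finset.card_erase_of_mem (Finset.mem_erase.2 ⟨h1.symm, Finset.mem_univ _⟩),
      Finset.card_erase_of_mem (Finset.mem_univ j),
      Finset.card_erase_of_mem (Finset.mem_univ (0:K)),
      Finset.card_univ, Finset.card_univ, Fintype.card_fin]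
    have := Fintype.one_lt_card (α := K)
    omega
  obtain ⟨c, hcmem, c', hcmem', hcc, heq⟩ :=
    Finset.exists_ne_map_eq_of_card_lt_of_maps_to hcard hmaps
  have hcm := Classical.choose_spec (hcov _ (hw c))
  have hcm' := Classical.choose_spec (hcov _ (hw c'))
  rw [← heq] at hcm'
  set l' := Classical.choose (hcov _ (hw c)) with hl'def
  have hsub : (c - c') • xl ∈ C l' := by
    have h' := (C l').sub_mem hcm hcm'
    have e : z + c • xl - (z + c' • xl) = (c - c') • xl := by
      rw [sub_smul]; abel
    rwa [e] at h'
  have hxll' : xl ∈ C l' := by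
    have hcc0 : c - c' ≠ 0 := sub_ne_zero.2 hcc
    have h' := (C l').smul_mem (c - c')⁻¹ hsub
    rwa [inv_smul_smul₀ hcc0] at h'
  have hll : l' ≠ l := by
    have h' := hmaps c hcmem
    rw [← hl'def] at h'
    exact (Finset.mem_erase.1 h').1
  exact hxlpriv l' hll hxll'

lemma cover_finrank :
    (∀ j, Module.finrank K (C j) + 1 = Module.finrank K X) ∧
    (∀ j, C 0 ⊓ C 1 ≤ C j) ∧
    (Module.finrank K (C 0 ⊓ C 1 : Submodule K E) + 2 = Module.finrank K X) := by
  have hq : 2 ≤ Fintype.card K := Fintype.one_lt_card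
  have h01 : (0 : Fin (Fintype.card K + 1)) ≠ 1 := zero_ne_one'
  -- pairwise intersections all contained in everything
  have hinfle : ∀ j j' l : Fin (Fintype.card K + 1), j ≠ j' → C j ⊓ C j' ≤ C l := by
    intro j j' l hjj
    by_cases hlj : l = j
    · exact hlj ▸ inf_le_left
    by_cases hlj' : l = j'
    · exact hlj' ▸ inf_le_right
    exact cover_inf_le X C hle hne hcov hjj hlj hlj'
  have hD : ∀ j, C 0 ⊓ C 1 ≤ C j := fun j => hinfle 0 1 j h01
  have hinf_eq : ∀ j j' : Fin (Fintype.card K + 1), j ≠ j' → C j ⊓ C j' = C 0 ⊓ C 1 :=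
    fun j j' hjj => le_antisymm (le_inf (hinfle j j' 0 hjj) (hinfle j j' 1 hjj))
      (le_inf (hinfle 0 1 j h01) (hinfle 0 1 j' h01))
  -- dimension relation for each pair
  have hpair : ∀ j j' : Fin (Fintype.card K + 1), j ≠ j' →
      Module.finrank K (C j) + Module.finrank K (C j') =
      Module.finrank K X + Module.finrank K (C 0 ⊓ C 1 : Submodule K E) := by
    intro j j' hjj
    have := Submodule.finrank_sup_add_finrank_inf_eq (C j) (C j')
    rw [cover_sup_eq X C hle hne hcov hjj, hinf_eq j j' hjj] at this
    omega
  -- a third index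
  have hk : ∃ k : Fin (Fintype.card K + 1), k ≠ 0 ∧ k ≠ 1 := by
    refine ⟨⟨2, by omega⟩, ?_, ?_⟩ <;>
      · intro h
        rw [Fin.ext_iff] at h
        simp [Fin.val_one', Nat.mod_eq_of_lt (show 1 < Fintype.card K + 1 by omega)] at h
  obtain ⟨k, hk0, hk1⟩ := hk
  -- all dims equal
  have hallc : ∀ j, Module.finrank K (C j) = Module.finrank K (C 0) := by
    have h0k := hpair 0 k (Ne.symm hk0)
    have h1k := hpair 1 k (Ne.symm hk1)
    have h01' := hpair 0 1 h01
    intro j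
    by_cases hj0 : j = 0
    · rw [hj0]
    by_cases hj1 : j = 1
    · rw [hj1]; omega
    have := hpair 0 j (Ne.symm hj0)
    omega
  -- counting gives c + 1 = dim X
  have hlt : ∀ j, Module.finrank K (C j) < Module.finrank K X := by
    intro j
    exact Submodule.finrank_lt_finrank_of_lt (lt_of_le_of_ne (hle j) (hne j))
  have hcount := cover_count Finset.univ X C (fun x hx _ => by
    obtain ⟨j, hj⟩ := hcov x hx; exact ⟨j, Finset.mem_univ j, hj⟩)
  have hCjX : ∀ j : Fin (Fintype.card K + 1), C j ⊓ X = C j :=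
    fun j => inf_eq_left.2 (hle j)
  have hsum : ∑ j : Fin (Fintype.card K + 1),
      (Fintype.card K ^ Module.finrank K (C j ⊓ X : Submodule K E) - 1)
      = (Fintype.card K + 1) * (Fintype.card K ^ Module.finrank K (C 0) - 1) := by
    rw [Finset.sum_congr rfl (fun j _ => by rw [hCjX j, hallc j]), Finset.sum_const,
      Finset.card_univ, Fintype.card_fin, smul_eq_mul]
  rw [hsum] at hcount
  have hc1 : Module.finrank K (C 0) + 1 = Module.finrank K X := by
    by_contra hcon
    have hc2 : Module.finrank K (C 0) + 2 ≤ Module.finrank K X := by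
      have := hlt 0
      omega
    have hP1 : 1 ≤ Fintype.card K ^ (Module.finrank K X - 2) := Nat.one_le_pow _ _ (by omega)
    have hmono : Fintype.card K ^ Module.finrank K (C 0)
        ≤ Fintype.card K ^ (Module.finrank K X - 2) := Nat.pow_le_pow_right (by omega) (by omega)
    have heq2 : Fintype.card K ^ Module.finrank K X
        = (Fintype.card K * Fintype.card K) * Fintype.card K ^ (Module.finrank K X - 2) := by
      conv_lhs => rw [show Module.finrank K X = (Module.finrank K X - 2) + 2 by omega]
      rw [pow_add]
      ring
    clear hsum hpair hinf_eq hinfle hD hallc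
    generalize hA : Fintype.card K ^ (Module.finrank K X - 2) = A at hP1 hmono heq2
    generalize ha : Fintype.card K ^ Module.finrank K (C 0) = a at hcount hmono
    generalize hDX : Fintype.card K ^ Module.finrank K X = DX at hcount heq2
    have h6 : (Fintype.card K + 1) * (a - 1) ≤ (Fintype.card K + 1) * (A - 1) :=
      Nat.mul_le_mul_left _ (by omega)
    have h7 : (Fintype.card K + 1) * (A - 1) = (Fintype.card K + 1) * A - (Fintype.card K + 1) := by
      rw [Nat.mul_sub, mul_one]
    have h8 : (Fintype.card K + 2) * A = (Fintype.card K + 1) * A + A := by ring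
    have h9 : (Fintype.card K + 2) * A ≤ (Fintype.card K * Fintype.card K) * A :=
      Nat.mul_le_mul_right _ (by nlinarith)
    have h10 : (Fintype.card K + 1) ≤ (Fintype.card K + 1) * A :=
      Nat.le_mul_of_pos_right _ (by omega)
    omega
  refine ⟨fun j => by rw [hallc j]; exact hc1, hD, ?_⟩
  have h01p := hpair 0 1 h01
  have h1c := hallc 1
  omega

end CoverStructure


section Counting

variable {m : ℕ} (A B : Fin m → Submodule K E)

lemma exists_mem_of_cnt_pos {x : E} {C : Fin m → Submodule K E} (h : 0 < cnt C x) :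
    ∃ j, x ∈ C j := by
  rw [cnt, Finset.card_pos] at h
  obtain ⟨j, hj⟩ := h
  exact ⟨j, (Finset.mem_filter.1 hj).2⟩

lemma cnt_pos_of_mem {x : E} {C : Fin m → Submodule K E} {j : Fin m} (h : x ∈ C j) :
    0 < cnt C x :=
  Finset.card_pos.2 ⟨j, Finset.mem_filter.2 ⟨Finset.mem_univ _, h⟩⟩

lemma sum_fset_inf_eq (C : Fin m → Submodule K E) (Y : Submodule K E) :
    ∑ i, (fset (C i ⊓ Y)).card = ∑ x ∈ fset Y, cnt C x := by
  have h1 : ∀ i, fset (C i ⊓ Y) = (fset Y).filter (fun x => x ∈ C i) := by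
    intro i
    ext x
    simp only [mem_fset, Submodule.mem_inf, Finset.mem_filter, mem_fset]
    tauto
  calc ∑ i, (fset (C i ⊓ Y)).card
      = ∑ i, ∑ x ∈ fset Y, (if x ∈ C i then 1 else 0) := by
        refine Finset.sum_congr rfl (fun i _ => ?_)
        rw [h1 i, Finset.card_filter]
    _ = ∑ x ∈ fset Y, ∑ i, (if x ∈ C i then 1 else 0) := Finset.sum_comm
    _ = ∑ x ∈ fset Y, cnt C x := by
        refine Finset.sum_congr rfl (fun x _ => ?_)
        rw [cnt, Finset.card_filter]

lemma sum_card_inf (hP : ∀ x : E, cnt A x = cnt B x) (Y : Submodule K E) :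
    ∑ i, (fset (A i ⊓ Y)).card = ∑ i, (fset (B i ⊓ Y)).card := by
  rw [sum_fset_inf_eq, sum_fset_inf_eq]
  exact Finset.sum_congr rfl (fun x _ => hP x)

/-- if a subspace is below all members of the right family, it is below all of the left one -/
lemma le_all_of_le_all (hP : ∀ x : E, cnt A x = cnt B x) (Y : Submodule K E)
    (hY : ∀ j, Y ≤ B j) (i : Fin m) : Y ≤ A i := by
  have hsy := sum_card_inf A B hP Y
  have hBY : ∀ j, B j ⊓ Y = Y := fun j => inf_eq_right.2 (hY j)
  have hsy2 : ∑ j : Fin m, (fset (B j ⊓ Y)).card = ∑ _j : Fin m, (fset Y).card :=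
    Finset.sum_congr rfl (fun j _ => by rw [hBY j])
  have hle : ∀ i ∈ Finset.univ, (fset (A i ⊓ Y)).card ≤ (fset Y).card :=
    fun i _ => Finset.card_le_card (fset_mono inf_le_right)
  have := (Finset.sum_eq_sum_iff_of_le hle).1 (hsy.trans hsy2) i (Finset.mem_univ i)
  have heq := eq_of_le_of_fset_card_le (inf_le_right : A i ⊓ Y ≤ Y) (le_of_eq this.symm)
  calc Y = A i ⊓ Y := heq.symm
    _ ≤ A i := inf_le_left

/-- if all members of the right family are below `T`, so are all members of the left one -/
lemma all_le_of_all_le (hP : ∀ x : E, cnt A x = cnt B x) (T : Submodule K E)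
    (hT : ∀ j, B j ≤ T) (i : Fin m) : A i ≤ T := by
  have h1 := sum_card_inf A B hP T
  have h2 := sum_card_inf A B hP ⊤
  simp only [inf_top_eq] at h2
  have hBT : ∀ j, B j ⊓ T = B j := fun j => inf_eq_left.2 (hT j)
  have h3 : ∑ j : Fin m, (fset (B j ⊓ T)).card = ∑ j : Fin m, (fset (B j)).card :=
    Finset.sum_congr rfl (fun j _ => by rw [hBT j])
  have hle : ∀ i ∈ Finset.univ, (fset (A i ⊓ T)).card ≤ (fset (A i)).card :=
    fun i _ => Finset.card_le_card (fset_mono inf_le_left)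
  have := (Finset.sum_eq_sum_iff_of_le hle).1 ((h1.trans h3).trans h2.symm) i (Finset.mem_univ i)
  have heq := eq_of_le_of_fset_card_le (inf_le_left : A i ⊓ T ≤ A i) (le_of_eq this.symm)
  calc A i = A i ⊓ T := heq.symm
    _ ≤ T := inf_le_right

end Counting

section ThmD

theorem thmD (A B : Fin (Fintype.card K + 1) → Submodule K E)
    (hP : ∀ x : E, cnt A x = cnt B x)
    (hNE : ∀ i j, A i ≠ B j)
    (i1 : Fin (Fintype.card K + 1))
    (hmaxA : ∀ i, Module.finrank K (A i) ≤ Module.finrank K (A i1))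
    (hmaxB : ∀ j, Module.finrank K (B j) ≤ Module.finrank K (A i1))
    (a : ℕ) (hAa : ∀ i, a ≤ Module.finrank K (A i))
    (hAex : ∃ i, Module.finrank K (A i) = a) (hBex : ∃ j, Module.finrank K (B j) = a) :
    ∃ T : Submodule K E, Module.finrank K T ≤ a + 2 ∧ ∀ i, A i ≤ T ∧ B i ≤ T := by
  set C : Fin (Fintype.card K + 1) → Submodule K E := fun j => A i1 ⊓ B j with hC
  have hle : ∀ j, C j ≤ A i1 := fun j => inf_le_left
  have hcov : ∀ x ∈ A i1, ∃ j, x ∈ C j := by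
    intro x hx
    have h1 : 0 < cnt B x := by
      rw [← hP]
      exact cnt_pos_of_mem hx
    obtain ⟨j, hj⟩ := exists_mem_of_cnt_pos h1
    exact ⟨j, Submodule.mem_inf.2 ⟨hx, hj⟩⟩
  have hne : ∀ j, C j ≠ A i1 := by
    intro j h
    have h2 : A i1 ≤ B j := by
      rw [← inf_eq_left]
      exact h
    exact hNE i1 j (Submodule.eq_of_le_of_finrank_le h2 (hmaxB j))
  obtain ⟨h1, h3, h4⟩ := cover_finrank (A i1) C hle hne hcov
  set D : Submodule K E := C 0 ⊓ C 1 with hD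
  have hDB : ∀ j, D ≤ B j := fun j => (h3 j).trans inf_le_right
  have hDA : ∀ i, D ≤ A i := fun i => le_all_of_le_all A B hP D hDB i
  have hBdim : ∀ j, Module.finrank K (A i1) ≤ Module.finrank K (B j) + 1 := by
    intro j
    have hm : Module.finrank K (C j) ≤ Module.finrank K (B j) :=
      Submodule.finrank_mono inf_le_right
    have := h1 j
    omega
  have haM : Module.finrank K (A i1) ≤ a + 1 := by
    obtain ⟨js, hjs⟩ := hBex
    have := hBdim js
    omega
  -- pick a second index k ≠ i1 with dim a
  obtain ⟨k, hkne, hka⟩ : ∃ k, k ≠ i1 ∧ Module.finrank K (A k) = a := by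
    obtain ⟨i0, hi0⟩ := hAex
    by_cases hii : i0 = i1
    · have haM' : Module.finrank K (A i1) = a := by rw [← hii, hi0]
      refine ⟨if i1 = 0 then 1 else 0, ?_, ?_⟩
      · split
        · rename_i h0
          rw [h0]
          exact (zero_ne_one' (K := K)).symm
        · rename_i h0
          exact fun h => h0 h.symm
      · exact le_antisymm (haM' ▸ hmaxA _) (hAa _)
    · exact ⟨i0, hii, hi0⟩
  refine ⟨A i1 ⊔ A k, ?_, ?_⟩
  · -- dimension bound
    have hsum := Submodule.finrank_sup_add_finrank_inf_eq (A i1) (A k)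
    have hDinf : D ≤ A i1 ⊓ A k := le_inf (hDA i1) (hDA k)
    have hDm : Module.finrank K D ≤ Module.finrank K (A i1 ⊓ A k : Submodule K E) :=
      Submodule.finrank_mono hDinf
    omega
  · -- all members below T
    have hBT : ∀ j, B j ≤ A i1 ⊔ A k := by
      intro j
      by_cases hdim : Module.finrank K (B j) + 1 = Module.finrank K (A i1)
      · -- small B j : B j = C j ≤ A i1
        have hCBj : C j = B j :=
          Submodule.eq_of_le_of_finrank_le (inf_le_right : C j ≤ B j)
            (by have := h1 j; omega)
        calc B j = C j := hCBj.symm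
          _ ≤ A i1 := hle j
          _ ≤ A i1 ⊔ A k := le_sup_left
      · -- big B j : use the cover of B j by the A's
        have hMBj : Module.finrank K (B j) = Module.finrank K (A i1) := by
          have := hBdim j
          have := hmaxB j
          omega
        set C' : Fin (Fintype.card K + 1) → Submodule K E := fun i => B j ⊓ A i with hC'
        have hle' : ∀ i, C' i ≤ B j := fun i => inf_le_left
        have hcov' : ∀ x ∈ B j, ∃ i, x ∈ C' i := by
          intro x hx
          have hp : 0 < cnt A x := by
            rw [hP]
            exact cnt_pos_of_mem hx
          obtain ⟨i, hi⟩ := exists_mem_of_cnt_pos hp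
          exact ⟨i, Submodule.mem_inf.2 ⟨hx, hi⟩⟩
        have hne' : ∀ i, C' i ≠ B j := by
          intro i h
          have h2 : B j ≤ A i := by
            rw [← inf_eq_left]
            exact h
          exact hNE i j (Submodule.eq_of_le_of_finrank_le h2 (hMBj ▸ hmaxA i)).symm
        have hsup := cover_sup_eq (B j) C' hle' hne' hcov' (Ne.symm hkne)
        calc B j = C' i1 ⊔ C' k := hsup.symm
          _ ≤ A i1 ⊔ A k := sup_le (le_trans inf_le_right le_sup_left)
              (le_trans inf_le_right le_sup_right)
    exact fun i => ⟨all_le_of_all_le A B hP _ hBT i, hBT i⟩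

end ThmD

section Cancel

lemma cnt_eq_ite_add_cnt {n : ℕ} (C : Fin (n+1) → Submodule K E) (p : Fin (n+1)) (x : E) :
    cnt C x = (if x ∈ C p then 1 else 0) + cnt (fun i => C (p.succAbove i)) x := by
  rw [cnt, cnt, Finset.card_filter, Finset.card_filter]
  exact Fin.sum_univ_succAbove (fun i => if x ∈ C i then 1 else 0) p

theorem cancel : ∀ (k : ℕ), k ≤ Fintype.card K → ∀ (A B : Fin k → Submodule K E),
    (∀ x : E, cnt A x = cnt B x) → ∃ π : Equiv.Perm (Fin k), ∀ i, A i = B (π i) := by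
  intro k
  induction k with
  | zero =>
    intro _ A B _
    exact ⟨Equiv.refl _, fun i => i.elim0⟩
  | succ n ih =>
    intro hk A B hP
    -- find a matched pair (i0, j0) with A i0 = B j0
    have hmatch : ∃ i0 j0, A i0 = B j0 := by
      set f : Fin (n+1) ⊕ Fin (n+1) → ℕ :=
        Sum.elim (fun i => Module.finrank K (A i)) (fun j => Module.finrank K (B j)) with hf
      obtain ⟨w, -, hw⟩ := Finset.exists_mem_eq_sup (Finset.univ : Finset (Fin (n+1) ⊕ Fin (n+1)))
        ⟨Sum.inl 0, Finset.mem_univ _⟩ f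
      have hsup : ∀ z, f z ≤ f w := fun z => hw ▸ Finset.le_sup (Finset.mem_univ z)
      cases w with
      | inl i0 =>
        have hcov : ∀ x ∈ A i0, ∃ j ∈ Finset.univ, x ∈ B j := by
          intro x hx
          have h0 : 0 < cnt B x := by
            rw [← hP]
            exact cnt_pos_of_mem hx
          obtain ⟨j, hj⟩ := exists_mem_of_cnt_pos h0
          exact ⟨j, Finset.mem_univ _, hj⟩
        obtain ⟨j0, -, hle⟩ := union_lemma Finset.univ
          (by rw [Finset.card_univ, Fintype.card_fin]; exact hk) (A i0) B hcov
        exact ⟨i0, j0, Submodule.eq_of_le_of_finrank_le hle (hsup (Sum.inr j0))⟩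
      | inr j0 =>
        have hcov : ∀ x ∈ B j0, ∃ i ∈ Finset.univ, x ∈ A i := by
          intro x hx
          have h0 : 0 < cnt A x := by
            rw [hP]
            exact cnt_pos_of_mem hx
          obtain ⟨i, hi⟩ := exists_mem_of_cnt_pos h0
          exact ⟨i, Finset.mem_univ _, hi⟩
        obtain ⟨i0, -, hle⟩ := union_lemma Finset.univ
          (by rw [Finset.card_univ, Fintype.card_fin]; exact hk) (B j0) A hcov
        exact ⟨i0, j0, (Submodule.eq_of_le_of_finrank_le hle (hsup (Sum.inl i0))).symm⟩
    obtain ⟨i0, j0, heq⟩ := hmatch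
    have hP' : ∀ x : E, cnt (fun i => A (i0.succAbove i)) x
        = cnt (fun j => B (j0.succAbove j)) x := by
      intro x
      have h1 := cnt_eq_ite_add_cnt A i0 x
      have h2 := cnt_eq_ite_add_cnt B j0 x
      have h3 := hP x
      rw [h1, h2, heq] at h3
      omega
    obtain ⟨π', hπ'⟩ := ih (by omega) (fun i => A (i0.succAbove i)) (fun j => B (j0.succAbove j)) hP'
    refine ⟨(finSuccEquiv' i0).trans ((Equiv.optionCongr π').trans (finSuccEquiv' j0).symm),
      fun i => ?_⟩
    refine Fin.succAboveCases i0 ?_ ?_ i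
    · simpa [Equiv.optionCongr_apply] using heq
    · intro m
      simpa [Equiv.optionCongr_apply] using hπ' m

end Cancel

section Pad

lemma pad_step (T : Submodule K E) (hT : T ≠ ⊤) :
    ∃ T', T ≤ T' ∧ Module.finrank K T' = Module.finrank K T + 1 := by
  obtain ⟨x, hx⟩ : ∃ x, x ∉ T := by
    by_contra h
    push_neg at h
    exact hT (Submodule.eq_top_iff'.2 h)
  have hx0 : x ≠ 0 := fun h => hx (h ▸ T.zero_mem)
  refine ⟨T ⊔ K ∙ x, le_sup_left, ?_⟩
  have hinf : T ⊓ (K ∙ x) = ⊥ := by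
    rw [eq_bot_iff]
    rintro y ⟨hyT, hyS⟩
    obtain ⟨c, rfl⟩ := Submodule.mem_span_singleton.1 hyS
    rcases eq_or_ne c 0 with rfl | hc
    · simp
    · exact absurd (by simpa [inv_smul_smul₀ hc] using T.smul_mem c⁻¹ hyT) hx
  have := Submodule.finrank_sup_add_finrank_inf_eq T (K ∙ x)
  rw [hinf, finrank_span_singleton hx0] at this
  simp only [finrank_bot] at this
  omega

lemma pad (t : ℕ) (T : Submodule K E) (h1 : Module.finrank K T ≤ t)
    (h2 : t ≤ Module.finrank K E) : ∃ T', T ≤ T' ∧ Module.finrank K T' = t := by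
  obtain ⟨d, hd⟩ : ∃ d, Module.finrank K T + d = t := ⟨t - Module.finrank K T, by omega⟩
  clear h1
  induction d generalizing T with
  | zero => exact ⟨T, le_refl _, by omega⟩
  | succ d ihd =>
    have hTne : T ≠ ⊤ := by
      intro h
      rw [h, finrank_top] at hd
      omega
    obtain ⟨T1, hle, hr⟩ := pad_step T hTne
    obtain ⟨T', hle', hr'⟩ := ihd T1 (by omega)
    exact ⟨T', hle.trans hle', hr'⟩

end Pad

section Bridge

lemma fset_inf (X Y : Submodule K E) :
    fset (X ⊓ Y) = (fset Y).filter (fun x => x ∈ X) := by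
  ext x
  simp only [mem_fset, Submodule.mem_inf, Finset.mem_filter, mem_fset]
  tauto

lemma ncard_submodule (X : Submodule K E) :
    Nat.card X = (fset X).card := by
  rw [Nat.card_eq_fintype_card, fset, ← Fintype.card_subtype]

lemma ratio_eq (X : Submodule K E) (f : E →ₗ[K] K) :
    ((Nat.card X : ℝ))⁻¹ * ((fset (X ⊓ LinearMap.ker f : Submodule K E)).card : ℝ)
      = if X ≤ LinearMap.ker f then 1 else ((Fintype.card K : ℝ))⁻¹ := by
  have hq : (0:ℝ) < (Fintype.card K : ℝ) := by
    have := Fintype.one_lt_card (α := K)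
    positivity
  have hcardX : (Nat.card X : ℝ) = (Fintype.card K : ℝ) ^ Module.finrank K X := by
    rw [ncard_submodule, fset_card]
    push_cast
    ring
  by_cases hle : X ≤ LinearMap.ker f
  · rw [if_pos hle, inf_eq_left.2 hle, ← ncard_submodule]
    have hne : (Nat.card X : ℝ) ≠ 0 := by
      have : 0 < Nat.card X := Nat.card_pos
      positivity
    exact inv_mul_cancel₀ hne
  · rw [if_neg hle]
    -- the intersection has codimension one in X
    set g : X →ₗ[K] K := f.domRestrict X with hg
    have hmap : (LinearMap.ker g).map X.subtype = X ⊓ LinearMap.ker f := by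
      ext x
      constructor
      · rintro ⟨y, hy, rfl⟩
        simp only [SetLike.mem_coe, LinearMap.mem_ker, hg, LinearMap.domRestrict_apply] at hy
        exact Submodule.mem_inf.2 ⟨y.2, LinearMap.mem_ker.2 hy⟩
      · intro hx
        obtain ⟨hx1, hx2⟩ := Submodule.mem_inf.1 hx
        refine ⟨⟨x, hx1⟩, ?_, rfl⟩
        simp only [SetLike.mem_coe, LinearMap.mem_ker, hg, LinearMap.domRestrict_apply]
        exact LinearMap.mem_ker.1 hx2
    have hrange : Module.finrank K (LinearMap.range g) = 1 := by
      refine le_antisymm ?_ ?_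
      · have h1 := Submodule.finrank_le (LinearMap.range g)
        rwa [Module.finrank_self] at h1
      · by_contra hcon
        have h0 : Module.finrank K (LinearMap.range g) = 0 := by omega
        have hbot : LinearMap.range g = ⊥ := Submodule.finrank_eq_zero.1 h0
        apply hle
        intro x hx
        have : g ⟨x, hx⟩ ∈ LinearMap.range g := LinearMap.mem_range_self _ _
        rw [hbot, Submodule.mem_bot] at this
        rw [LinearMap.mem_ker]
        simpa [hg, LinearMap.domRestrict_apply] using this
    have hrn := LinearMap.finrank_range_add_finrank_ker g
    have hkerdim : Module.finrank K (X ⊓ LinearMap.ker f : Submodule K E) + 1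
        = Module.finrank K X := by
      rw [← hmap, Submodule.finrank_map_subtype_eq]
      omega
    rw [fset_card, hcardX]
    rw [show Module.finrank K X
        = Module.finrank K (X ⊓ LinearMap.ker f : Submodule K E) + 1 from hkerdim.symm]
    rw [pow_succ]
    push_cast
    have hpow : (0:ℝ) < (Fintype.card K : ℝ) ^
        Module.finrank K (X ⊓ LinearMap.ker f : Submodule K E) := by positivity
    field_simp

end Bridge

end IsomAux

/-- The pair of tuples `(U, V)` is a solution of the isometry equation
`∑ i, (1/|V i|) • 1_{V i} = ∑ i, (1/|U i|) • 1_{U i}` as real-valued functions on `W`. -/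
def IsometrySolution {K W : Type*} [Field K] [AddCommGroup W] [Module K W]
    {m : ℕ} (U V : Fin m → Submodule K W) : Prop :=
  ∀ w : W,
    ∑ i, ((Nat.card ↥(V i) : ℝ))⁻¹ * (if w ∈ V i then 1 else 0) =
    ∑ i, ((Nat.card ↥(U i) : ℝ))⁻¹ * (if w ∈ U i then 1 else 0)

/-- Two tuples of subspaces are equivalent if one is a permutation of the other. -/
def TuplesEquiv {K W : Type*} [Field K] [AddCommGroup W] [Module K W]
    {m : ℕ} (U V : Fin m → Submodule K W) : Prop :=
  ∃ π : Equiv.Perm (Fin m), ∀ i, V i = U (π i)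

/-- In a nontrivial minimal solution with equal maximal dimensions `n > 1`, there is a
subspace `S` of dimension `n - 2` contained in every `U i` and every `V i`. -/
theorem nontrivial_solution_common_subspace
    (K W : Type*) [Field K] [Fintype K] [AddCommGroup W] [Module K W]
    [FiniteDimensional K W]
    (U V : Fin (Fintype.card K + 1) → Submodule K W)
    (hsol : IsometrySolution U V) (hnontriv : ¬ TuplesEquiv U V)
    (n : ℕ) (hn : 1 < n)
    (hmaxV : (Finset.univ.sup fun i => Module.finrank K ↥(V i)) = n)
    (hmaxU : (Finset.univ.sup fun i => Module.finrank K ↥(U i)) = n) :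
    ∃ S : Submodule K W, Module.finrank K ↥S = n - 2 ∧ ∀ i, S ≤ U i ∧ S ≤ V i := by
  classical
  haveI : Finite W := Module.finite_of_finite K
  haveI : Fintype W := Fintype.ofFinite W
  haveI : Finite (Module.Dual K W) := Module.finite_of_finite K
  haveI : Fintype (Module.Dual K W) := Fintype.ofFinite _
  have hq2 : 2 ≤ Fintype.card K := Fintype.one_lt_card
  set N := Module.finrank K W with hNdef
  set A : Fin (Fintype.card K + 1) → Submodule K (Module.Dual K W) :=
    fun i => (V i).dualAnnihilator with hA
  set B : Fin (Fintype.card K + 1) → Submodule K (Module.Dual K W) :=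
    fun i => (U i).dualAnnihilator with hB
  -- counting over hyperplanes
  have hcnt : ∀ f : Module.Dual K W,
      (Finset.univ.filter fun i => V i ≤ LinearMap.ker f).card
        = (Finset.univ.filter fun i => U i ≤ LinearMap.ker f).card := by
    intro f
    have key : ∀ X : Fin (Fintype.card K + 1) → Submodule K W,
        ∑ w ∈ IsomAux.fset (LinearMap.ker f),
          ∑ i, ((Nat.card ↥(X i) : ℝ))⁻¹ * (if w ∈ X i then 1 else 0)
        = ∑ i, (if X i ≤ LinearMap.ker f then (1:ℝ) else ((Fintype.card K : ℝ))⁻¹) := by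
      intro X
      rw [Finset.sum_comm]
      refine Finset.sum_congr rfl (fun i _ => ?_)
      rw [← Finset.mul_sum, Finset.sum_boole, ← IsomAux.fset_inf (X i) (LinearMap.ker f)]
      exact IsomAux.ratio_eq (X i) f
    have hval : ∑ i, (if V i ≤ LinearMap.ker f then (1:ℝ) else ((Fintype.card K : ℝ))⁻¹)
        = ∑ i, (if U i ≤ LinearMap.ker f then (1:ℝ) else ((Fintype.card K : ℝ))⁻¹) := by
      rw [← key V, ← key U]
      exact Finset.sum_congr rfl (fun w _ => hsol w)
    have hsplit : ∀ X : Fin (Fintype.card K + 1) → Submodule K W,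
        ∑ i, (if X i ≤ LinearMap.ker f then (1:ℝ) else ((Fintype.card K : ℝ))⁻¹)
        = ((Finset.univ.filter fun i => X i ≤ LinearMap.ker f).card : ℝ) * 1
          + ((Finset.univ.filter fun i => ¬ X i ≤ LinearMap.ker f).card : ℝ)
            * ((Fintype.card K : ℝ))⁻¹ := by
      intro X
      rw [Finset.sum_ite, Finset.sum_const, Finset.sum_const]
      simp [nsmul_eq_mul]
    have hfil1 : (Finset.univ.filter fun i => V i ≤ LinearMap.ker f).card
        + (Finset.univ.filter fun i => ¬ V i ≤ LinearMap.ker f).card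
        = Fintype.card K + 1 := by
      simpa using Finset.card_filter_add_card_filter_not
        (s := (Finset.univ : Finset (Fin (Fintype.card K + 1))))
        (p := fun i => V i ≤ LinearMap.ker f)
    have hfil2 : (Finset.univ.filter fun i => U i ≤ LinearMap.ker f).card
        + (Finset.univ.filter fun i => ¬ U i ≤ LinearMap.ker f).card
        = Fintype.card K + 1 := by
      simpa using Finset.card_filter_add_card_filter_not
        (s := (Finset.univ : Finset (Fin (Fintype.card K + 1))))
        (p := fun i => U i ≤ LinearMap.ker f)
    rw [hsplit V, hsplit U] at hval
    have hr : ((Fintype.card K : ℝ))⁻¹ * (Fintype.card K : ℝ) = 1 :=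
      inv_mul_cancel₀ (by positivity)
    have hcast1 : ((Finset.univ.filter fun i => V i ≤ LinearMap.ker f).card : ℝ)
        + ((Finset.univ.filter fun i => ¬ V i ≤ LinearMap.ker f).card : ℝ)
        = (Fintype.card K : ℝ) + 1 := by
      rw [← Nat.cast_add, hfil1]
      push_cast
      ring
    have hcast2 : ((Finset.univ.filter fun i => U i ≤ LinearMap.ker f).card : ℝ)
        + ((Finset.univ.filter fun i => ¬ U i ≤ LinearMap.ker f).card : ℝ)
        = (Fintype.card K : ℝ) + 1 := by
      rw [← Nat.cast_add, hfil2]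
      push_cast
      ring
    have hfin : (((Finset.univ.filter fun i => V i ≤ LinearMap.ker f).card : ℝ)
        - ((Finset.univ.filter fun i => U i ≤ LinearMap.ker f).card : ℝ))
        * ((Fintype.card K : ℝ) - 1) = 0 := by
      linear_combination (Fintype.card K : ℝ) * hval
        + (((Finset.univ.filter fun i => ¬ U i ≤ LinearMap.ker f).card : ℝ)
          - ((Finset.univ.filter fun i => ¬ V i ≤ LinearMap.ker f).card : ℝ)) * hr
        - hcast1 + hcast2
    rcases mul_eq_zero.1 hfin with h | h
    · have := sub_eq_zero.1 h
      exact_mod_cast this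
    · exfalso
      have : (Fintype.card K : ℝ) = 1 := by linarith
      have : (Fintype.card K : ℕ) = 1 := by exact_mod_cast this
      omega
  -- membership in annihilators
  have hmem : ∀ (X : Submodule K W) (f : Module.Dual K W),
      f ∈ X.dualAnnihilator ↔ X ≤ LinearMap.ker f := by
    intro X f
    rw [Submodule.mem_dualAnnihilator]
    constructor
    · exact fun h x hx => LinearMap.mem_ker.2 (h x hx)
    · exact fun h x hx => LinearMap.mem_ker.1 (h hx)
  have hPdual : ∀ x : Module.Dual K W, IsomAux.cnt A x = IsomAux.cnt B x := by
    intro f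
    unfold IsomAux.cnt
    have e1 : (Finset.univ.filter fun i => f ∈ A i)
        = (Finset.univ.filter fun i => V i ≤ LinearMap.ker f) := by
      ext i
      simp [hA, hmem]
    have e2 : (Finset.univ.filter fun i => f ∈ B i)
        = (Finset.univ.filter fun i => U i ≤ LinearMap.ker f) := by
      ext i
      simp [hB, hmem]
    rw [e1, e2]
    exact hcnt f
  -- injectivity of the dual annihilator
  have hdaInj : ∀ X Y : Submodule K W, X.dualAnnihilator = Y.dualAnnihilator → X = Y := by
    intro X Y h
    have h2 := congrArg Submodule.dualCoannihilator h
    rwa [Subspace.dualAnnihilator_dualCoannihilator_eq,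
      Subspace.dualAnnihilator_dualCoannihilator_eq] at h2
  -- no pair of the two families coincides
  have hNE : ∀ i j, A i ≠ B j := by
    intro i0 j0 heq
    refine absurd ?_ hnontriv
    have hP' : ∀ x, IsomAux.cnt (fun i => A (i0.succAbove i)) x
        = IsomAux.cnt (fun j => B (j0.succAbove j)) x := by
      intro x
      have h1 := IsomAux.cnt_eq_ite_add_cnt A i0 x
      have h2 := IsomAux.cnt_eq_ite_add_cnt B j0 x
      have h3 := hPdual x
      rw [h1, h2, heq] at h3
      omega
    obtain ⟨π', hπ'⟩ := IsomAux.cancel (Fintype.card K) le_rfl _ _ hP'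
    refine ⟨(finSuccEquiv' i0).trans ((Equiv.optionCongr π').trans (finSuccEquiv' j0).symm),
      fun i => ?_⟩
    refine Fin.succAboveCases i0 ?_ ?_ i
    · simpa [Equiv.optionCongr_apply] using hdaInj _ _ heq
    · intro m
      simpa [Equiv.optionCongr_apply] using hdaInj _ _ (hπ' m)
  -- dimension bookkeeping
  have hdim : ∀ X : Submodule K W,
      Module.finrank K X.dualAnnihilator + Module.finrank K X = N := by
    intro X
    have h1 := LinearEquiv.finrank_eq (R := K) (M := W ⧸ X)
      (N := X.dualAnnihilator) (Subspace.quotEquivAnnihilator X)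
    have h2 := Submodule.finrank_quotient_add_finrank X
    omega
  have hVle : ∀ i, Module.finrank K (V i) ≤ n := by
    intro i
    have h := Finset.le_sup (f := fun i => Module.finrank K (V i)) (Finset.mem_univ i)
    rwa [hmaxV] at h
  have hUle : ∀ i, Module.finrank K (U i) ≤ n := by
    intro i
    have h := Finset.le_sup (f := fun i => Module.finrank K (U i)) (Finset.mem_univ i)
    rwa [hmaxU] at h
  obtain ⟨iV, -, hiV⟩ := Finset.exists_mem_eq_sup (Finset.univ)
    ⟨0, Finset.mem_univ 0⟩ (fun i => Module.finrank K (V i))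
  obtain ⟨iU, -, hiU⟩ := Finset.exists_mem_eq_sup (Finset.univ)
    ⟨0, Finset.mem_univ 0⟩ (fun i => Module.finrank K (U i))
  have hiVn : Module.finrank K (V iV) = n := by rw [← hiV, hmaxV]
  have hiUn : Module.finrank K (U iU) = n := by rw [← hiU, hmaxU]
  have hnN : n ≤ N := hiVn ▸ Submodule.finrank_le (V iV)
  have hlinkA : ∀ i, Module.finrank K (A i)
      = Module.finrank K ((V i).dualAnnihilator) := fun i => rfl
  have hlinkB : ∀ i, Module.finrank K (B i)
      = Module.finrank K ((U i).dualAnnihilator) := fun i => rfl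
  have haA : ∀ i, N - n ≤ Module.finrank K (A i) := by
    intro i
    have h1 := hdim (V i)
    have h2 := hVle i
    have h3 := hlinkA i
    omega
  have haB : ∀ i, N - n ≤ Module.finrank K (B i) := by
    intro i
    have h1 := hdim (U i)
    have h2 := hUle i
    have h3 := hlinkB i
    omega
  have hAex : ∃ i, Module.finrank K (A i) = N - n := by
    refine ⟨iV, ?_⟩
    have h1 := hdim (V iV)
    have h3 := hlinkA iV
    omega
  have hBex : ∃ i, Module.finrank K (B i) = N - n := by
    refine ⟨iU, ?_⟩
    have h1 := hdim (U iU)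
    have h3 := hlinkB iU
    omega
  -- apply the structure theorem on whichever side realizes the global max
  obtain ⟨iA, -, hiA⟩ := Finset.exists_mem_eq_sup (Finset.univ)
    Finset.univ_nonempty (fun i => Module.finrank K (A i))
  obtain ⟨iB, -, hiB⟩ := Finset.exists_mem_eq_sup (Finset.univ)
    Finset.univ_nonempty (fun i => Module.finrank K (B i))
  have hobt : ∃ T : Submodule K (Module.Dual K W),
      Module.finrank K T ≤ (N - n) + 2 ∧ ∀ i, A i ≤ T ∧ B i ≤ T := by
    by_cases hside : Finset.univ.sup (fun j => Module.finrank K (B j))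
        ≤ Finset.univ.sup (fun i => Module.finrank K (A i))
    · refine IsomAux.thmD A B hPdual hNE iA ?_ ?_ (N - n) haA hAex hBex
      · intro i
        rw [← hiA]
        exact Finset.le_sup (f := fun i => Module.finrank K (A i)) (Finset.mem_univ i)
      · intro j
        rw [← hiA]
        exact (Finset.le_sup (f := fun j => Module.finrank K (B j))
          (Finset.mem_univ j)).trans hside
    · push_neg at hside
      have hmb : ∀ i, Module.finrank K (B i) ≤ Module.finrank K (B iB) := by
        intro i
        rw [← hiB]
        exact Finset.le_sup (f := fun i => Module.finrank K (B i)) (Finset.mem_univ i)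
      have hma : ∀ j, Module.finrank K (A j) ≤ Module.finrank K (B iB) := by
        intro j
        rw [← hiB]
        exact (Finset.le_sup (f := fun j => Module.finrank K (A j))
          (Finset.mem_univ j)).trans hside.le
      obtain ⟨T, h1, h2⟩ := IsomAux.thmD B A (fun x => (hPdual x).symm)
        (fun i j h => (hNE j i h.symm)) iB hmb hma (N - n) haB hBex hAex
      exact ⟨T, h1, fun i => ⟨(h2 i).2, (h2 i).1⟩⟩
  obtain ⟨T, hTdim, hTall⟩ := hobt
  have hdualN : Module.finrank K (Module.Dual K W) = N := Subspace.dual_finrank_eq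
  obtain ⟨T', hle', hT'rank⟩ := IsomAux.pad ((N - n) + 2) T hTdim (by omega)
  refine ⟨T'.dualCoannihilator, ?_, ?_⟩
  · have h1 := Subspace.finrank_add_finrank_dualCoannihilator_eq T'
    omega
  · intro i
    constructor
    · intro x hx
      rw [Submodule.mem_dualCoannihilator] at hx
      rw [show U i = ((U i).dualAnnihilator).dualCoannihilator from
        (Subspace.dualAnnihilator_dualCoannihilator_eq).symm, Submodule.mem_dualCoannihilator]
      exact fun φ hφ => hx φ (hle' ((hTall i).2 hφ))
    · intro x hx
      rw [Submodule.mem_dualCoannihilator] at hx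
      rw [show V i = ((V i).dualAnnihilator).dualCoannihilator from
        (Subspace.dualAnnihilator_dualCoannihilator_eq).symm, Submodule.mem_dualCoannihilator]
      exact fun φ hφ => hx φ (hle' ((hTall i).1 hφ))
end IsomAux
end

section
/- Let K be a finite field with |K| = q, let W be a finite-dimensional K-vector space, and let (U,V) be a nontrivial solution of the isometry equation with tuples of length m = q+1 such that max_i dim_K V_i = max_i dim_K U_i = n > 1. Define X = {i ∈ {1,…,m} : dim_K V_i = n−1} and Y = {i ∈ {1,…,m} : dim_K U_i = n−1}. Then |X| = |Y| and |X| ≤ 1. -/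
open Finset
open scoped Classical

section IsoAux

variable {K W : Type*} [Field K] [Fintype K] [AddCommGroup W] [Module K W]
  [FiniteDimensional K W]

private lemma card_submodule' (S : Submodule K W) :
    Nat.card ↥S = Fintype.card K ^ Module.finrank K ↥S := by
  haveI : Finite W := Module.finite_of_finite K
  haveI : Fintype W := Fintype.ofFinite W
  rw [Nat.card_eq_fintype_card]
  exact Module.card_eq_pow_finrank

private lemma exists_perm_of_map_univ_eq' {α : Type*} {m : ℕ} (f g : Fin m → α)
    (h : Multiset.map f Finset.univ.val = Multiset.map g Finset.univ.val) :
    ∃ π : Equiv.Perm (Fin m), ∀ i, f i = g (π i) := by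
  letI : LinearOrder α := linearOrderOfSTO WellOrderingRel
  have hperm : (List.ofFn f).Perm (List.ofFn g) := by
    rw [Fin.univ_val_map, Fin.univ_val_map] at h
    exact Multiset.coe_eq_coe.mp h
  set σ := Tuple.sort f with hσ
  set τ := Tuple.sort g with hτ
  have h1 : List.ofFn (f ∘ σ) = List.ofFn (g ∘ τ) := by
    refine List.Perm.eq_of_sortedLE (Tuple.monotone_sort f).sortedLE_ofFn
      (Tuple.monotone_sort g).sortedLE_ofFn ?_
    exact ((σ.ofFn_comp_perm f).trans hperm).trans (τ.ofFn_comp_perm g).symm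
  have h2 : f ∘ σ = g ∘ τ := List.ofFn_injective h1
  refine ⟨σ.symm.trans τ, fun i => ?_⟩
  have h3 := congrFun h2 (σ.symm i)
  simpa using h3

private lemma union_cover_card' (S : Submodule K W) (hS : Module.finrank K ↥S ≠ 0)
    (𝒯 : Finset (Submodule K W)) (hprop : ∀ T ∈ 𝒯, ¬ S ≤ T)
    (hcov : ∀ w ∈ S, ∃ T ∈ 𝒯, w ∈ T) :
    Fintype.card K + 1 ≤ 𝒯.card := by
  haveI : Finite W := Module.finite_of_finite K
  haveI : Fintype W := Fintype.ofFinite W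
  set q := Fintype.card K with hqdef
  have hq2 : 2 ≤ q := Fintype.one_lt_card
  set r := Module.finrank K ↥S with hrdef
  have hr1 : 1 ≤ r := Nat.one_le_iff_ne_zero.mpr hS
  by_contra hcon
  have hTq : 𝒯.card ≤ q := by omega
  have hcard : ∀ A : Submodule K W, ((A : Set W).toFinset).card = q ^ Module.finrank K ↥A := by
    intro A
    calc ((A : Set W).toFinset).card = Fintype.card ↥(A : Set W) := Set.toFinset_card _
      _ = Nat.card ↥(A : Set W) := (Nat.card_eq_fintype_card).symm
      _ = Nat.card ↥A := rfl
      _ = q ^ Module.finrank K ↥A := card_submodule' A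
  have hsub : (S : Set W).toFinset.erase 0 ⊆
      𝒯.biUnion (fun T => (((T ⊓ S : Submodule K W) : Set W)).toFinset.erase 0) := by
    intro w hw
    obtain ⟨hw0, hwS⟩ := Finset.mem_erase.mp hw
    have hwS' : w ∈ S := by simpa using hwS
    obtain ⟨T, hT, hwT⟩ := hcov w hwS'
    refine Finset.mem_biUnion.mpr ⟨T, hT, Finset.mem_erase.mpr ⟨hw0, ?_⟩⟩
    simp only [Set.mem_toFinset, SetLike.mem_coe]
    exact Submodule.mem_inf.mpr ⟨hwT, hwS'⟩
  have hcard1 : ((S : Set W).toFinset.erase 0).card = q ^ r - 1 := by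
    rw [Finset.card_erase_of_mem (by simpa using S.zero_mem), hcard S]
  have hbound : ∀ T ∈ 𝒯, ((((T ⊓ S : Submodule K W) : Set W)).toFinset.erase 0).card
      ≤ q ^ (r - 1) - 1 := by
    intro T hT
    have hlt : (T ⊓ S : Submodule K W) < S := by
      refine lt_of_le_of_ne inf_le_right ?_
      intro hEq
      exact hprop T hT (by rw [← hEq]; exact inf_le_left)
    have hrT : Module.finrank K ↥(T ⊓ S : Submodule K W) ≤ r - 1 := by
      have := Submodule.finrank_lt_finrank_of_lt hlt
      omega
    rw [Finset.card_erase_of_mem (by simpa using (T ⊓ S : Submodule K W).zero_mem), hcard _]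
    have hle : q ^ (Module.finrank K ↥(T ⊓ S : Submodule K W)) ≤ q ^ (r - 1) :=
      Nat.pow_le_pow_right (by omega) hrT
    omega
  -- combine the counts
  have h1 : q ^ r - 1 ≤ (𝒯.biUnion (fun T =>
      (((T ⊓ S : Submodule K W) : Set W)).toFinset.erase 0)).card := by
    rw [← hcard1]; exact Finset.card_le_card hsub
  have h2 : (𝒯.biUnion (fun T =>
      (((T ⊓ S : Submodule K W) : Set W)).toFinset.erase 0)).card ≤ 𝒯.card * (q ^ (r-1) - 1) := by
    refine le_trans (Finset.card_biUnion_le) ?_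
    calc ∑ T ∈ 𝒯, ((((T ⊓ S : Submodule K W) : Set W)).toFinset.erase 0).card
        ≤ ∑ _T ∈ 𝒯, (q ^ (r-1) - 1) := Finset.sum_le_sum hbound
      _ = 𝒯.card * (q ^ (r-1) - 1) := by rw [Finset.sum_const, smul_eq_mul]
  have h3 : q ^ r - 1 ≤ q * (q ^ (r-1) - 1) :=
    le_trans h1 (le_trans h2 (Nat.mul_le_mul_right _ hTq))
  have hx1 : 1 ≤ q ^ (r - 1) := Nat.one_le_pow _ _ (by omega)
  have h4 : q * (q ^ (r-1) - 1) + q = q ^ r := by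
    have : q * (q ^ (r-1) - 1) + q = q * (q ^ (r - 1) - 1 + 1) := by ring
    rw [this, Nat.sub_add_cancel hx1, ← pow_succ']
    congr 1
    omega
  obtain ⟨A, hA⟩ : ∃ A, q ^ r = A := ⟨_, rfl⟩
  obtain ⟨B, hB⟩ : ∃ B, q * (q ^ (r-1) - 1) = B := ⟨_, rfl⟩
  rw [hA, hB] at h3 h4
  omega

/-- weighted sum over a multiset of submodules -/
private noncomputable def wsum (w : W) (𝒱 : Multiset (Submodule K W)) : ℕ :=
  (𝒱.map fun (S : Submodule K W) => Fintype.card K ^ (Module.finrank K W - Module.finrank K ↥S) *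
    (if w ∈ S then 1 else 0)).sum

private lemma wsum_add (w : W) (𝒱 𝒰 : Multiset (Submodule K W)) :
    wsum w (𝒱 + 𝒰) = wsum w 𝒱 + wsum w 𝒰 := by
  simp [wsum]

private lemma wsum_pos {w : W} {S : Submodule K W} {𝒱 : Multiset (Submodule K W)}
    (hS : S ∈ 𝒱) (hw : w ∈ S) : 0 < wsum w 𝒱 := by
  have hmem : (Fintype.card K ^ (Module.finrank K W - Module.finrank K ↥S) *
      (if w ∈ S then 1 else 0)) ∈ 𝒱.map (fun (S : Submodule K W) => Fintype.card K ^
        (Module.finrank K W - Module.finrank K ↥S) * (if w ∈ S then 1 else 0)) :=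
    Multiset.mem_map_of_mem _ hS
  have hle := Multiset.single_le_sum (fun x _ => Nat.zero_le x) _ hmem
  have hpos : 0 < Fintype.card K ^ (Module.finrank K W - Module.finrank K ↥S) *
      (if w ∈ S then 1 else 0) := by
    rw [if_pos hw, mul_one]
    exact Nat.pow_pos Fintype.card_pos
  exact lt_of_lt_of_le hpos hle

private lemma exists_mem_of_wsum_pos {w : W} {𝒱 : Multiset (Submodule K W)}
    (h : 0 < wsum w 𝒱) : ∃ S ∈ 𝒱, w ∈ S := by
  by_contra hnot
  push_neg at hnot
  have : wsum w 𝒱 = 0 := by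
    apply Multiset.sum_eq_zero
    intro x hx
    obtain ⟨S, hS, rfl⟩ := Multiset.mem_map.mp hx
    rw [if_neg (hnot S hS), mul_zero]
  omega

private lemma reduced_aux {𝒱 𝒰 : Multiset (Submodule K W)} (S : Submodule K W)
    (hS : S ∈ 𝒱) (hmax : ∀ T ∈ 𝒰, Module.finrank K ↥T ≤ Module.finrank K ↥S)
    (hSnot : S ∉ 𝒰) (hS0 : Module.finrank K ↥S ≠ 0)
    (heq : ∀ w, wsum w 𝒱 = wsum w 𝒰) :
    Fintype.card K + 1 ≤ Multiset.card 𝒰 := by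
  have h := union_cover_card' S hS0 𝒰.toFinset ?_ ?_
  · exact le_trans h (Multiset.toFinset_card_le _)
  · intro T hT hle
    have hTmem : T ∈ 𝒰 := Multiset.mem_toFinset.mp hT
    have : S = T := Submodule.eq_of_le_of_finrank_le hle (hmax T hTmem)
    exact hSnot (this ▸ hTmem)
  · intro w hw
    have h1 : 0 < wsum w 𝒰 := (heq w) ▸ wsum_pos hS hw
    obtain ⟨T, hT, hwT⟩ := exists_mem_of_wsum_pos h1
    exact ⟨T, Multiset.mem_toFinset.mpr hT, hwT⟩

private lemma int_eq {m : ℕ} (U V : Fin m → Submodule K W) (hsol : IsometrySolution U V)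
    (t : ℕ) (hV : ∀ i, Module.finrank K ↥(V i) ≤ t) (hU : ∀ i, Module.finrank K ↥(U i) ≤ t)
    (w : W) :
    ∑ i, Fintype.card K ^ (t - Module.finrank K ↥(V i)) * (if w ∈ V i then 1 else 0) =
    ∑ i, Fintype.card K ^ (t - Module.finrank K ↥(U i)) * (if w ∈ U i then 1 else 0) := by
  have hq0 : (Fintype.card K : ℝ) ≠ 0 := Nat.cast_ne_zero.mpr Fintype.card_ne_zero
  have key : ∀ (X : Fin m → Submodule K W), (∀ i, Module.finrank K ↥(X i) ≤ t) →
      ((∑ i, Fintype.card K ^ (t - Module.finrank K ↥(X i)) *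
          (if w ∈ X i then 1 else 0) : ℕ) : ℝ)
        = (Fintype.card K : ℝ)^t *
          ∑ i, ((Nat.card ↥(X i) : ℝ))⁻¹ * (if w ∈ X i then 1 else 0) := by
    intro X hX
    rw [Finset.mul_sum]
    push_cast
    refine Finset.sum_congr rfl fun i _ => ?_
    have hc : ((Nat.card ↥(X i) : ℕ) : ℝ) = (Fintype.card K : ℝ) ^ Module.finrank K ↥(X i) := by
      rw [card_submodule']; push_cast; ring
    rw [hc, ← mul_assoc]
    congr 1
    rw [eq_comm, mul_comm, inv_mul_eq_iff_eq_mul₀ (by positivity)]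
    rw [mul_comm, pow_sub_mul_pow _ (hX i)]
  rw [← Nat.cast_inj (R := ℝ), key V hV, key U hU, hsol w]

lemma no_common {m : ℕ} (U V : Fin m → Submodule K W) (hsol : IsometrySolution U V)
    (hnontriv : ¬ TuplesEquiv U V) (hm : m ≤ Fintype.card K + 1) :
    ∀ i j, V i ≠ U j := by
  intro i j hij
  have hDV : ∀ k, Module.finrank K ↥(V k) ≤ Module.finrank K W :=
    fun k => Submodule.finrank_le _
  have hDU : ∀ k, Module.finrank K ↥(U k) ≤ Module.finrank K W :=
    fun k => Submodule.finrank_le _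
  have heqD := int_eq U V hsol (Module.finrank K W) hDV hDU
  set MV := Multiset.map V Finset.univ.val with hMVdef
  set MU := Multiset.map U Finset.univ.val with hMUdef
  have hwsum : ∀ (X : Fin m → Submodule K W) (w : W),
      wsum w (Multiset.map X Finset.univ.val) =
      ∑ k, Fintype.card K ^ (Module.finrank K W - Module.finrank K ↥(X k)) *
        (if w ∈ X k then 1 else 0) := by
    intro X w
    rw [wsum, Multiset.map_map, Finset.sum]
    rfl
  have heqw : ∀ w, wsum w MV = wsum w MU := by
    intro w
    rw [hMVdef, hMUdef, hwsum V, hwsum U]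
    exact heqD w
  set I := MV ∩ MU with hIdef
  have hIV : I ≤ MV := Multiset.inter_le_left (s := MV) (t := MU)
  have hIU : I ≤ MU := Multiset.inter_le_right (s := MV) (t := MU)
  set V' := MV - I with hV'def
  set U' := MU - I with hU'def
  have hVsplit : V' + I = MV := tsub_add_cancel_of_le hIV
  have hUsplit : U' + I = MU := tsub_add_cancel_of_le hIU
  have heq' : ∀ w, wsum w V' = wsum w U' := by
    intro w
    have h1 : wsum w V' + wsum w I = wsum w U' + wsum w I := by
      rw [← wsum_add, ← wsum_add, hVsplit, hUsplit]; exact heqw w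
    omega
  have hcMV : Multiset.card MV = m := by simp [hMVdef]
  have hcMU : Multiset.card MU = m := by simp [hMUdef]
  have hI1 : 1 ≤ Multiset.card I := by
    have hiV : V i ∈ MV := by rw [hMVdef]; exact Multiset.mem_map_of_mem V (Finset.mem_univ_val i)
    have hiU : V i ∈ MU := by
      rw [hij, hMUdef]; exact Multiset.mem_map_of_mem U (Finset.mem_univ_val j)
    exact Multiset.card_pos_iff_exists_mem.mpr ⟨V i, Multiset.mem_inter.mpr ⟨hiV, hiU⟩⟩
  have hcV' : Multiset.card V' = m - Multiset.card I := by
    rw [hV'def, Multiset.card_sub hIV, hcMV]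
  have hcU' : Multiset.card U' = m - Multiset.card I := by
    rw [hU'def, Multiset.card_sub hIU, hcMU]
  have hIm : Multiset.card I ≤ m := by rw [← hcMV]; exact Multiset.card_le_card hIV
  have hV'ne : V' ≠ 0 := by
    intro h0
    have hcz : Multiset.card V' = 0 := by rw [h0]; simp
    have hc0 : Multiset.card I = m := by omega
    have hIMV : I = MV := Multiset.eq_of_le_of_card_le hIV (by omega)
    have hIMU : I = MU := Multiset.eq_of_le_of_card_le hIU (by omega)
    have hMVMU : Multiset.map V Finset.univ.val = Multiset.map U Finset.univ.val := by
      rw [← hMVdef, ← hMUdef, ← hIMV, hIMU]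
    obtain ⟨π, hπ⟩ := exists_perm_of_map_univ_eq' V U hMVMU
    exact hnontriv ⟨π, hπ⟩
  have hU'ne : U' ≠ 0 := by
    intro h0
    have hcz : Multiset.card U' = 0 := by rw [h0]; simp
    exact hV'ne (Multiset.card_eq_zero.mp (by omega))
  have hdisj : ∀ S, S ∈ V' → S ∉ U' := by
    intro S h1 h2
    have c1 : 0 < Multiset.count S V' := Multiset.count_pos.mpr h1
    have c2 : 0 < Multiset.count S U' := Multiset.count_pos.mpr h2
    rw [hV'def, Multiset.count_sub, hIdef, Multiset.count_inter] at c1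
    rw [hU'def, Multiset.count_sub, hIdef, Multiset.count_inter] at c2
    omega
  have h𝒞ne : V' + U' ≠ 0 := by
    intro h0
    have := congrArg Multiset.card h0
    simp only [Multiset.card_add, Multiset.card_zero] at this
    exact hV'ne (Multiset.card_eq_zero.mp (by omega))
  have hFne : (V' + U').toFinset.Nonempty := by
    rw [Multiset.toFinset_nonempty]; exact h𝒞ne
  obtain ⟨S, hSF, hSsup⟩ := Finset.exists_mem_eq_sup (α := ℕ) (V' + U').toFinset hFne
    (fun T : Submodule K W => Module.finrank K ↥T)
  have hmax : ∀ T ∈ V' + U', Module.finrank K ↥T ≤ Module.finrank K ↥S := by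
    intro T hT
    rw [← hSsup]
    exact Finset.le_sup (f := fun T : Submodule K W => Module.finrank K ↥T) (Multiset.mem_toFinset.mpr hT)
  have hS𝒞 : S ∈ V' + U' := Multiset.mem_toFinset.mp hSF
  by_cases hS0 : Module.finrank K ↥S = 0
  · obtain ⟨T1, hT1⟩ := Multiset.exists_mem_of_ne_zero hV'ne
    obtain ⟨T2, hT2⟩ := Multiset.exists_mem_of_ne_zero hU'ne
    have hb1 : T1 = ⊥ := by
      have := hmax T1 (Multiset.mem_add.mpr (Or.inl hT1))
      exact Submodule.finrank_eq_zero.mp (by omega)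
    have hb2 : T2 = ⊥ := by
      have := hmax T2 (Multiset.mem_add.mpr (Or.inr hT2))
      exact Submodule.finrank_eq_zero.mp (by omega)
    exact hdisj T1 hT1 (by rw [hb1, ← hb2]; exact hT2)
  · rcases Multiset.mem_add.mp hS𝒞 with hSV | hSU
    · have := reduced_aux S hSV (fun T hT => hmax T (Multiset.mem_add.mpr (Or.inr hT)))
        (hdisj S hSV) hS0 heq'
      omega
    · have := reduced_aux S hSU (fun T hT => hmax T (Multiset.mem_add.mpr (Or.inl hT)))
        (fun h => hdisj S h hSU) hS0 (fun w => (heq' w).symm)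
      omega


lemma top_count {m : ℕ} (U V : Fin m → Submodule K W) (n : ℕ) (hn : n ≠ 0)
    (heqn : ∀ w : W,
      ∑ i, Fintype.card K ^ (n - Module.finrank K ↥(V i)) * (if w ∈ V i then 1 else 0) =
      ∑ i, Fintype.card K ^ (n - Module.finrank K ↥(U i)) * (if w ∈ U i then 1 else 0))
    (hnc : ∀ i j, V i ≠ U j)
    (hdV : ∀ i, Module.finrank K ↥(V i) ≤ n) (hdU : ∀ j, Module.finrank K ↥(U j) ≤ n)
    (hiV : ∃ i, Module.finrank K ↥(V i) = n)
    (hm : m = Fintype.card K + 1) :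
    Fintype.card K ≤ (Finset.univ.filter fun i => Module.finrank K ↥(V i) = n).card := by
  set q := Fintype.card K with hqdef
  have hq2 : 2 ≤ q := Fintype.one_lt_card
  by_contra hcon
  push_neg at hcon
  obtain ⟨i0, hi0⟩ := hiV
  -- mod-q congruence
  have hmod : ∀ (X : Fin m → Submodule K W), (∀ k, Module.finrank K ↥(X k) ≤ n) → ∀ w : W,
      (∑ k, q ^ (n - Module.finrank K ↥(X k)) * (if w ∈ X k then 1 else 0)) ≡
      (Finset.univ.filter fun k => Module.finrank K ↥(X k) = n ∧ w ∈ X k).card [MOD q] := by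
    intro X hX w
    rw [← Finset.sum_filter_add_sum_filter_not Finset.univ
      (fun k => Module.finrank K ↥(X k) = n)]
    have e1 : ∑ k ∈ Finset.univ.filter (fun k => Module.finrank K ↥(X k) = n),
        q ^ (n - Module.finrank K ↥(X k)) * (if w ∈ X k then 1 else 0) =
        (Finset.univ.filter fun k => Module.finrank K ↥(X k) = n ∧ w ∈ X k).card := by
      rw [← Finset.filter_filter, Finset.card_filter]
      refine Finset.sum_congr rfl fun k hk => ?_
      rw [(Finset.mem_filter.mp hk).2, Nat.sub_self, pow_zero, one_mul]
    have e2 : q ∣ ∑ k ∈ Finset.univ.filter (fun k => ¬ Module.finrank K ↥(X k) = n),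
        q ^ (n - Module.finrank K ↥(X k)) * (if w ∈ X k then 1 else 0) := by
      refine Finset.dvd_sum fun k hk => Dvd.dvd.mul_right ?_ _
      have hk' := (Finset.mem_filter.mp hk).2
      have := hX k
      exact dvd_pow_self q (by omega)
    obtain ⟨s, hs⟩ := e2
    rw [e1, hs]
    show (_ + q * s) % q = _ % q
    exact Nat.add_mul_mod_self_left _ _ _
  -- every top space on the U side, via covering of V i0
  have hUall : ∀ j, Module.finrank K ↥(U j) = n := by
    have hcov : ∀ w ∈ V i0, ∃ T ∈ (Finset.univ.filter fun j =>
        Module.finrank K ↥(U j) = n).image U, w ∈ T := by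
      intro w hw
      have hA := hmod V hdV w
      have hB := hmod U hdU w
      have hB' : (∑ k, q ^ (n - Module.finrank K ↥(V k)) * (if w ∈ V k then 1 else 0)) ≡
          (Finset.univ.filter fun k => Module.finrank K ↥(U k) = n ∧ w ∈ U k).card [MOD q] := by
        rw [heqn w]; exact hB
      have hAB := (hA.symm.trans hB')
      set A := (Finset.univ.filter fun k => Module.finrank K ↥(V k) = n ∧ w ∈ V k).card with hAdef
      set B := (Finset.univ.filter fun k => Module.finrank K ↥(U k) = n ∧ w ∈ U k).card with hBdef
      have hA1 : 1 ≤ A := by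
        refine Finset.card_pos.mpr ⟨i0, ?_⟩
        exact Finset.mem_filter.mpr ⟨Finset.mem_univ _, hi0, hw⟩
      have hAa : A < q := by
        refine lt_of_le_of_lt ?_ hcon
        refine Finset.card_le_card ?_
        intro k hk
        have := Finset.mem_filter.mp hk
        exact Finset.mem_filter.mpr ⟨this.1, this.2.1⟩
      have hB0 : B ≠ 0 := by
        intro h0
        have := hAB
        unfold Nat.ModEq at this
        rw [h0, Nat.zero_mod, Nat.mod_eq_of_lt hAa] at this
        omega
      obtain ⟨jj, hjj⟩ := Finset.card_pos.mp (Nat.pos_of_ne_zero hB0)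
      obtain ⟨-, hjn, hjw⟩ := Finset.mem_filter.mp hjj
      exact ⟨U jj, Finset.mem_image_of_mem U
        (Finset.mem_filter.mpr ⟨Finset.mem_univ _, hjn⟩), hjw⟩
    have hprop : ∀ T ∈ (Finset.univ.filter fun j =>
        Module.finrank K ↥(U j) = n).image U, ¬ V i0 ≤ T := by
      intro T hT hle
      obtain ⟨j, hj, rfl⟩ := Finset.mem_image.mp hT
      have hjn : Module.finrank K ↥(U j) = n := (Finset.mem_filter.mp hj).2
      have : V i0 = U j := Submodule.eq_of_le_of_finrank_le hle (by rw [hjn, hi0])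
      exact hnc i0 j this
    have hq1 := union_cover_card' (V i0) (by rw [hi0]; exact hn) _ hprop hcov
    have himg := Finset.card_image_le (s := Finset.univ.filter fun j =>
      Module.finrank K ↥(U j) = n) (f := U)
    have hble : (Finset.univ.filter fun j => Module.finrank K ↥(U j) = n).card ≤ q + 1 := by
      refine le_trans (Finset.card_filter_le _ _) ?_
      rw [Finset.card_univ, Fintype.card_fin, hm]
    have hfeq : (Finset.univ.filter fun j => Module.finrank K ↥(U j) = n) = Finset.univ := by
      apply Finset.eq_univ_of_card
      have hfin : Fintype.card (Fin m) = m := Fintype.card_fin m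
      omega
    intro j
    have : j ∈ Finset.univ.filter fun j => Module.finrank K ↥(U j) = n := by
      rw [hfeq]; exact Finset.mem_univ j
    exact (Finset.mem_filter.mp this).2
  -- evaluate at 0
  have h0 := heqn 0
  have hRHS : ∑ j, q ^ (n - Module.finrank K ↥(U j)) * (if (0:W) ∈ U j then 1 else 0)
      = q + 1 := by
    have he : ∀ j : Fin m, q ^ (n - Module.finrank K ↥(U j)) *
        (if (0:W) ∈ U j then 1 else 0) = 1 := by
      intro j
      rw [hUall j, Nat.sub_self, pow_zero, if_pos (Submodule.zero_mem _), one_mul]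
    rw [Finset.sum_congr rfl (fun j _ => he j), Finset.sum_const, smul_eq_mul, mul_one,
      Finset.card_univ, Fintype.card_fin, hm]
  have hfnc : 2 ≤ (Finset.univ.filter fun i => ¬ Module.finrank K ↥(V i) = n).card := by
    have h1 : (Finset.univ.filter fun i => ¬ Module.finrank K ↥(V i) = n).card =
        m - (Finset.univ.filter fun i => Module.finrank K ↥(V i) = n).card := by
      rw [Finset.filter_not, Finset.card_sdiff_of_subset (Finset.filter_subset _ _), Finset.card_univ,
        Fintype.card_fin]
    omega
  have hterm : ∀ i ∈ Finset.univ.filter fun i => ¬ Module.finrank K ↥(V i) = n,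
      q ≤ q ^ (n - Module.finrank K ↥(V i)) * (if (0:W) ∈ V i then 1 else 0) := by
    intro i hi
    have hi' := (Finset.mem_filter.mp hi).2
    have := hdV i
    rw [if_pos (Submodule.zero_mem _), mul_one]
    calc q = q ^ 1 := (pow_one q).symm
      _ ≤ q ^ (n - Module.finrank K ↥(V i)) := Nat.pow_le_pow_right (by omega) (by omega)
  have hlow : 2 * q ≤ ∑ i, q ^ (n - Module.finrank K ↥(V i)) *
      (if (0:W) ∈ V i then 1 else 0) := by
    calc 2 * q ≤ (Finset.univ.filter fun i => ¬ Module.finrank K ↥(V i) = n).card * q :=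
          Nat.mul_le_mul_right q hfnc
      _ = (Finset.univ.filter fun i => ¬ Module.finrank K ↥(V i) = n).card •  q := by
          rw [smul_eq_mul]
      _ ≤ ∑ i ∈ Finset.univ.filter fun i => ¬ Module.finrank K ↥(V i) = n,
            q ^ (n - Module.finrank K ↥(V i)) * (if (0:W) ∈ V i then 1 else 0) :=
          Finset.card_nsmul_le_sum _ _ _ hterm
      _ ≤ ∑ i, q ^ (n - Module.finrank K ↥(V i)) * (if (0:W) ∈ V i then 1 else 0) :=
          Finset.sum_le_sum_of_subset (Finset.filter_subset _ _)
  rw [h0, hRHS] at hlow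
  omega


end IsoAux

/-- In a nontrivial minimal solution with equal maximal dimensions `n > 1`, the number of
spaces of dimension `n - 1` is the same in both tuples and is at most one. -/
theorem nontrivial_solution_card_X_eq_card_Y
    (K W : Type*) [Field K] [Fintype K] [AddCommGroup W] [Module K W]
    [FiniteDimensional K W]
    (U V : Fin (Fintype.card K + 1) → Submodule K W)
    (hsol : IsometrySolution U V) (hnontriv : ¬ TuplesEquiv U V)
    (n : ℕ) (hn : 1 < n)
    (hmaxV : (Finset.univ.sup fun i => Module.finrank K ↥(V i)) = n)
    (hmaxU : (Finset.univ.sup fun i => Module.finrank K ↥(U i)) = n) :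
    (Finset.univ.filter fun i => Module.finrank K ↥(V i) = n - 1).card =
      (Finset.univ.filter fun i => Module.finrank K ↥(U i) = n - 1).card ∧
    (Finset.univ.filter fun i => Module.finrank K ↥(V i) = n - 1).card ≤ 1 := by
  have hq2 : 2 ≤ Fintype.card K := Fintype.one_lt_card
  have hdV : ∀ i, Module.finrank K ↥(V i) ≤ n := by
    intro i
    rw [← hmaxV]
    exact Finset.le_sup (f := fun i => Module.finrank K ↥(V i)) (Finset.mem_univ i)
  have hdU : ∀ j, Module.finrank K ↥(U j) ≤ n := by
    intro j
    rw [← hmaxU]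
    exact Finset.le_sup (f := fun j => Module.finrank K ↥(U j)) (Finset.mem_univ j)
  have hiV : ∃ i, Module.finrank K ↥(V i) = n := by
    obtain ⟨i, -, hi⟩ := Finset.exists_mem_eq_sup (α := ℕ) Finset.univ Finset.univ_nonempty
      (fun i => Module.finrank K ↥(V i))
    exact ⟨i, by rw [← hi, hmaxV]⟩
  have hiU : ∃ j, Module.finrank K ↥(U j) = n := by
    obtain ⟨j, -, hj⟩ := Finset.exists_mem_eq_sup (α := ℕ) Finset.univ Finset.univ_nonempty
      (fun j => Module.finrank K ↥(U j))
    exact ⟨j, by rw [← hj, hmaxU]⟩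
  have hnc : ∀ i j, V i ≠ U j := no_common U V hsol hnontriv (le_refl _)
  have heqn : ∀ w : W,
      ∑ i, Fintype.card K ^ (n - Module.finrank K ↥(V i)) * (if w ∈ V i then 1 else 0) =
      ∑ i, Fintype.card K ^ (n - Module.finrank K ↥(U i)) * (if w ∈ U i then 1 else 0) :=
    int_eq U V hsol n hdV hdU
  have hsol' : IsometrySolution V U := fun w => (hsol w).symm
  have ha : Fintype.card K ≤ (Finset.univ.filter fun i => Module.finrank K ↥(V i) = n).card :=
    top_count U V n (by omega) heqn hnc hdV hdU hiV rfl
  have hb : Fintype.card K ≤ (Finset.univ.filter fun j => Module.finrank K ↥(U j) = n).card :=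
    top_count V U n (by omega) (fun w => (heqn w).symm)
      (fun j i h => hnc i j h.symm) hdU hdV hiU rfl
  have hale : (Finset.univ.filter fun i => Module.finrank K ↥(V i) = n).card ≤ (Fintype.card K + 1) := by
    refine le_trans (Finset.card_filter_le _ _) ?_
    rw [Finset.card_univ, Fintype.card_fin]
  have hble : (Finset.univ.filter fun j => Module.finrank K ↥(U j) = n).card ≤ (Fintype.card K + 1) := by
    refine le_trans (Finset.card_filter_le _ _) ?_
    rw [Finset.card_univ, Fintype.card_fin]
  -- cardinalities of the complements
  have hfV : (Finset.univ.filter fun i => ¬ Module.finrank K ↥(V i) = n).card =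
      (Fintype.card K + 1) - (Finset.univ.filter fun i => Module.finrank K ↥(V i) = n).card := by
    rw [Finset.filter_not, Finset.card_sdiff_of_subset (Finset.filter_subset _ _), Finset.card_univ,
      Fintype.card_fin]
  have hfU : (Finset.univ.filter fun j => ¬ Module.finrank K ↥(U j) = n).card =
      (Fintype.card K + 1) - (Finset.univ.filter fun j => Module.finrank K ↥(U j) = n).card := by
    rw [Finset.filter_not, Finset.card_sdiff_of_subset (Finset.filter_subset _ _), Finset.card_univ,
      Fintype.card_fin]
  -- split the sum at zero
  have hsplit : ∀ (X : Fin (Fintype.card K + 1) → Submodule K W),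
      ∑ i, Fintype.card K ^ (n - Module.finrank K ↥(X i)) * (if (0:W) ∈ X i then 1 else 0) =
      (Finset.univ.filter fun i => Module.finrank K ↥(X i) = n).card +
      ∑ i ∈ Finset.univ.filter fun i => ¬ Module.finrank K ↥(X i) = n,
        Fintype.card K ^ (n - Module.finrank K ↥(X i)) := by
    intro X
    rw [← Finset.sum_filter_add_sum_filter_not Finset.univ
      (fun i => Module.finrank K ↥(X i) = n)]
    congr 1
    · calc ∑ k ∈ Finset.univ.filter fun i => Module.finrank K ↥(X i) = n,
            Fintype.card K ^ (n - Module.finrank K ↥(X k)) * (if (0:W) ∈ X k then 1 else 0)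
          = ∑ _k ∈ Finset.univ.filter fun i => Module.finrank K ↥(X i) = n, 1 := by
            refine Finset.sum_congr rfl fun k hk => ?_
            rw [(Finset.mem_filter.mp hk).2, Nat.sub_self, pow_zero, one_mul,
              if_pos (Submodule.zero_mem _)]
        _ = (Finset.univ.filter fun i => Module.finrank K ↥(X i) = n).card := by
            rw [Finset.sum_const, smul_eq_mul, mul_one]
    · refine Finset.sum_congr rfl fun k hk => ?_
      rw [if_pos (Submodule.zero_mem _), mul_one]
  have h0 := heqn 0
  rw [hsplit V, hsplit U] at h0
  -- case analysis on the top-space counts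
  rcases (by omega : (Finset.univ.filter fun i => Module.finrank K ↥(V i) = n).card = (Fintype.card K + 1) ∨
      (Finset.univ.filter fun i => Module.finrank K ↥(V i) = n).card = Fintype.card K) with haeq | haeq
  · -- all V's have dim n
    have hVuniv : ∀ i, Module.finrank K ↥(V i) = n := by
      have : (Finset.univ.filter fun i => Module.finrank K ↥(V i) = n) = Finset.univ := by
        apply Finset.eq_univ_of_card
        rw [haeq, Fintype.card_fin]
      intro i
      have hmem : i ∈ Finset.univ.filter fun i => Module.finrank K ↥(V i) = n := by
        rw [this]; exact Finset.mem_univ i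
      exact (Finset.mem_filter.mp hmem).2
    have hbeq : (Finset.univ.filter fun j => Module.finrank K ↥(U j) = n).card = (Fintype.card K + 1) := by
      by_contra hbne
      have hbq : (Finset.univ.filter fun j => Module.finrank K ↥(U j) = n).card = Fintype.card K := by omega
      obtain ⟨j1, hj1⟩ := Finset.card_eq_one.mp (by rw [hfU, hbq]; omega : (Finset.univ.filter
        fun j => ¬ Module.finrank K ↥(U j) = n).card = 1)
      have hemptyV : (Finset.univ.filter fun i => ¬ Module.finrank K ↥(V i) = n) = ∅ := by
        rw [Finset.filter_eq_empty_iff]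
        intro i _
        simp [hVuniv i]
      rw [hemptyV, Finset.sum_empty, hj1, Finset.sum_singleton] at h0
      have hj1mem : j1 ∈ Finset.univ.filter fun j => ¬ Module.finrank K ↥(U j) = n := by
        rw [hj1]; exact Finset.mem_singleton_self j1
      have hj1n := (Finset.mem_filter.mp hj1mem).2
      have hj1le := hdU j1
      have hpow : Fintype.card K ≤ Fintype.card K ^ (n - Module.finrank K ↥(U j1)) := by
        calc Fintype.card K = Fintype.card K ^ 1 := (pow_one (Fintype.card K)).symm
          _ ≤ _ := Nat.pow_le_pow_right (by omega) (by omega)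
      omega
    have hUuniv : ∀ j, Module.finrank K ↥(U j) = n := by
      have : (Finset.univ.filter fun j => Module.finrank K ↥(U j) = n) = Finset.univ := by
        apply Finset.eq_univ_of_card
        rw [hbeq, Fintype.card_fin]
      intro j
      have hmem : j ∈ Finset.univ.filter fun j => Module.finrank K ↥(U j) = n := by
        rw [this]; exact Finset.mem_univ j
      exact (Finset.mem_filter.mp hmem).2
    have hXempty : (Finset.univ.filter fun i => Module.finrank K ↥(V i) = n - 1) = ∅ := by
      rw [Finset.filter_eq_empty_iff]
      intro i _
      rw [hVuniv i]
      omega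
    have hYempty : (Finset.univ.filter fun j => Module.finrank K ↥(U j) = n - 1) = ∅ := by
      rw [Finset.filter_eq_empty_iff]
      intro j _
      rw [hUuniv j]
      omega
    rw [hXempty, hYempty]
    simp
  · -- exactly one V has dim < n
    have hbq : (Finset.univ.filter fun j => Module.finrank K ↥(U j) = n).card = Fintype.card K := by
      by_contra hbne
      have hbeq : (Finset.univ.filter fun j => Module.finrank K ↥(U j) = n).card = (Fintype.card K + 1) := by
        omega
      obtain ⟨i1, hi1⟩ := Finset.card_eq_one.mp (by rw [hfV, haeq]; omega : (Finset.univ.filter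
        fun i => ¬ Module.finrank K ↥(V i) = n).card = 1)
      have hemptyU : (Finset.univ.filter fun j => ¬ Module.finrank K ↥(U j) = n) = ∅ := by
        rw [Finset.filter_eq_empty_iff]
        intro j _
        have : (Finset.univ.filter fun j => Module.finrank K ↥(U j) = n) = Finset.univ := by
          apply Finset.eq_univ_of_card
          rw [hbeq, Fintype.card_fin]
        have hmem : j ∈ Finset.univ.filter fun j => Module.finrank K ↥(U j) = n := by
          rw [this]; exact Finset.mem_univ j
        simp [(Finset.mem_filter.mp hmem).2]
      rw [hemptyU, Finset.sum_empty, hi1, Finset.sum_singleton] at h0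
      have hi1mem : i1 ∈ Finset.univ.filter fun i => ¬ Module.finrank K ↥(V i) = n := by
        rw [hi1]; exact Finset.mem_singleton_self i1
      have hi1n := (Finset.mem_filter.mp hi1mem).2
      have hi1le := hdV i1
      have hpow : Fintype.card K ≤ Fintype.card K ^ (n - Module.finrank K ↥(V i1)) := by
        calc Fintype.card K = Fintype.card K ^ 1 := (pow_one (Fintype.card K)).symm
          _ ≤ _ := Nat.pow_le_pow_right (by omega) (by omega)
      omega
    obtain ⟨i1, hi1⟩ := Finset.card_eq_one.mp (by rw [hfV, haeq]; omega : (Finset.univ.filter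
      fun i => ¬ Module.finrank K ↥(V i) = n).card = 1)
    obtain ⟨j1, hj1⟩ := Finset.card_eq_one.mp (by rw [hfU, hbq]; omega : (Finset.univ.filter
      fun j => ¬ Module.finrank K ↥(U j) = n).card = 1)
    rw [hi1, hj1, Finset.sum_singleton, Finset.sum_singleton, haeq, hbq] at h0
    have hdeq : Module.finrank K ↥(V i1) = Module.finrank K ↥(U j1) := by
      have hpe : Fintype.card K ^ (n - Module.finrank K ↥(V i1)) = Fintype.card K ^ (n - Module.finrank K ↥(U j1)) := by
        omega
      have := Nat.pow_right_injective hq2 hpe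
      have h1 := hdV i1
      have h2 := hdU j1
      omega
    -- the (n-1)-filters are inside the singletons
    have hsubV : (Finset.univ.filter fun i => Module.finrank K ↥(V i) = n - 1) ⊆ {i1} := by
      intro k hk
      have hk' := (Finset.mem_filter.mp hk).2
      rw [← hi1]
      exact Finset.mem_filter.mpr ⟨Finset.mem_univ _, by omega⟩
    have hsubU : (Finset.univ.filter fun j => Module.finrank K ↥(U j) = n - 1) ⊆ {j1} := by
      intro k hk
      have hk' := (Finset.mem_filter.mp hk).2
      rw [← hj1]
      exact Finset.mem_filter.mpr ⟨Finset.mem_univ _, by omega⟩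
    constructor
    · by_cases hcase : Module.finrank K ↥(V i1) = n - 1
      · have hV1 : (Finset.univ.filter fun i => Module.finrank K ↥(V i) = n - 1) = {i1} := by
          refine Finset.Subset.antisymm hsubV ?_
          rw [Finset.singleton_subset_iff]
          exact Finset.mem_filter.mpr ⟨Finset.mem_univ _, hcase⟩
        have hU1 : (Finset.univ.filter fun j => Module.finrank K ↥(U j) = n - 1) = {j1} := by
          refine Finset.Subset.antisymm hsubU ?_
          rw [Finset.singleton_subset_iff]
          exact Finset.mem_filter.mpr ⟨Finset.mem_univ _, by omega⟩
        rw [hV1, hU1, Finset.card_singleton, Finset.card_singleton]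
      · have hV1 : (Finset.univ.filter fun i => Module.finrank K ↥(V i) = n - 1) = ∅ := by
          rw [Finset.eq_empty_iff_forall_notMem]
          intro k hk
          have hk1 := hsubV hk
          rw [Finset.mem_singleton] at hk1
          subst hk1
          exact hcase (Finset.mem_filter.mp hk).2
        have hU1 : (Finset.univ.filter fun j => Module.finrank K ↥(U j) = n - 1) = ∅ := by
          rw [Finset.eq_empty_iff_forall_notMem]
          intro k hk
          have hk1 := hsubU hk
          rw [Finset.mem_singleton] at hk1
          subst hk1
          have := (Finset.mem_filter.mp hk).2
          omega
        rw [hV1, hU1]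
    · refine le_trans (Finset.card_le_card hsubV) ?_
      rw [Finset.card_singleton]
end

section
/- Let K be a finite field, let W be a finite-dimensional K-vector space, and let V_1, …, V_m, U_1, …, U_m ⊆ W be K-subspaces all containing a common subspace S. Then the equality ∑_{i=1}^m (1/|V_i|)·1_{V_i} = ∑_{i=1}^m (1/|U_i|)·1_{U_i} of real-valued functions on W holds if and only if the equality ∑_{i=1}^m (1/|V_i/S|)·1_{V_i/S} = ∑_{i=1}^m (1/|U_i/S|)·1_{U_i/S} of real-valued functions on the quotient space W/S holds, where V_i/S and U_i/S denote the images of V_i and U_i in W/S. -/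
open Finset
open scoped Classical

/-- The isometry equation holds on `W` if and only if the corresponding equation for the
quotients by a common subspace `S` holds on `W ⧸ S`. -/
theorem isometry_equation_iff_quotient
    (K W : Type*) [Field K] [Fintype K] [AddCommGroup W] [Module K W]
    [FiniteDimensional K W]
    {m : ℕ} (S : Submodule K W) (U V : Fin m → Submodule K W)
    (hV : ∀ i, S ≤ V i) (hU : ∀ i, S ≤ U i) :
    (∀ w : W,
      ∑ i, ((Nat.card ↥(V i) : ℝ))⁻¹ * (if w ∈ V i then 1 else 0) =
      ∑ i, ((Nat.card ↥(U i) : ℝ))⁻¹ * (if w ∈ U i then 1 else 0)) ↔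
    (∀ x : W ⧸ S,
      ∑ i, ((Nat.card ↥((V i).map S.mkQ) : ℝ))⁻¹ * (if x ∈ (V i).map S.mkQ then 1 else 0) =
      ∑ i, ((Nat.card ↥((U i).map S.mkQ) : ℝ))⁻¹ * (if x ∈ (U i).map S.mkQ then 1 else 0)) := by
  have hfin : Finite W := Module.finite_of_finite K
  have hSpos : 0 < (Nat.card S : ℝ) := by
    exact_mod_cast Nat.card_pos
  -- cardinality relation
  have hcard : ∀ (T : Submodule K W), S ≤ T →
      (Nat.card T : ℝ) = (Nat.card S : ℝ) * (Nat.card (T.map S.mkQ) : ℝ) := by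
    intro T hST
    have h1 := Submodule.card_eq_card_quotient_mul_card T
    have h2 := Submodule.card_eq_card_quotient_mul_card S
    have h3 := Submodule.card_quotient_mul_card_quotient T S hST
    have hqf : Finite (W ⧸ T) := Quotient.finite _
    have hq : 0 < Nat.card (W ⧸ T) := Nat.card_pos
    have hN : Nat.card T * Nat.card (W ⧸ T) =
        Nat.card S * Nat.card (T.map S.mkQ) * Nat.card (W ⧸ T) := by
      rw [← h1, h2, ← h3, mul_assoc]
    exact_mod_cast Nat.eq_of_mul_eq_mul_right hq hN
  -- membership relation
  have hmem : ∀ (T : Submodule K W), S ≤ T → ∀ w : W,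
      (w ∈ T ↔ S.mkQ w ∈ T.map S.mkQ) := by
    intro T hST w
    constructor
    · intro h; exact Submodule.mem_map_of_mem h
    · intro h
      have : w ∈ Submodule.comap S.mkQ (T.map S.mkQ) := h
      rw [Submodule.comap_map_mkQ, sup_eq_right.mpr hST] at this
      exact this
  -- termwise relation
  have hterm : ∀ (T : Submodule K W), S ≤ T → ∀ w : W,
      ((Nat.card (T.map S.mkQ) : ℝ))⁻¹ * (if S.mkQ w ∈ T.map S.mkQ then (1:ℝ) else 0) =
      (Nat.card S : ℝ) * (((Nat.card T : ℝ))⁻¹ * (if w ∈ T then 1 else 0)) := by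
    intro T hST w
    have hqf : Finite (W ⧸ S) := Quotient.finite _
    have h2 : (Nat.card (T.map S.mkQ) : ℝ) ≠ 0 := by
      exact_mod_cast Nat.card_pos.ne'
    by_cases hw : w ∈ T
    · rw [if_pos hw, if_pos ((hmem T hST w).mp hw), hcard T hST, mul_inv]
      field_simp
    · rw [if_neg hw, if_neg (fun h => hw ((hmem T hST w).mpr h))]
      ring
  constructor
  · intro h x
    obtain ⟨w, rfl⟩ := S.mkQ_surjective x
    calc ∑ i, ((Nat.card ↥((V i).map S.mkQ) : ℝ))⁻¹ *
            (if S.mkQ w ∈ (V i).map S.mkQ then (1:ℝ) else 0)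
        = ∑ i, (Nat.card S : ℝ) * (((Nat.card (V i) : ℝ))⁻¹ * (if w ∈ V i then 1 else 0)) := by
          exact Finset.sum_congr rfl fun i _ => hterm (V i) (hV i) w
      _ = (Nat.card S : ℝ) * ∑ i, ((Nat.card (V i) : ℝ))⁻¹ * (if w ∈ V i then 1 else 0) := by
          rw [Finset.mul_sum]
      _ = (Nat.card S : ℝ) * ∑ i, ((Nat.card (U i) : ℝ))⁻¹ * (if w ∈ U i then 1 else 0) := by
          rw [h w]
      _ = ∑ i, (Nat.card S : ℝ) * (((Nat.card (U i) : ℝ))⁻¹ * (if w ∈ U i then 1 else 0)) := by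
          rw [Finset.mul_sum]
      _ = _ := (Finset.sum_congr rfl fun i _ => (hterm (U i) (hU i) w)).symm
  · intro h w
    have key := h (S.mkQ w)
    rw [Finset.sum_congr rfl (fun i _ => hterm (V i) (hV i) w),
        Finset.sum_congr rfl (fun i _ => hterm (U i) (hU i) w),
        ← Finset.mul_sum, ← Finset.mul_sum] at key
    exact mul_left_cancel₀ hSpos.ne' key
end

section
/- Let K be a finite field with |K| = q, let W be a finite-dimensional K-vector space, and let (U,V) be a nontrivial solution of the isometry equation with tuples of length m = q+1 such that max_i dim_K V_i = max_i dim_K U_i = n > 1 and exactly one space in each tuple has dimension n−1. Then (U,V) is equivalent to a pair of Type B: there exist a subspace S ⊆ W, linearly independent vectors a, b, c ∈ W with S ∩ span{a,b,c} = {0}, an enumeration α_1, …, α_q of K, and permutations of the two tuples, after which V_m = S + span{a}, V_i = S + span{b, α_i a + c} for i ∈ {1,…,q}, U_m = S + span{b}, and U_i = S + span{a, α_i b + c} for i ∈ {1,…,q}. -/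
open Finset
open scoped Classical

open Module Submodule
set_option linter.unusedSectionVars false
set_option linter.unreachableTactic false
set_option linter.unusedTactic false
set_option maxHeartbeats 1600000

namespace IsoB
variable {K W : Type*} [Field K] [Fintype K] [AddCommGroup W] [Module K W]
  [FiniteDimensional K W]
local notation "q" => Fintype.card K



theorem card_coe (N : Submodule K W) : Nat.card ↥N = q ^ finrank K ↥N := by
  have : Finite W := Module.finite_of_finite K
  have : Fintype ↥N := Fintype.ofFinite _
  rw [Nat.card_eq_fintype_card, card_eq_pow_finrank (K := K)]

theorem ncard_coe (N : Submodule K W) : (N : Set W).ncard = q ^ finrank K ↥N := by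
  rw [← Nat.card_coe_set_eq, ← card_coe]; rfl

def Cov (s : Finset (Submodule K W)) : Set W :=
  ⋃ (N : Submodule K W) (_ : N ∈ s), (N : Set W)

theorem mem_cover_iff (w : W) (s : Finset (Submodule K W)) :
    w ∈ Cov s ↔ ∃ N ∈ s, w ∈ N := by simp [Cov]

/-- Covering lemma: a submodule is not covered by ≤ q proper subspaces. -/
theorem cover_card (M : Submodule K W) (T : Finset (Submodule K W))
    (hlt : ∀ N ∈ T, N < M) (hcov : (M : Set W) ⊆ Cov T) :
    q + 1 ≤ T.card := by
  classical
  obtain ⟨T', hT'mem, hT'min⟩ := Finset.exists_min_image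
    ((T.powerset).filter (fun s => (M : Set W) ⊆ Cov s))
    Finset.card ⟨T, by simp only [Finset.mem_filter, Finset.mem_powerset]; exact ⟨le_refl T, hcov⟩⟩
  simp only [Finset.mem_filter, Finset.mem_powerset] at hT'mem
  obtain ⟨hT'sub, hT'cov⟩ := hT'mem
  have h0M : (0 : W) ∈ M := M.zero_mem
  obtain ⟨N1, hN1, -⟩ : ∃ N1 ∈ T', (0:W) ∈ N1 := (mem_cover_iff _ _).1 (hT'cov h0M)
  have hnc : ¬ (M : Set W) ⊆ Cov (T'.erase N1) := by
    intro h
    have := hT'min (T'.erase N1) (by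
      simp only [Finset.mem_filter, Finset.mem_powerset]
      exact ⟨(Finset.erase_subset _ _).trans hT'sub, h⟩)
    have hlt' : (T'.erase N1).card < T'.card := Finset.card_erase_lt_of_mem hN1
    omega
  obtain ⟨x, hxM, hx⟩ : ∃ x, x ∈ M ∧ ∀ N ∈ T'.erase N1, x ∉ N := by
    by_contra h
    push_neg at h
    exact hnc (fun w hw => (mem_cover_iff _ _).2 (h w hw))
  have hxN1 : x ∈ N1 := by
    obtain ⟨N, hN, hxN⟩ := (mem_cover_iff _ _).1 (hT'cov hxM)
    rcases eq_or_ne N N1 with rfl | hne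
    · exact hxN
    · exact absurd hxN (hx N (Finset.mem_erase.2 ⟨hne, hN⟩))
  obtain ⟨y, hyM, hyN1⟩ := SetLike.exists_of_lt (hlt N1 (hT'sub hN1))
  have hline : ∀ lam : K, ∃ N, N ∈ T'.erase N1 ∧ y + lam • x ∈ N := by
    intro lam
    have hmem : y + lam • x ∈ M := M.add_mem hyM (M.smul_mem _ hxM)
    obtain ⟨N, hN, hyN⟩ := (mem_cover_iff _ _).1 (hT'cov hmem)
    refine ⟨N, Finset.mem_erase.2 ⟨?_, hN⟩, hyN⟩
    rintro rfl
    exact hyN1 (by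
      have : (y + lam • x) - lam • x ∈ N := N.sub_mem hyN (N.smul_mem _ hxN1)
      simpa using this)
  choose f hf1 hf2 using hline
  have hinj : Set.InjOn f (Finset.univ : Finset K) := by
    intro l1 _ l2 _ heq
    by_contra hne
    have h1 : y + l1 • x ∈ f l1 := hf2 l1
    have h2 : y + l2 • x ∈ f l1 := heq ▸ hf2 l2
    have hxf : x ∈ f l1 := by
      have hsub : (l1 - l2) • x ∈ f l1 := by
        have h3 := (f l1).sub_mem h1 h2
        have h4 : y + l1 • x - (y + l2 • x) = (l1 - l2) • x := by rw [sub_smul]; abel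
        rwa [h4] at h3
      have hl : l1 - l2 ≠ 0 := sub_ne_zero.2 hne
      simpa [smul_smul, inv_mul_cancel₀ hl] using (f l1).smul_mem (l1 - l2)⁻¹ hsub
    exact (hx (f l1) (hf1 l1)) hxf
  have hcard : q ≤ (T'.erase N1).card := by
    have := Finset.card_le_card_of_injOn f (fun a _ => hf1 a) hinj
    simpa using this
  have h1 : N1 ∈ T' := hN1
  have h2 : (T'.erase N1).card < T'.card := Finset.card_erase_lt_of_mem hN1
  have h3 : T'.card ≤ T.card := Finset.card_le_card hT'sub
  omega


theorem cover_card' (M : Submodule K W) (T : Finset (Submodule K W))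
    (hlt : ∀ N ∈ T, N < M) (hcov : ∀ w ∈ M, ∃ N ∈ T, w ∈ N) : q + 1 ≤ T.card :=
  cover_card M T hlt (fun w hw => (mem_cover_iff w T).2 (hcov w hw))

theorem pencil (M : Submodule K W) (A : Fin (q + 1) → Submodule K W)
    (hlt : ∀ j, A j < M) (hcov : ∀ w ∈ M, ∃ j, w ∈ A j) :
    Function.Injective A ∧ ∃ C : Submodule K W,
      (∀ j, C ≤ A j) ∧
      (∀ j, finrank K ↥(A j) + 1 = finrank K ↥M) ∧
      (finrank K ↥C + 2 = finrank K ↥M) ∧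
      (∀ H : Submodule K W, H ≤ M → C ≤ H → finrank K ↥H + 1 = finrank K ↥M →
        ∃ j, A j = H) := by
  classical
  have hq : 1 < q := Fintype.one_lt_card
  -- injectivity
  have hinjA : Function.Injective A := by
    by_contra hni
    -- then image has < q+1 elements
    have : ¬ Set.InjOn A (Finset.univ : Finset (Fin (q+1))) := by
      intro h
      exact hni fun a b hab => h (by simp) (by simp) hab
    have hcard : (Finset.univ.image A).card < q + 1 := by
      rcases lt_or_eq_of_le (Finset.card_image_le (s := Finset.univ) (f := A)) with h | h
      · simpa using h
      · exact absurd (Finset.card_image_iff.mp (by simpa using h)) this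
    have := cover_card' M (Finset.univ.image A)
      (fun N hN => by obtain ⟨j, -, rfl⟩ := Finset.mem_image.1 hN; exact hlt j)
      (fun w hw => by obtain ⟨j, hj⟩ := hcov w hw; exact ⟨A j, Finset.mem_image_of_mem A (by simp), hj⟩)
    omega
  -- private points
  have hpriv : ∀ j, ∃ x, x ∈ A j ∧ ∀ k, k ≠ j → x ∉ A k := by
    intro j
    by_contra h
    push_neg at h
    -- then the q other subspaces cover M
    have hcov' : ∀ w ∈ M, ∃ N ∈ (Finset.univ.erase j).image A, w ∈ N := by
      intro w hw
      obtain ⟨k, hk⟩ := hcov w hw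
      rcases eq_or_ne k j with rfl | hne
      · obtain ⟨l, hl, hwl⟩ := h w hk
        exact ⟨A l, Finset.mem_image_of_mem A (Finset.mem_erase.2 ⟨hl, by simp⟩), hwl⟩
      · exact ⟨A k, Finset.mem_image_of_mem A (Finset.mem_erase.2 ⟨hne, by simp⟩), hk⟩
    have := cover_card' M ((Finset.univ.erase j).image A)
      (fun N hN => by obtain ⟨l, -, rfl⟩ := Finset.mem_image.1 hN; exact hlt l) hcov'
    have h2 : ((Finset.univ.erase j).image A).card ≤ q := by
      calc ((Finset.univ.erase j).image A).card ≤ (Finset.univ.erase j).card :=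
            Finset.card_image_le
        _ = q := by simp
    omega
  choose xp hxp1 hxp2 using hpriv
  have hxpM : ∀ j, xp j ∈ M := fun j => (hlt j).le (hxp1 j)
  -- pairwise intersections are contained in every A l
  have hpair : ∀ j k l : Fin (q+1), j ≠ k → A j ⊓ A k ≤ A l := by
    intro j k l hjk
    rcases eq_or_ne l j with rfl | hlj
    · exact inf_le_left
    rcases eq_or_ne l k with rfl | hlk
    · exact inf_le_right
    intro c hc
    by_contra hcl
    obtain ⟨hcj, hck⟩ := Submodule.mem_inf.1 hc
    -- line c + lam • xp l, lam ≠ 0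
    have hline : ∀ lam : K, lam ≠ 0 → ∃ r : Fin (q+1),
        r ≠ j ∧ r ≠ k ∧ r ≠ l ∧ c + lam • xp l ∈ A r := by
      intro lam hlam
      have hmem : c + lam • xp l ∈ M :=
        M.add_mem ((hlt j).le hcj) (M.smul_mem _ (hxpM l))
      obtain ⟨r, hr⟩ := hcov _ hmem
      have hxl : ∀ s : Fin (q+1), c + lam • xp l ∈ A s → c ∈ A s → s = l := by
        intro s hs1 hs2
        by_contra hsl
        have : lam • xp l ∈ A s := by
          have := (A s).sub_mem hs1 hs2; simpa using this
        have h6 := (A s).smul_mem lam⁻¹ this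
        rw [smul_smul, inv_mul_cancel₀ hlam, one_smul] at h6
        exact hxp2 l s hsl h6
      refine ⟨r, ?_, ?_, ?_, hr⟩
      · intro hrj; rw [hrj] at hr; exact hlj (hxl j hr hcj).symm
      · intro hrk; rw [hrk] at hr; exact hlk (hxl k hr hck).symm
      · intro hrl; rw [hrl] at hr
        have h8 := (A l).sub_mem hr ((A l).smul_mem lam (hxp1 l))
        rw [add_sub_cancel_right] at h8
        exact hcl h8
    choose g hg1 hg2 hg3 hg4 using hline
    -- injective map from K \ {0} (q-1 elements) to Fin (q+1) \ {j,k,l} (q-2 elements)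
    have hginj : ∀ l1 (h1 : l1 ≠ 0) l2 (h2 : l2 ≠ 0), g l1 h1 = g l2 h2 → l1 = l2 := by
      intro l1 h1 l2 h2 heq
      by_contra hne
      have m1 : c + l1 • xp l ∈ A (g l1 h1) := hg4 l1 h1
      have m2 : c + l2 • xp l ∈ A (g l1 h1) := heq ▸ hg4 l2 h2
      have : (l1 - l2) • xp l ∈ A (g l1 h1) := by
        have h3 := (A (g l1 h1)).sub_mem m1 m2
        have h4 : c + l1 • xp l - (c + l2 • xp l) = (l1 - l2) • xp l := by
          rw [sub_smul]; abel
        rwa [h4] at h3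
      have hl : l1 - l2 ≠ 0 := sub_ne_zero.2 hne
      have : xp l ∈ A (g l1 h1) := by
        simpa [smul_smul, inv_mul_cancel₀ hl] using (A (g l1 h1)).smul_mem (l1 - l2)⁻¹ this
      exact hxp2 l _ (hg3 l1 h1) this
    -- cardinality contradiction
    have : ((Finset.univ : Finset K).erase 0).card ≤
        ((((Finset.univ : Finset (Fin (q+1))).erase j).erase k).erase l).card := by
      apply Finset.card_le_card_of_injOn (fun lam => if h : lam = (0:K) then j else g lam h)
      · intro lam hlam
        have hlam0 : lam ≠ 0 := Finset.ne_of_mem_erase hlam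
        simp only [dif_neg hlam0]
        exact Finset.mem_erase.2 ⟨hg3 lam hlam0, Finset.mem_erase.2 ⟨hg2 lam hlam0,
          Finset.mem_erase.2 ⟨hg1 lam hlam0, by simp⟩⟩⟩
      · intro l1 h1 l2 h2 heq
        have h1' : l1 ≠ 0 := Finset.ne_of_mem_erase h1
        have h2' : l2 ≠ 0 := Finset.ne_of_mem_erase h2
        simp only [dif_neg h1', dif_neg h2'] at heq
        exact hginj l1 h1' l2 h2' heq
    have e1 : ((Finset.univ : Finset K).erase 0).card = q - 1 := by simp
    have e2 : ((((Finset.univ : Finset (Fin (q+1))).erase j).erase k).erase l).card = q - 2 := by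
      rw [Finset.card_erase_of_mem (Finset.mem_erase.2 ⟨hlk, Finset.mem_erase.2 ⟨hlj, Finset.mem_univ l⟩⟩),
          Finset.card_erase_of_mem (Finset.mem_erase.2 ⟨hjk.symm, Finset.mem_univ k⟩),
          Finset.card_erase_of_mem (Finset.mem_univ j)]
      simp only [Finset.card_univ, Fintype.card_fin]
      omega
    omega
  -- pairwise sups equal M
  have hsup : ∀ j k : Fin (q+1), j ≠ k → ∀ z ∈ M, z ∈ A j ⊔ A k := by
    intro j k hjk z hz
    by_cases hzj : z ∈ A j
    · exact Submodule.mem_sup_left hzj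
    have hline : ∀ lam : K, ∃ r : Fin (q+1), r ≠ j ∧ z + lam • xp j ∈ A r := by
      intro lam
      have hmem : z + lam • xp j ∈ M := M.add_mem hz (M.smul_mem _ (hxpM j))
      obtain ⟨r, hr⟩ := hcov _ hmem
      refine ⟨r, ?_, hr⟩
      intro hrj; rw [hrj] at hr
      have h7 := (A j).sub_mem hr ((A j).smul_mem lam (hxp1 j))
      rw [add_sub_cancel_right] at h7
      exact hzj h7
    choose g hg1 hg2 using hline
    by_cases hk : ∃ lam, g lam = k
    · obtain ⟨lam, hlam⟩ := hk
      have : z + lam • xp j ∈ A k := hlam ▸ hg2 lam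
      have : z = (z + lam • xp j) - lam • xp j := by abel
      rw [this]
      exact Submodule.sub_mem _ (Submodule.mem_sup_right (hlam ▸ hg2 lam))
        (Submodule.smul_mem _ _ (Submodule.mem_sup_left (hxp1 j)))
    · push_neg at hk
      -- injective map K → Fin (q+1) \ {j, k} : contradiction
      have hginj : Function.Injective g := by
        intro l1 l2 heq
        by_contra hne
        have m1 : z + l1 • xp j ∈ A (g l1) := hg2 l1
        have m2 : z + l2 • xp j ∈ A (g l1) := heq ▸ hg2 l2
        have : (l1 - l2) • xp j ∈ A (g l1) := by
          have h3 := (A (g l1)).sub_mem m1 m2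
          have h4 : z + l1 • xp j - (z + l2 • xp j) = (l1 - l2) • xp j := by
            rw [sub_smul]; abel
          rwa [h4] at h3
        have hl : l1 - l2 ≠ 0 := sub_ne_zero.2 hne
        have : xp j ∈ A (g l1) := by
          simpa [smul_smul, inv_mul_cancel₀ hl] using (A (g l1)).smul_mem (l1 - l2)⁻¹ this
        exact hxp2 j _ (hg1 l1) this
      have : (Finset.univ : Finset K).card ≤
          (((Finset.univ : Finset (Fin (q+1))).erase j).erase k).card := by
        apply Finset.card_le_card_of_injOn g
        · intro lam _
          exact Finset.mem_erase.2 ⟨hk lam, Finset.mem_erase.2 ⟨hg1 lam, by simp⟩⟩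
        · intro l1 _ l2 _ h; exact hginj h
      have e2 : ((((Finset.univ : Finset (Fin (q+1))).erase j).erase k)).card = q - 1 := by
        rw [Finset.card_erase_of_mem (Finset.mem_erase.2 ⟨hjk.symm, Finset.mem_univ k⟩),
            Finset.card_erase_of_mem (Finset.mem_univ j)]
        simp only [Finset.card_univ, Fintype.card_fin]
        omega
      simp only [Finset.card_univ, Fintype.card_fin] at this
      omega
  -- the center
  have h01 : (0 : Fin (q+1)) ≠ 1 := by
    have h2 : 1 < q + 1 := by omega
    exact Fin.ne_of_val_ne (by simp [Fin.val_one', Nat.mod_eq_of_lt h2])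
  set C := A 0 ⊓ A 1 with hCdef
  have hCle : ∀ j, C ≤ A j := fun j => hpair 0 1 j h01
  have hCinf : ∀ j k, j ≠ k → A j ⊓ A k = C := by
    intro j k hjk
    exact le_antisymm (le_inf (hpair j k 0 hjk) (hpair j k 1 hjk)) (le_inf (hCle j) (hCle k))
  have hsupM : ∀ j k, j ≠ k → A j ⊔ A k = M := by
    intro j k hjk
    apply le_antisymm (sup_le (hlt j).le (hlt k).le)
    intro z hz; exact hsup j k hjk z hz
  have hdim : ∀ j k, j ≠ k → finrank K ↥(A j) + finrank K ↥(A k)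
      = finrank K ↥M + finrank K ↥C := by
    intro j k hjk
    have h := Submodule.finrank_sup_add_finrank_inf_eq (A j) (A k)
    rw [hsupM j k hjk, hCinf j k hjk] at h
    omega
  have hthird : ∀ j k : Fin (q+1), ∃ l, l ≠ j ∧ l ≠ k := by
    intro j k
    have hcard : 0 < ((Finset.univ.erase j).erase k).card := by
      have h1 : (Finset.univ.erase j).card = q := by
        rw [Finset.card_erase_of_mem (Finset.mem_univ j)]
        simp only [Finset.card_univ, Fintype.card_fin]; omega
      have h2 := Finset.pred_card_le_card_erase (s := Finset.univ.erase j) (a := k)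
      omega
    obtain ⟨l, hl⟩ := Finset.card_pos.1 hcard
    rw [Finset.mem_erase, Finset.mem_erase] at hl
    exact ⟨l, hl.2.1, hl.1⟩
  have hdimeq : ∀ j k, finrank K ↥(A j) = finrank K ↥(A k) := by
    intro j k
    rcases eq_or_ne j k with rfl | hjk
    · rfl
    obtain ⟨l, hlj, hlk⟩ := hthird j k
    have h1 := hdim j l hlj.symm
    have h2 := hdim k l hlk.symm
    omega
  -- counting
  have hfinW : Finite W := Module.finite_of_finite K
  have : Fintype W := Fintype.ofFinite W
  have hFN : ∀ N : Submodule K W, ((N : Set W).toFinset).card = q ^ finrank K ↥N := by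
    intro N
    rw [Set.toFinset_card, ← Nat.card_eq_fintype_card]
    exact card_coe N
  have hsub : ∀ N : Submodule K W, C ≤ N → ((C : Set W).toFinset) ⊆ ((N : Set W).toFinset) := by
    intro N h
    rw [Set.toFinset_subset_toFinset]
    exact h
  have hpartition : ((M : Set W).toFinset) \ ((C : Set W).toFinset) =
      Finset.univ.biUnion (fun j => ((A j : Set W).toFinset) \ ((C : Set W).toFinset)) := by
    ext w
    simp only [Finset.mem_sdiff, Set.mem_toFinset, SetLike.mem_coe, Finset.mem_biUnion,
      Finset.mem_univ, true_and]
    constructor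
    · rintro ⟨hwM, hwC⟩
      obtain ⟨j, hj⟩ := hcov w hwM
      exact ⟨j, hj, hwC⟩
    · rintro ⟨j, hj, hwC⟩
      exact ⟨(hlt j).le hj, hwC⟩
  have hdisj : ∀ j ∈ (Finset.univ : Finset (Fin (q+1))), ∀ k ∈ Finset.univ, j ≠ k →
      Disjoint (((A j : Set W).toFinset) \ ((C : Set W).toFinset))
        (((A k : Set W).toFinset) \ ((C : Set W).toFinset)) := by
    intro j _ k _ hjk
    rw [Finset.disjoint_left]
    intro w hw1 hw2
    simp only [Finset.mem_sdiff, Set.mem_toFinset, SetLike.mem_coe] at hw1 hw2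
    exact hw1.2 (by rw [← hCinf j k hjk]; exact Submodule.mem_inf.2 ⟨hw1.1, hw2.1⟩)
  have hcount : ((M : Set W).toFinset).card - ((C : Set W).toFinset).card
      = ∑ j : Fin (q+1), (((A j : Set W).toFinset).card - ((C : Set W).toFinset).card) := by
    rw [← Finset.card_sdiff_of_subset (hsub M ((hCle 0).trans (hlt 0).le)), hpartition,
      Finset.card_biUnion hdisj]
    congr 1
    ext j
    rw [Finset.card_sdiff_of_subset (hsub (A j) (hCle j))]
  -- name dimensions
  set cc := finrank K ↥C with hcc
  set d := finrank K ↥(A 0) with hd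
  set D := finrank K ↥M with hD
  have hall : ∀ j, finrank K ↥(A j) = d := fun j => hdimeq j 0
  have hCA0 : C < A 0 := by
    rcases lt_or_eq_of_le (hCle 0) with h | h
    · exact h
    exfalso
    have h1 := hdim 0 1 h01
    rw [← h, hall 1, ← hcc] at h1
    have h2 : finrank K ↥(A 1) = D := by rw [hall 1]; omega
    have := Submodule.eq_of_le_of_finrank_le (hlt 1).le (le_of_eq h2.symm)
    exact (hlt 1).ne this
  have hccd : cc < d := by
    have := Submodule.finrank_lt_finrank_of_lt hCA0
    omega
  have hdD : d < D := by
    have := Submodule.finrank_lt_finrank_of_lt (hlt 0)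
    omega
  have hDd : D + cc = 2 * d := by
    have := hdim 0 1 h01
    rw [hall 0, hall 1] at this
    omega
  -- the key arithmetic
  have harith : d = cc + 1 ∧ D = cc + 2 := by
    set e := d - cc with he
    have hde : d = cc + e := by omega
    have hDe : D = cc + 2 * e := by omega
    have he1 : 1 ≤ e := by omega
    have hkey : q ^ D - q ^ cc = (q + 1) * (q ^ d - q ^ cc) := by
      have h := hcount
      rw [hFN M, hFN C] at h
      rw [h]
      rw [Finset.sum_congr rfl (fun j _ => by rw [hFN (A j), hall j])]
      simp [Finset.sum_const, mul_comm]; rfl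
    -- clear the subtractions, working over ℤ
    have hpow_le1 : q ^ cc ≤ q ^ d := Nat.pow_le_pow_right (by omega) (by omega)
    have hpow_le2 : q ^ cc ≤ q ^ D := Nat.pow_le_pow_right (by omega) (by omega)
    zify [hpow_le1, hpow_le2] at hkey
    set X := q ^ e with hX
    have hXq : q ≤ X := by
      calc q = q ^ 1 := (pow_one q).symm
      _ ≤ X := Nat.pow_le_pow_right (by omega) he1
    have hqD : q ^ D = q ^ cc * (X * X) := by
      rw [hDe, pow_add, two_mul, pow_add]
    have hqd : q ^ d = q ^ cc * X := by rw [hde, pow_add]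
    rw [show ((q:ℤ)) ^ D = (q:ℤ) ^ cc * ((X:ℤ) * (X:ℤ)) from by exact_mod_cast congrArg (fun t : ℕ => (t:ℤ)) hqD,
       show ((q:ℤ)) ^ d = (q:ℤ) ^ cc * (X:ℤ) from by exact_mod_cast congrArg (fun t : ℕ => (t:ℤ)) hqd] at hkey
    have hP : (0:ℤ) < (q:ℤ) ^ cc := by positivity
    have hkey3 : (X:ℤ) * X + (q + 1) = (q + 1) * X + 1 := by
      have hmul : (q:ℤ) ^ cc * ((X:ℤ) * X + (q + 1)) = (q:ℤ) ^ cc * ((q + 1) * X + 1) := by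
        linear_combination hkey
      exact mul_left_cancel₀ (ne_of_gt hP) hmul
    have hXeq : X = q := by
      have hz : ((X:ℤ) - 1) * ((X:ℤ) - q) = 0 := by linear_combination hkey3
      rcases mul_eq_zero.1 hz with h | h
      · exfalso
        have h1 : (X:ℤ) = 1 := by linarith
        have h2 : X = 1 := by exact_mod_cast h1
        omega
      · have h1 : (X:ℤ) = q := by linarith
        exact_mod_cast h1
    have hee : e = 1 := by
      have := Nat.pow_right_injective hq (by rw [← hX, hXeq, pow_one] : q ^ e = q ^ 1)
      omega
    omega
  obtain ⟨hd1, hD2⟩ := harith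
  -- completeness
  refine ⟨hinjA, C, hCle, fun j => by rw [hall j]; omega, by omega, ?_⟩
  intro H hHM hCH hHrank
  have hHc : finrank K ↥H = cc + 1 := by omega
  have hHC : C < H := by
    rcases lt_or_eq_of_le hCH with h | h
    · exact h
    exfalso; rw [← h] at hHc; omega
  obtain ⟨w, hwH, hwC⟩ := SetLike.exists_of_lt hHC
  obtain ⟨j, hj⟩ := hcov w (hHM hwH)
  refine ⟨j, ?_⟩
  have hsp1 : C ⊔ Submodule.span K {w} ≤ H :=
    sup_le hCH ((Submodule.span_singleton_le_iff_mem w H).2 hwH)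
  have hsp2 : C ⊔ Submodule.span K {w} ≤ A j :=
    sup_le (hCle j) ((Submodule.span_singleton_le_iff_mem w (A j)).2 hj)
  have hlt1 : C < C ⊔ Submodule.span K {w} := by
    rcases lt_or_eq_of_le (le_sup_left : C ≤ C ⊔ Submodule.span K {w}) with h | h
    · exact h
    exfalso
    exact hwC (h ▸ Submodule.mem_sup_right (Submodule.mem_span_singleton_self w))
  have hr1 : cc + 1 ≤ finrank K ↥(C ⊔ Submodule.span K {w}) := by
    have := Submodule.finrank_lt_finrank_of_lt hlt1
    omega
  have e1 : C ⊔ Submodule.span K {w} = H :=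
    Submodule.eq_of_le_of_finrank_le hsp1 (by omega)
  have e2 : C ⊔ Submodule.span K {w} = A j := by
    apply Submodule.eq_of_le_of_finrank_le hsp2
    rw [hall j, hd1]
    omega
  rw [← e1, e2]




theorem finrank_sup_span (S : Submodule K W) (v : W) (hv : v ∉ S) :
    finrank K ↥(S ⊔ Submodule.span K {v}) = finrank K ↥S + 1 := by
  have hv0 : v ≠ 0 := fun h => hv (h ▸ S.zero_mem)
  have h1 : S < S ⊔ Submodule.span K {v} := by
    rcases lt_or_eq_of_le (le_sup_left : S ≤ S ⊔ Submodule.span K {v}) with h | h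
    · exact h
    · exact absurd (h ▸ Submodule.mem_sup_right (Submodule.mem_span_singleton_self v)) hv
  have h2 := Submodule.finrank_sup_add_finrank_inf_eq S (Submodule.span K {v})
  rw [finrank_span_singleton hv0] at h2
  have h3 := Submodule.finrank_lt_finrank_of_lt h1
  omega

theorem eq_sup_span {S H : Submodule K W} {v : W} (hSH : S ≤ H) (hvH : v ∈ H)
    (hv : v ∉ S) (hr : finrank K ↥H = finrank K ↥S + 1) :
    H = S ⊔ Submodule.span K {v} :=
  (Submodule.eq_of_le_of_finrank_le
    (sup_le hSH ((Submodule.span_singleton_le_iff_mem v H).2 hvH))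
    (by rw [finrank_sup_span S v hv, hr])).symm

theorem tuples_equiv_of_counts {m : ℕ} (U V : Fin m → Submodule K W)
    (h : ∀ A : Submodule K W,
      (Finset.univ.filter (fun i => V i = A)).card =
      (Finset.univ.filter (fun i => U i = A)).card) :
    TuplesEquiv U V := by
  classical
  have fib : ∀ A : Submodule K W, Fintype.card {i // V i = A} = Fintype.card {i // U i = A} := by
    intro A
    rw [Fintype.card_subtype, Fintype.card_subtype]
    exact h A
  let e : ∀ A : Submodule K W, {i // V i = A} ≃ {i // U i = A} :=
    fun A => Fintype.equivOfCardEq (fib A)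
  let π : Fin m ≃ Fin m :=
    (Equiv.sigmaFiberEquiv V).symm.trans ((Equiv.sigmaCongrRight e).trans (Equiv.sigmaFiberEquiv U))
  exact ⟨π, fun i => ((e (V i) ⟨i, rfl⟩).2).symm⟩

theorem indep_helper (S : Submodule K W) (a b c : W) (ha : a ∉ S)
    (hb : b ∉ S ⊔ Submodule.span K {a}) (hc : c ∉ S ⊔ Submodule.span K {a, b}) :
    LinearIndependent K ![a, b, c] ∧ S ⊓ Submodule.span K {a, b, c} = ⊥ := by
  have hbs : b ∉ Submodule.span K {a} :=
    fun h => hb (Submodule.mem_sup_right h)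
  have hcs : c ∉ Submodule.span K {a, b} :=
    fun h => hc (Submodule.mem_sup_right h)
  have ha0 : a ≠ 0 := fun h => ha (h ▸ S.zero_mem)
  constructor
  · have h1 : LinearIndependent K ![a] := by
      apply LinearIndependent.of_subsingleton 0
      simpa using ha0
    have h2 : LinearIndependent K ![a, b] := by
      have hab : ![a, b] = Fin.snoc ![a] b := by
        funext i
        fin_cases i <;> first | rfl | simp [Fin.snoc]
      rw [hab, linearIndependent_fin_snoc]
      refine ⟨h1, ?_⟩
      have hr : Set.range ![a] = {a} := by
        ext w
        simp [Matrix.range_cons, Matrix.range_empty]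
      rw [hr]
      exact hbs
    have h3 : ![a, b, c] = Fin.snoc ![a, b] c := by
      funext i
      fin_cases i <;> first | rfl | simp [Fin.snoc]
    rw [h3, linearIndependent_fin_snoc]
    refine ⟨h2, ?_⟩
    have hr : Set.range ![a, b] = {a, b} := by
      ext w
      simp [Matrix.range_cons, Matrix.range_empty]
      tauto
    rw [hr]
    exact hcs
  · rw [eq_bot_iff]
    intro w hw
    obtain ⟨hwS, hwsp⟩ := Submodule.mem_inf.1 hw
    rw [show ({a, b, c} : Set W) = insert a (insert b {c}) from rfl] at hwsp
    obtain ⟨k, z1, hz1, rfl⟩ := Submodule.mem_span_insert.1 hwsp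
    obtain ⟨l, z2, hz2, rfl⟩ := Submodule.mem_span_insert.1 hz1
    obtain ⟨m, hm⟩ := Submodule.mem_span_singleton.1 hz2
    subst hm
    -- k•a + (l•b + m•c) ∈ S
    have hm0 : m = 0 := by
      by_contra hm0
      apply hc
      have h4 : m • c = (k • a + (l • b + m • c)) - k • a - l • b := by abel
      have h5 : m • c ∈ S ⊔ Submodule.span K {a, b} := by
        rw [h4]
        apply Submodule.sub_mem _ (Submodule.sub_mem _ (Submodule.mem_sup_left hwS) _) _
        · exact Submodule.mem_sup_right (Submodule.smul_mem _ _
            (Submodule.subset_span (by simp)))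
        · exact Submodule.mem_sup_right (Submodule.smul_mem _ _
            (Submodule.subset_span (by simp)))
      have := Submodule.smul_mem _ m⁻¹ h5
      rwa [smul_smul, inv_mul_cancel₀ hm0, one_smul] at this
    subst hm0
    rw [zero_smul, add_zero] at hwS ⊢
    have hl0 : l = 0 := by
      by_contra hl0
      apply hb
      have h4 : l • b = (k • a + l • b) - k • a := by abel
      have h5 : l • b ∈ S ⊔ Submodule.span K {a} := by
        rw [h4]
        apply Submodule.sub_mem _ (Submodule.mem_sup_left hwS)
        exact Submodule.mem_sup_right (Submodule.smul_mem _ _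
          (Submodule.mem_span_singleton_self a))
      have := Submodule.smul_mem _ l⁻¹ h5
      rwa [smul_smul, inv_mul_cancel₀ hl0, one_smul] at this
    subst hl0
    rw [zero_smul, add_zero] at hwS ⊢
    have hk0 : k = 0 := by
      by_contra hk0
      apply ha
      have := S.smul_mem k⁻¹ hwS
      rwa [smul_smul, inv_mul_cancel₀ hk0, one_smul] at this
    subst hk0
    simp

noncomputable def wcount {m : ℕ} (n : ℕ) (V : Fin m → Submodule K W) (w : W) : ℕ :=
  ∑ i, if w ∈ V i then q ^ (n - finrank K ↥(V i)) else 0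

theorem wcount_eq {m : ℕ} (U V : Fin m → Submodule K W) (hsol : IsometrySolution U V)
    (n : ℕ) (hV : ∀ i, finrank K ↥(V i) ≤ n) (hU : ∀ j, finrank K ↥(U j) ≤ n) :
    ∀ w, wcount n V w = wcount n U w := by
  intro w
  have h := hsol w
  have hq0 : (0:ℝ) < (q:ℝ) := by exact_mod_cast Fintype.card_pos
  have key : ∀ (T : Fin m → Submodule K W), (∀ i, finrank K ↥(T i) ≤ n) →
      ∑ i, ((Nat.card ↥(T i) : ℝ))⁻¹ * (if w ∈ T i then 1 else 0)
      = (wcount n T w : ℝ) / (q:ℝ)^n := by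
    intro T hT
    rw [wcount, Nat.cast_sum, Finset.sum_div]
    apply Finset.sum_congr rfl
    intro i _
    have hTi := hT i
    rw [card_coe]
    by_cases hw : w ∈ T i
    · simp only [if_pos hw, mul_one, Nat.cast_pow]
      rw [eq_div_iff (by positivity), inv_mul_eq_div, div_eq_iff (by positivity),
        ← pow_add]
      congr 1
      omega
    · simp [hw]
  rw [key V hV, key U hU] at h
  have hc : ((q:ℝ))^n ≠ 0 := pow_ne_zero _ (ne_of_gt hq0)
  rw [div_eq_div_iff hc hc] at h
  have h2 := mul_right_cancel₀ hc h
  exact_mod_cast h2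





noncomputable def fcount {m : ℕ} (n : ℕ) (V : Fin m → Submodule K W)
    (A : Submodule K W) : ℕ :=
  ∑ i, if V i = A then q ^ (n - finrank K ↥(V i)) else 0

theorem fcount_card {m : ℕ} (n : ℕ) (V : Fin m → Submodule K W) (A : Submodule K W) :
    fcount n V A = (Finset.univ.filter (fun i => V i = A)).card * q ^ (n - finrank K ↥A) := by
  rw [fcount, ← Finset.sum_filter]
  rw [Finset.sum_congr rfl (fun i hi => by
    rw [(Finset.mem_filter.1 hi).2] : ∀ i ∈ Finset.univ.filter (fun i => V i = A),
      q ^ (n - finrank K ↥(V i)) = q ^ (n - finrank K ↥A))]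
  rw [Finset.sum_const, smul_eq_mul]

theorem fcount_pos_iff {m : ℕ} (n : ℕ) (V : Fin m → Submodule K W) (A : Submodule K W) :
    0 < fcount n V A ↔ ∃ i, V i = A := by
  have hq : 0 < q := Fintype.card_pos
  rw [fcount_card]
  constructor
  · intro h
    rcases Nat.eq_zero_or_pos (Finset.univ.filter (fun i => V i = A)).card with h0 | hpos
    · rw [h0, zero_mul] at h; omega
    · obtain ⟨i, hi⟩ := Finset.card_pos.1 hpos
      exact ⟨i, (Finset.mem_filter.1 hi).2⟩
  · intro ⟨i, hi⟩
    have h1 : 0 < (Finset.univ.filter (fun i => V i = A)).card :=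
      Finset.card_pos.2 ⟨i, Finset.mem_filter.2 ⟨Finset.mem_univ i, hi⟩⟩
    exact Nat.mul_pos h1 (Nat.pow_pos hq)

theorem wcount_group {m : ℕ} (n : ℕ) (V : Fin m → Submodule K W)
    (E : Finset (Submodule K W)) (hE : ∀ i, V i ∈ E) (w : W) :
    wcount n V w = ∑ A ∈ E, if w ∈ A then fcount n V A else 0 := by
  rw [wcount,
    ← Finset.sum_fiberwise_of_maps_to (fun i _ => hE i)
      (fun i => if w ∈ V i then q ^ (n - finrank K ↥(V i)) else 0)]
  apply Finset.sum_congr rfl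
  intro A _
  have h1 : fcount n V A = ∑ i ∈ Finset.univ.filter (fun i => V i = A),
      q ^ (n - finrank K ↥(V i)) := by
    rw [fcount, Finset.sum_filter]
  by_cases hw : w ∈ A
  · rw [if_pos hw, h1]
    apply Finset.sum_congr rfl
    intro i hi
    rw [if_pos (by rw [(Finset.mem_filter.1 hi).2]; exact hw)]
  · rw [if_neg hw]
    apply Finset.sum_eq_zero
    intro i hi
    rw [if_neg (fun hwi => hw ((Finset.mem_filter.1 hi).2 ▸ hwi))]

theorem wcount_struct (n : ℕ) (T : Fin (q+1) → Submodule K W) (z : Fin (q+1)) (hn : 1 ≤ n)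
    (hz : finrank K ↥(T z) = n - 1) (hother : ∀ i, i ≠ z → finrank K ↥(T i) = n) (w : W) :
    wcount n T w = (if w ∈ T z then q else 0)
      + ((Finset.univ.erase z).filter (fun i => w ∈ T i)).card := by
  rw [wcount, ← Finset.add_sum_erase _ _ (Finset.mem_univ z)]
  congr 1
  · rw [hz, show n - (n-1) = 1 from by omega, pow_one]
  · rw [Finset.sum_congr rfl (fun i hi => by
      rw [hother i (Finset.mem_erase.1 hi).1, Nat.sub_self, pow_zero] :
        ∀ i ∈ Finset.univ.erase z, (if w ∈ T i then q ^ (n - finrank K ↥(T i)) else 0)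
          = if w ∈ T i then 1 else 0)]
    rw [← Finset.sum_filter, Finset.sum_const, smul_eq_mul, mul_one]

theorem mem_sup_span_pair {S : Submodule K W} {p r w : W}
    (h : w ∈ S ⊔ Submodule.span K {p, r}) : ∃ s ∈ S, ∃ k l : K, w = s + (k • p + l • r) := by
  obtain ⟨s, hs, z, hz, rfl⟩ := Submodule.mem_sup.1 h
  obtain ⟨k, l, hkl⟩ := Submodule.mem_span_pair.1 hz
  exact ⟨s, hs, k, l, by rw [hkl]⟩



theorem main_aux (U V : Fin (Fintype.card K + 1) → Submodule K W)
    (hsol : IsometrySolution U V) (hnontriv : ¬ TuplesEquiv U V)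
    (n : ℕ) (hn : 1 < n)
    (hmaxV : (Finset.univ.sup fun i => finrank K ↥(V i)) = n)
    (hmaxU : (Finset.univ.sup fun i => finrank K ↥(U i)) = n)
    (hX : (Finset.univ.filter fun i => finrank K ↥(V i) = n - 1).card = 1)
    (hY : (Finset.univ.filter fun i => finrank K ↥(U i) = n - 1).card = 1)
    (M0 : Submodule K W) (hMpos : fcount n U M0 < fcount n V M0)
    (hMmax : ∀ A : Submodule K W, fcount n V A ≠ fcount n U A →
      finrank K ↥A ≤ finrank K ↥M0) :
    ∃ (σ τ : Equiv.Perm (Fin (Fintype.card K + 1))) (S : Submodule K W) (a b c : W),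
      LinearIndependent K ![a, b, c] ∧
      S ⊓ Submodule.span K {a, b, c} = ⊥ ∧
      ∃ α : Fin (Fintype.card K) → K, Function.Bijective α ∧
        V (σ (Fin.last (Fintype.card K))) = S ⊔ Submodule.span K {a} ∧
        (∀ i : Fin (Fintype.card K),
          V (σ i.castSucc) = S ⊔ Submodule.span K {b, α i • a + c}) ∧
        U (τ (Fin.last (Fintype.card K))) = S ⊔ Submodule.span K {b} ∧
        (∀ i : Fin (Fintype.card K),
          U (τ i.castSucc) = S ⊔ Submodule.span K {a, α i • b + c}) := by
  classical
  have hq : 1 < q := Fintype.one_lt_card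
  have hvle : ∀ i, finrank K ↥(V i) ≤ n := by
    intro i; rw [← hmaxV]
    exact Finset.le_sup (f := fun i => finrank K ↥(V i)) (Finset.mem_univ i)
  have hule : ∀ j, finrank K ↥(U j) ≤ n := by
    intro j; rw [← hmaxU]
    exact Finset.le_sup (f := fun j => finrank K ↥(U j)) (Finset.mem_univ j)
  obtain ⟨x, hxf⟩ := Finset.card_eq_one.1 hX
  obtain ⟨y, hyf⟩ := Finset.card_eq_one.1 hY
  have hvx : finrank K ↥(V x) = n - 1 := by
    have hx : x ∈ Finset.univ.filter (fun i => finrank K ↥(V i) = n - 1) := by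
      rw [hxf]; exact Finset.mem_singleton_self x
    exact (Finset.mem_filter.1 hx).2
  have huy : finrank K ↥(U y) = n - 1 := by
    have hy : y ∈ Finset.univ.filter (fun j => finrank K ↥(U j) = n - 1) := by
      rw [hyf]; exact Finset.mem_singleton_self y
    exact (Finset.mem_filter.1 hy).2
  have hvne : ∀ i, i ≠ x → finrank K ↥(V i) ≠ n - 1 := by
    intro i hi hcon
    have h1 : i ∈ Finset.univ.filter (fun i => finrank K ↥(V i) = n - 1) :=
      Finset.mem_filter.2 ⟨Finset.mem_univ i, hcon⟩
    rw [hxf, Finset.mem_singleton] at h1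
    exact hi h1
  have hune : ∀ j, j ≠ y → finrank K ↥(U j) ≠ n - 1 := by
    intro j hj hcon
    have h1 : j ∈ Finset.univ.filter (fun j => finrank K ↥(U j) = n - 1) :=
      Finset.mem_filter.2 ⟨Finset.mem_univ j, hcon⟩
    rw [hyf, Finset.mem_singleton] at h1
    exact hj h1
  have hcnt := wcount_eq U V hsol n hvle hule
  set E := (Finset.univ.image V) ∪ (Finset.univ.image U) with hEdef
  have hEV : ∀ i, V i ∈ E := fun i =>
    Finset.mem_union_left _ (Finset.mem_image_of_mem V (Finset.mem_univ i))
  have hEU : ∀ j, U j ∈ E := fun j =>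
    Finset.mem_union_right _ (Finset.mem_image_of_mem U (Finset.mem_univ j))
  have hpt : ∀ w, (∑ A ∈ E, if w ∈ A then fcount n V A else 0)
      = ∑ A ∈ E, if w ∈ A then fcount n U A else 0 := by
    intro w
    rw [← wcount_group n V E hEV w, ← wcount_group n U E hEU w]
    exact hcnt w
  have hME : M0 ∈ E := by
    have h1 : 0 < fcount n V M0 := by omega
    obtain ⟨i, hi⟩ := (fcount_pos_iff n V M0).1 h1
    exact hi ▸ hEV i
  have hMcov : ∀ w ∈ M0, ∃ A ∈ E, fcount n V A < fcount n U A ∧ w ∈ A := by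
    intro w hw
    by_contra hcon
    push_neg at hcon
    have hlt : (∑ A ∈ E, if w ∈ A then fcount n U A else 0)
        < ∑ A ∈ E, if w ∈ A then fcount n V A else 0 := by
      apply Finset.sum_lt_sum
      · intro A hA
        by_cases hwA : w ∈ A
        · rw [if_pos hwA, if_pos hwA]
          by_cases hVU : fcount n V A < fcount n U A
          · exact absurd hwA (hcon A hA hVU)
          · omega
        · rw [if_neg hwA, if_neg hwA]
      · exact ⟨M0, hME, by rw [if_pos hw, if_pos hw]; exact hMpos⟩
    exact (ne_of_lt hlt) (hpt w).symm
  set G := E.filter (fun A => fcount n V A < fcount n U A) with hGdef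
  set T := G.image (fun A => A ⊓ M0) with hTdef
  have hTlt : ∀ N ∈ T, N < M0 := by
    intro N hN
    obtain ⟨A, hA, rfl⟩ := Finset.mem_image.1 hN
    rcases lt_or_eq_of_le (inf_le_right : A ⊓ M0 ≤ M0) with h | h
    · exact h
    exfalso
    have hMA : M0 ≤ A := by rw [← h]; exact inf_le_left
    have hAG := (Finset.mem_filter.1 hA).2
    have hle := hMmax A (ne_of_lt hAG)
    have heq : M0 = A := Submodule.eq_of_le_of_finrank_le hMA hle
    rw [← heq] at hAG
    omega
  have hTcov : ∀ w ∈ M0, ∃ N ∈ T, w ∈ N := by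
    intro w hw
    obtain ⟨A, hA, hlt', hwA⟩ := hMcov w hw
    exact ⟨A ⊓ M0, Finset.mem_image_of_mem _ (Finset.mem_filter.2 ⟨hA, hlt'⟩),
      Submodule.mem_inf.2 ⟨hwA, hw⟩⟩
  have hTcard := cover_card' M0 T hTlt hTcov
  have hGsub : G ⊆ Finset.univ.image U := by
    intro A hA
    have h2 := (Finset.mem_filter.1 hA).2
    have h3 : 0 < fcount n U A := by omega
    obtain ⟨j, hj⟩ := (fcount_pos_iff n U A).1 h3
    exact hj ▸ Finset.mem_image_of_mem U (Finset.mem_univ j)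
  have hUcard : (Finset.univ.image U).card ≤ q + 1 :=
    le_trans Finset.card_image_le (by simp)
  have hTG : T.card ≤ G.card := Finset.card_image_le
  have hGUc : G.card ≤ (Finset.univ.image U).card := Finset.card_le_card hGsub
  have hUimg : (Finset.univ.image U).card = q + 1 := by omega
  have hUinj : Function.Injective U := by
    have h1 : (Finset.univ.image U).card = (Finset.univ : Finset (Fin (q+1))).card := by
      rw [hUimg]; simp
    have h2 := Finset.card_image_iff.1 h1
    exact fun a b hab => h2 (Finset.mem_coe.2 (Finset.mem_univ a))
      (Finset.mem_coe.2 (Finset.mem_univ b)) hab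
  have hGeq : G = Finset.univ.image U := Finset.eq_of_subset_of_card_le hGsub (by omega)
  have hUheavy : ∀ j, fcount n V (U j) < fcount n U (U j) := by
    intro j
    have h1 : U j ∈ G := by rw [hGeq]; exact Finset.mem_image_of_mem U (Finset.mem_univ j)
    exact (Finset.mem_filter.1 h1).2
  have hfUU : ∀ j, fcount n U (U j) = q ^ (n - finrank K ↥(U j)) := by
    intro j
    rw [fcount, Finset.sum_eq_single j]
    · rw [if_pos rfl]
    · intro k _ hk
      rw [if_neg (fun h => hk (hUinj h))]
    · intro h; exact absurd (Finset.mem_univ j) h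
  have hR1 : ∀ i j, V i ≠ U j := by
    intro i j heq
    have h1 := hUheavy j
    have h2 : q ^ (n - finrank K ↥(V i)) ≤ fcount n V (U j) := by
      have h3 := Finset.single_le_sum
        (f := fun k => if V k = U j then q ^ (n - finrank K ↥(V k)) else 0)
        (fun k _ => Nat.zero_le _) (Finset.mem_univ i)
      have h3' : (if V i = U j then q ^ (n - finrank K ↥(V i)) else 0) ≤ fcount n V (U j) := h3
      rw [if_pos heq] at h3'
      exact h3'
    have h4 : finrank K ↥(U j) = finrank K ↥(V i) := by rw [heq]
    rw [hfUU j, h4] at h1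
    omega
  -- coverage both ways
  have hcovV : ∀ i, ∀ w ∈ V i, ∃ j, w ∈ U j := by
    intro i w hw
    have h1 : 0 < wcount n V w := by
      have h2 := Finset.single_le_sum
        (f := fun k => if w ∈ V k then q ^ (n - finrank K ↥(V k)) else 0)
        (fun k _ => Nat.zero_le _) (Finset.mem_univ i)
      have h3 : (if w ∈ V i then q ^ (n - finrank K ↥(V i)) else 0) ≤ wcount n V w := h2
      rw [if_pos hw] at h3
      have h4 : 0 < q ^ (n - finrank K ↥(V i)) := Nat.pow_pos (by omega)
      omega
    rw [hcnt w] at h1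
    by_contra hcon
    push_neg at hcon
    have h5 : wcount n U w = 0 := Finset.sum_eq_zero (fun j _ => if_neg (hcon j))
    omega
  have hcovU : ∀ j, ∀ w ∈ U j, ∃ i, w ∈ V i := by
    intro j w hw
    have h1 : 0 < wcount n U w := by
      have h2 := Finset.single_le_sum
        (f := fun k => if w ∈ U k then q ^ (n - finrank K ↥(U k)) else 0)
        (fun k _ => Nat.zero_le _) (Finset.mem_univ j)
      have h3 : (if w ∈ U j then q ^ (n - finrank K ↥(U j)) else 0) ≤ wcount n U w := h2
      rw [if_pos hw] at h3
      have h4 : 0 < q ^ (n - finrank K ↥(U j)) := Nat.pow_pos (by omega)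
      omega
    rw [← hcnt w] at h1
    by_contra hcon
    push_neg at hcon
    have h5 : wcount n V w = 0 := Finset.sum_eq_zero (fun i _ => if_neg (hcon i))
    omega
  -- pencils
  have pencilV : ∀ i, finrank K ↥(V i) = n →
      Function.Injective (fun j => V i ⊓ U j) ∧ ∃ C : Submodule K W,
        (∀ j, C ≤ V i ⊓ U j) ∧ (∀ j, finrank K ↥(V i ⊓ U j) + 1 = n) ∧
        (finrank K ↥C + 2 = n) ∧
        (∀ H : Submodule K W, H ≤ V i → C ≤ H → finrank K ↥H + 1 = n →
          ∃ j, V i ⊓ U j = H) := by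
    intro i hi
    have hlt : ∀ j, V i ⊓ U j < V i := by
      intro j
      rcases lt_or_eq_of_le (inf_le_left : V i ⊓ U j ≤ V i) with h | h
      · exact h
      exfalso
      have h2 : V i ≤ U j := by rw [← h]; exact inf_le_right
      have h3 : finrank K ↥(V i) ≤ finrank K ↥(U j) := Submodule.finrank_mono h2
      have h4 : V i = U j := Submodule.eq_of_le_of_finrank_le h2 (by
        have := hule j; omega)
      exact hR1 i j h4
    have hcov2 : ∀ w ∈ V i, ∃ j, w ∈ V i ⊓ U j := by
      intro w hw
      obtain ⟨j, hj⟩ := hcovV i w hw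
      exact ⟨j, Submodule.mem_inf.2 ⟨hw, hj⟩⟩
    obtain ⟨hinj, C, h1, h2, h3, h4⟩ := pencil (V i) (fun j => V i ⊓ U j) hlt hcov2
    exact ⟨hinj, C, h1, fun j => by rw [← hi]; exact h2 j, by rw [← hi]; exact h3,
      fun H hH1 hH2 hH3 => h4 H hH1 hH2 (by rw [hi]; exact hH3)⟩
  obtain ⟨iM, hiM⟩ : ∃ i, finrank K ↥(V i) = n := by
    obtain ⟨i, -, h⟩ := Finset.exists_mem_eq_sup Finset.univ Finset.univ_nonempty
      (fun i => finrank K ↥(V i))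
    exact ⟨i, by rw [← hmaxV, h]⟩
  have hudim : ∀ j, j ≠ y → finrank K ↥(U j) = n := by
    intro j hj
    obtain ⟨-, C, -, h2, -, -⟩ := pencilV iM hiM
    have h3 := h2 j
    have h4 : finrank K ↥(V iM ⊓ U j) ≤ finrank K ↥(U j) :=
      Submodule.finrank_mono inf_le_right
    have h5 := hule j
    have h6 := hune j hj
    omega
  have pencilU : ∀ j, finrank K ↥(U j) = n →
      Function.Injective (fun i => U j ⊓ V i) ∧ ∃ D : Submodule K W,
        (∀ i, D ≤ U j ⊓ V i) ∧ (∀ i, finrank K ↥(U j ⊓ V i) + 1 = n) ∧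
        (finrank K ↥D + 2 = n) ∧
        (∀ H : Submodule K W, H ≤ U j → D ≤ H → finrank K ↥H + 1 = n →
          ∃ i, U j ⊓ V i = H) := by
    intro j hj
    have hlt : ∀ i, U j ⊓ V i < U j := by
      intro i
      rcases lt_or_eq_of_le (inf_le_left : U j ⊓ V i ≤ U j) with h | h
      · exact h
      exfalso
      have h2 : U j ≤ V i := by rw [← h]; exact inf_le_right
      have h4 : U j = V i := Submodule.eq_of_le_of_finrank_le h2 (by
        have := hvle i; omega)
      exact hR1 i j h4.symm
    have hcov2 : ∀ w ∈ U j, ∃ i, w ∈ U j ⊓ V i := by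
      intro w hw
      obtain ⟨i, hi⟩ := hcovU j w hw
      exact ⟨i, Submodule.mem_inf.2 ⟨hw, hi⟩⟩
    obtain ⟨hinj, D, h1, h2, h3, h4⟩ := pencil (U j) (fun i => U j ⊓ V i) hlt hcov2
    exact ⟨hinj, D, h1, fun i => by rw [← hj]; exact h2 i, by rw [← hj]; exact h3,
      fun H hH1 hH2 hH3 => h4 H hH1 hH2 (by rw [hj]; exact hH3)⟩
  -- distinguished indices
  have h01F : (0 : Fin (q+1)) ≠ (1 : Fin (q+1)) := by
    have h2 : 1 < q + 1 := by omega
    exact Fin.ne_of_val_ne (by simp [Fin.val_one', Nat.mod_eq_of_lt h2])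
  obtain ⟨j0, hj0y⟩ : ∃ j0, j0 ≠ y := by
    by_cases h : y = 0
    · exact ⟨1, by rw [h]; exact h01F.symm⟩
    · exact ⟨0, fun hc => h hc.symm⟩
  obtain ⟨i0, hi0x⟩ : ∃ i0, i0 ≠ x := by
    by_cases h : x = 0
    · exact ⟨1, by rw [h]; exact h01F.symm⟩
    · exact ⟨0, fun hc => h hc.symm⟩
  have hvdim : ∀ i, i ≠ x → finrank K ↥(V i) = n := by
    intro i hi
    obtain ⟨-, D, -, h2, -, -⟩ := pencilU j0 (hudim j0 hj0y)
    have h3 := h2 i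
    have h4 : finrank K ↥(U j0 ⊓ V i) ≤ finrank K ↥(V i) :=
      Submodule.finrank_mono inf_le_right
    have h5 := hvle i
    have h6 := hvne i hi
    omega
  have hVxUj : ∀ j, j ≠ y → V x ≤ U j := by
    intro j hj
    obtain ⟨-, D, -, h2, -, -⟩ := pencilU j (hudim j hj)
    have h3 := h2 x
    have h5 : U j ⊓ V x = V x := Submodule.eq_of_le_of_finrank_le
      (inf_le_right : U j ⊓ V x ≤ V x) (by omega)
    rw [← h5]; exact inf_le_left
  have hUyVi : ∀ i, i ≠ x → U y ≤ V i := by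
    intro i hi
    obtain ⟨-, C, -, h2, -, -⟩ := pencilV i (hvdim i hi)
    have h3 := h2 y
    have h5 : V i ⊓ U y = U y := Submodule.eq_of_le_of_finrank_le
      (inf_le_right : V i ⊓ U y ≤ U y) (by omega)
    rw [← h5]; exact inf_le_left
  -- count structure
  have hn1 : 1 ≤ n := by omega
  have hwV := wcount_struct n V x hn1 hvx hvdim
  have hwU := wcount_struct n U y hn1 huy hudim
  have hcard_erase : ∀ z : Fin (q+1), (Finset.univ.erase z).card = q := by
    intro z
    rw [Finset.card_erase_of_mem (Finset.mem_univ z)]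
    simp
  have hfull : ∀ w, (∀ j, w ∈ U j) → (∀ i, w ∈ V i) := by
    intro w hw i
    have h1 : wcount n U w = q + q := by
      rw [hwU w, if_pos (hw y), Finset.filter_true_of_mem (fun j _ => hw j), hcard_erase y]
    have h2 : wcount n V w = q + q := by rw [hcnt w]; exact h1
    rw [hwV w] at h2
    have h3 : ((Finset.univ.erase x).filter (fun i => w ∈ V i)).card ≤ q :=
      le_trans (Finset.card_filter_le _ _) (le_of_eq (hcard_erase x))
    by_cases hwx : w ∈ V x
    · rcases eq_or_ne i x with rfl | hix
      · exact hwx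
      · rw [if_pos hwx] at h2
        have h4 : ((Finset.univ.erase x).filter (fun i => w ∈ V i)).card = q := by omega
        have h5 : (Finset.univ.erase x).filter (fun i => w ∈ V i) = Finset.univ.erase x :=
          Finset.eq_of_subset_of_card_le (Finset.filter_subset _ _)
            (by rw [h4, hcard_erase x])
        have h6 : i ∈ Finset.univ.erase x := Finset.mem_erase.2 ⟨hix, Finset.mem_univ i⟩
        rw [← h5] at h6
        exact (Finset.mem_filter.1 h6).2
    · rw [if_neg hwx] at h2; omega
  have hfull' : ∀ w, (∀ i, w ∈ V i) → (∀ j, w ∈ U j) := by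
    intro w hw j
    have h1 : wcount n V w = q + q := by
      rw [hwV w, if_pos (hw x), Finset.filter_true_of_mem (fun i _ => hw i), hcard_erase x]
    have h2 : wcount n U w = q + q := by rw [← hcnt w]; exact h1
    rw [hwU w] at h2
    have h3 : ((Finset.univ.erase y).filter (fun j => w ∈ U j)).card ≤ q :=
      le_trans (Finset.card_filter_le _ _) (le_of_eq (hcard_erase y))
    by_cases hwy : w ∈ U y
    · rcases eq_or_ne j y with rfl | hjy
      · exact hwy
      · rw [if_pos hwy] at h2
        have h4 : ((Finset.univ.erase y).filter (fun j => w ∈ U j)).card = q := by omega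
        have h5 : (Finset.univ.erase y).filter (fun j => w ∈ U j) = Finset.univ.erase y :=
          Finset.eq_of_subset_of_card_le (Finset.filter_subset _ _)
            (by rw [h4, hcard_erase y])
        have h6 : j ∈ Finset.univ.erase y := Finset.mem_erase.2 ⟨hjy, Finset.mem_univ j⟩
        rw [← h5] at h6
        exact (Finset.mem_filter.1 h6).2
    · rw [if_neg hwy] at h2; omega
  -- common center S
  have hUyUj : ∃ j1, ¬ U y ≤ U j1 := by
    by_contra hcon
    push_neg at hcon
    have hUyVx : U y ≤ V x := by
      intro w hw
      exact hfull w (fun j => hcon j hw) x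
    have heq : U y = V x := Submodule.eq_of_le_of_finrank_le hUyVx (by omega)
    exact hR1 x y heq.symm
  set Z := ⨅ j, U j with hZdef
  set Z' := ⨅ i, V i with hZ'def
  have hZU : ∀ j, Z ≤ U j := fun j => iInf_le _ j
  have hZ'V : ∀ i, Z' ≤ V i := fun i => iInf_le _ i
  have hZV : ∀ i, Z ≤ V i := by
    intro i
    intro w hw
    exact hfull w (fun j => hZU j hw) i
  have hZ'U : ∀ j, Z' ≤ U j := by
    intro j
    intro w hw
    exact hfull' w (fun i => hZ'V i hw) j
  have hZZ' : Z = Z' := le_antisymm (le_iInf hZV) (le_iInf hZ'U)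
  obtain ⟨j1, hj1⟩ := hUyUj
  have hinflt : U y ⊓ U j1 < U y := by
    rcases lt_or_eq_of_le (inf_le_left : U y ⊓ U j1 ≤ U y) with h | h
    · exact h
    · exact absurd (by rw [← h]; exact inf_le_right) hj1
  have hZrank : finrank K ↥Z + 2 ≤ n := by
    have h1 := Submodule.finrank_lt_finrank_of_lt hinflt
    have h2 : finrank K ↥Z ≤ finrank K ↥(U y ⊓ U j1) :=
      Submodule.finrank_mono (le_inf (hZU y) (hZU j1))
    omega
  obtain ⟨injV0, C, hCle, hCrank1, hCrank, hCcompl⟩ := pencilV i0 (hvdim i0 hi0x)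
  obtain ⟨injU0, D, hDle, hDrank1, hDrank, hDcompl⟩ := pencilU j0 (hudim j0 hj0y)
  have hCZ : C ≤ Z := le_iInf (fun j => le_trans (hCle j) inf_le_right)
  have hCeqZ : C = Z := Submodule.eq_of_le_of_finrank_le hCZ (by omega)
  have hDZ' : D ≤ Z' := le_iInf (fun i => le_trans (hDle i) inf_le_right)
  have hDeqZ : D = Z := by
    rw [hZZ']
    apply Submodule.eq_of_le_of_finrank_le hDZ'
    have : finrank K ↥Z' = finrank K ↥Z := by rw [hZZ']
    omega
  have hSrank : finrank K ↥Z + 2 = n := by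
    have : finrank K ↥C = finrank K ↥Z := by rw [hCeqZ]
    omega
  have hSVx : Z ≤ V x := hZV x
  have hSUy : Z ≤ U y := hZU y
  -- V x ⊓ U y = Z
  have hVxUyS : V x ⊓ U y = Z := by
    have hne : V x ⊓ U y ≠ V x := by
      intro h
      have h2 : V x ≤ U y := by rw [← h]; exact inf_le_right
      exact hR1 x y (Submodule.eq_of_le_of_finrank_le h2 (by omega))
    have hlt2 : V x ⊓ U y < V x := lt_of_le_of_ne inf_le_left hne
    have h1 := Submodule.finrank_lt_finrank_of_lt hlt2
    exact (Submodule.eq_of_le_of_finrank_le (le_inf hSVx hSUy) (by omega)).symm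
  -- generators a, b
  have hSVxlt : Z < V x := lt_of_le_of_ne hSVx (by
    intro h
    have : finrank K ↥Z = finrank K ↥(V x) := by rw [h]
    omega)
  obtain ⟨a, haVx, haS⟩ := SetLike.exists_of_lt hSVxlt
  have hVxeq : V x = Z ⊔ Submodule.span K {a} := eq_sup_span hSVx haVx haS (by omega)
  have hSUylt : Z < U y := lt_of_le_of_ne hSUy (by
    intro h
    have : finrank K ↥Z = finrank K ↥(U y) := by rw [h]
    omega)
  obtain ⟨b, hbUy, hbS⟩ := SetLike.exists_of_lt hSUylt
  have hUyeq : U y = Z ⊔ Submodule.span K {b} := eq_sup_span hSUy hbUy hbS (by omega)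
  have haUy : a ∉ U y := fun h => haS (hVxUyS ▸ Submodule.mem_inf.2 ⟨haVx, h⟩)
  have haUj : ∀ j, j ≠ y → a ∈ U j := fun j hj => hVxUj j hj haVx
  have hbVx : b ∉ V x := fun h => hbS (hVxUyS ▸ Submodule.mem_inf.2 ⟨h, hbUy⟩)
  have hbVi : ∀ i, i ≠ x → b ∈ V i := fun i hi => hUyVi i hi hbUy
  have haVi : ∀ i, i ≠ x → a ∉ V i := by
    intro i hi hcon
    have h1 : wcount n U a = 0 + q := by
      rw [hwU a, if_neg haUy, Finset.filter_true_of_mem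
        (fun j hj => haUj j (Finset.mem_erase.1 hj).1), hcard_erase y]
    have h2 : wcount n V a = 0 + q := by rw [hcnt a]; exact h1
    rw [hwV a, if_pos haVx] at h2
    have h3 : i ∈ (Finset.univ.erase x).filter (fun i => a ∈ V i) :=
      Finset.mem_filter.2 ⟨Finset.mem_erase.2 ⟨hi, Finset.mem_univ i⟩, hcon⟩
    have h4 : 0 < ((Finset.univ.erase x).filter (fun i => a ∈ V i)).card :=
      Finset.card_pos.2 ⟨i, h3⟩
    omega
  have hbUj : ∀ j, j ≠ y → b ∉ U j := by
    intro j hj hcon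
    have h1 : wcount n V b = 0 + q := by
      rw [hwV b, if_neg hbVx, Finset.filter_true_of_mem
        (fun i hi => hbVi i (Finset.mem_erase.1 hi).1), hcard_erase x]
    have h2 : wcount n U b = 0 + q := by rw [← hcnt b]; exact h1
    rw [hwU b, if_pos hbUy] at h2
    have h3 : j ∈ (Finset.univ.erase y).filter (fun j => b ∈ U j) :=
      Finset.mem_filter.2 ⟨Finset.mem_erase.2 ⟨hj, Finset.mem_univ j⟩, hcon⟩
    have h4 : 0 < ((Finset.univ.erase y).filter (fun j => b ∈ U j)).card :=
      Finset.card_pos.2 ⟨j, h3⟩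
    omega
  -- the third generator e
  set H0 := V i0 ⊓ U j0 with hH0def
  have hSH0 : Z ≤ H0 := by rw [← hCeqZ]; exact hCle j0
  have hH0rank : finrank K ↥H0 + 1 = n := hCrank1 j0
  have hSH0lt : Z < H0 := lt_of_le_of_ne hSH0 (by
    intro h
    have : finrank K ↥Z = finrank K ↥H0 := by rw [h]
    omega)
  obtain ⟨e, heH0, heS⟩ := SetLike.exists_of_lt hSH0lt
  have heVi0 : e ∈ V i0 := (inf_le_left : H0 ≤ V i0) heH0
  have heUj0 : e ∈ U j0 := (inf_le_right : H0 ≤ U j0) heH0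
  have hZVi0 : Z ≤ V i0 := hZV i0
  have hZUj0 : Z ≤ U j0 := hZU j0
  have hbVxe : b ∉ Z ⊔ Submodule.span K {a} := by rw [← hVxeq]; exact hbVx
  have heSab : e ∉ Z ⊔ Submodule.span K {a, b} := by
    intro hcon
    obtain ⟨s, hs, k, l, hkl⟩ := mem_sup_span_pair hcon
    have hk0 : k = 0 := by
      by_contra hk0
      apply haVi i0 hi0x
      have h1 : k • a = e - s - l • b := by rw [hkl]; abel
      have h2 : k • a ∈ V i0 := by
        rw [h1]
        exact Submodule.sub_mem _ (Submodule.sub_mem _ heVi0 (hZVi0 hs))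
          (Submodule.smul_mem _ _ (hbVi i0 hi0x))
      have h3 := (V i0).smul_mem k⁻¹ h2
      rwa [smul_smul, inv_mul_cancel₀ hk0, one_smul] at h3
    rw [hk0, zero_smul, zero_add] at hkl
    have hl0 : l = 0 := by
      by_contra hl0
      apply hbUj j0 hj0y
      have h1 : l • b = e - s := by rw [hkl]; abel
      have h2 : l • b ∈ U j0 := by rw [h1]; exact Submodule.sub_mem _ heUj0 (hZUj0 hs)
      have h3 := (U j0).smul_mem l⁻¹ h2
      rwa [smul_smul, inv_mul_cancel₀ hl0, one_smul] at h3
    rw [hl0, zero_smul, add_zero] at hkl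
    exact heS (hkl ▸ hs)
  obtain ⟨hLI, hbot⟩ := indep_helper Z a b e haS hbVxe heSab
  have hspanab : Submodule.span K ({a} : Set W) ≤ Submodule.span K ({a, b} : Set W) :=
    Submodule.span_mono (by simp)
  have hspanb : Submodule.span K ({b} : Set W) ≤ Submodule.span K ({a, b} : Set W) :=
    Submodule.span_mono (by simp)
  have heVx : e ∉ V x := by
    rw [hVxeq]
    intro hcon
    exact heSab ((sup_le_sup_left hspanab Z) hcon)
  have heUy : e ∉ U y := by
    rw [hUyeq]
    intro hcon
    exact heSab ((sup_le_sup_left hspanb Z) hcon)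
  -- the Γ parametrization (V side)
  have hGam : ∀ γ : K, ∃ i, i ≠ x ∧ U j0 ⊓ V i = Z ⊔ Submodule.span K {e + γ • a} := by
    intro γ
    have hmem : e + γ • a ∈ U j0 :=
      Submodule.add_mem _ heUj0 (Submodule.smul_mem _ _ (haUj j0 hj0y))
    have hnS : e + γ • a ∉ Z := by
      intro hcon
      apply heSab
      have h1 : e = (e + γ • a) - γ • a := by abel
      rw [h1]
      exact Submodule.sub_mem _ (Submodule.mem_sup_left hcon)
        (Submodule.mem_sup_right (hspanab (Submodule.smul_mem _ _
          (Submodule.mem_span_singleton_self a))))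
    have hrank : finrank K ↥(Z ⊔ Submodule.span K {e + γ • a}) + 1 = n := by
      rw [finrank_sup_span Z _ hnS]; omega
    have hle : Z ⊔ Submodule.span K {e + γ • a} ≤ U j0 :=
      sup_le (hZU j0) ((Submodule.span_singleton_le_iff_mem _ _).2 hmem)
    obtain ⟨i, hi⟩ := hDcompl (Z ⊔ Submodule.span K {e + γ • a}) hle
      (by rw [hDeqZ]; exact le_sup_left) hrank
    refine ⟨i, ?_, hi⟩
    intro hix
    rw [hix] at hi
    have h2 : U j0 ⊓ V x = V x := inf_eq_right.2 (hVxUj j0 hj0y)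
    rw [h2] at hi
    apply heVx
    have h3 : e + γ • a ∈ V x := by
      rw [hi]; exact Submodule.mem_sup_right (Submodule.mem_span_singleton_self _)
    have h4 : e = (e + γ • a) - γ • a := by abel
    rw [h4]
    exact Submodule.sub_mem _ h3 (Submodule.smul_mem _ _ haVx)
  choose Γ hΓx hΓeq using hGam
  have hVGam : ∀ γ : K, V (Γ γ) = Z ⊔ Submodule.span K {b, γ • a + e} := by
    intro γ
    have h2 : γ • a + e ∈ V (Γ γ) := by
      have h3 : e + γ • a ∈ U j0 ⊓ V (Γ γ) := by
        rw [hΓeq γ]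
        exact Submodule.mem_sup_right (Submodule.mem_span_singleton_self _)
      have h4 := (inf_le_right : U j0 ⊓ V (Γ γ) ≤ V (Γ γ)) h3
      rwa [add_comm] at h4
    have hle : Z ⊔ Submodule.span K {b, γ • a + e} ≤ V (Γ γ) := by
      apply sup_le (hZV _)
      rw [Submodule.span_le]
      intro w hw
      simp only [Set.mem_insert_iff, Set.mem_singleton_iff] at hw
      rcases hw with rfl | rfl
      · exact hbVi _ (hΓx γ)
      · exact h2
    have hsplit : Z ⊔ Submodule.span K {b, γ • a + e}
        = (Z ⊔ Submodule.span K {b}) ⊔ Submodule.span K {γ • a + e} := by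
      rw [show ({b, γ • a + e} : Set W) = insert b {γ • a + e} from rfl,
        Submodule.span_insert, ← sup_assoc]
    have hnotin : γ • a + e ∉ Z ⊔ Submodule.span K {b} := by
      rw [← hUyeq]
      intro hcon
      apply heSab
      have h4 : e = (γ • a + e) - γ • a := by abel
      rw [h4]
      apply Submodule.sub_mem
      · rw [hUyeq] at hcon
        exact (sup_le_sup_left hspanb Z) hcon
      · exact Submodule.mem_sup_right (hspanab (Submodule.smul_mem _ _
          (Submodule.mem_span_singleton_self a)))
    have hbigrank : finrank K ↥(Z ⊔ Submodule.span K {b, γ • a + e}) = n := by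
      rw [hsplit, finrank_sup_span _ _ hnotin, ← hUyeq, huy]
      omega
    exact (Submodule.eq_of_le_of_finrank_le hle
      (le_of_eq (by rw [hbigrank, hvdim _ (hΓx γ)]))).symm
  have hΓinj : Function.Injective Γ := by
    intro γ γ' hγ
    by_contra hne
    have h1 : Z ⊔ Submodule.span K {b, γ • a + e} = Z ⊔ Submodule.span K {b, γ' • a + e} := by
      rw [← hVGam γ, ← hVGam γ', hγ]
    have h2 : γ • a + e ∈ Z ⊔ Submodule.span K {b, γ' • a + e} := by
      rw [← h1]
      exact Submodule.mem_sup_right (Submodule.subset_span (by simp))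
    obtain ⟨s, hs, k, l, hkl⟩ := mem_sup_span_pair h2
    have hl1 : l = 1 := by
      by_contra hl1
      apply heSab
      have h3 : (1 - l) • e = s + k • b + (l * γ' - γ) • a := by
        linear_combination (norm := module) hkl
      have h5 : e = (1-l)⁻¹ • ((1-l) • e) := by
        rw [smul_smul, inv_mul_cancel₀ (sub_ne_zero.2 (Ne.symm hl1)), one_smul]
      rw [h5, h3]
      refine Submodule.smul_mem _ _ (Submodule.add_mem _ (Submodule.add_mem _ ?_ ?_) ?_)
      · exact Submodule.mem_sup_left hs
      · exact Submodule.mem_sup_right (Submodule.smul_mem _ _ (Submodule.subset_span (by simp)))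
      · exact Submodule.mem_sup_right (Submodule.smul_mem _ _ (Submodule.subset_span (by simp)))
    rw [hl1, one_smul] at hkl
    have h6 : (γ - γ') • a = s + k • b := by
      linear_combination (norm := module) hkl
    have h7 : (γ - γ') • a ∈ U y := by
      rw [hUyeq, h6]
      exact Submodule.add_mem _ (Submodule.mem_sup_left hs)
        (Submodule.mem_sup_right (Submodule.smul_mem _ _ (Submodule.mem_span_singleton_self b)))
    apply haUy
    have h8 := (U y).smul_mem (γ - γ')⁻¹ h7
    rwa [smul_smul, inv_mul_cancel₀ (sub_ne_zero.2 hne), one_smul] at h8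
  -- the Δ parametrization (U side)
  have hDel : ∀ γ : K, ∃ j, j ≠ y ∧ V i0 ⊓ U j = Z ⊔ Submodule.span K {e + γ • b} := by
    intro γ
    have hmem : e + γ • b ∈ V i0 :=
      Submodule.add_mem _ heVi0 (Submodule.smul_mem _ _ (hbVi i0 hi0x))
    have hnS : e + γ • b ∉ Z := by
      intro hcon
      apply heSab
      have h1 : e = (e + γ • b) - γ • b := by abel
      rw [h1]
      exact Submodule.sub_mem _ (Submodule.mem_sup_left hcon)
        (Submodule.mem_sup_right (hspanb (Submodule.smul_mem _ _
          (Submodule.mem_span_singleton_self b))))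
    have hrank : finrank K ↥(Z ⊔ Submodule.span K {e + γ • b}) + 1 = n := by
      rw [finrank_sup_span Z _ hnS]; omega
    have hle : Z ⊔ Submodule.span K {e + γ • b} ≤ V i0 :=
      sup_le (hZV i0) ((Submodule.span_singleton_le_iff_mem _ _).2 hmem)
    obtain ⟨j, hj⟩ := hCcompl (Z ⊔ Submodule.span K {e + γ • b}) hle
      (by rw [hCeqZ]; exact le_sup_left) hrank
    refine ⟨j, ?_, hj⟩
    intro hjy
    rw [hjy] at hj
    have h2 : V i0 ⊓ U y = U y := inf_eq_right.2 (hUyVi i0 hi0x)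
    rw [h2] at hj
    apply heUy
    have h3 : e + γ • b ∈ U y := by
      rw [hj]; exact Submodule.mem_sup_right (Submodule.mem_span_singleton_self _)
    have h4 : e = (e + γ • b) - γ • b := by abel
    rw [h4]
    exact Submodule.sub_mem _ h3 (Submodule.smul_mem _ _ hbUy)
  choose Δ hΔy hΔeq using hDel
  have hUDel : ∀ γ : K, U (Δ γ) = Z ⊔ Submodule.span K {a, γ • b + e} := by
    intro γ
    have h2 : γ • b + e ∈ U (Δ γ) := by
      have h3 : e + γ • b ∈ V i0 ⊓ U (Δ γ) := by
        rw [hΔeq γ]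
        exact Submodule.mem_sup_right (Submodule.mem_span_singleton_self _)
      have h4 := (inf_le_right : V i0 ⊓ U (Δ γ) ≤ U (Δ γ)) h3
      rwa [add_comm] at h4
    have hle : Z ⊔ Submodule.span K {a, γ • b + e} ≤ U (Δ γ) := by
      apply sup_le (hZU _)
      rw [Submodule.span_le]
      intro w hw
      simp only [Set.mem_insert_iff, Set.mem_singleton_iff] at hw
      rcases hw with rfl | rfl
      · exact haUj _ (hΔy γ)
      · exact h2
    have hsplit : Z ⊔ Submodule.span K {a, γ • b + e}
        = (Z ⊔ Submodule.span K {a}) ⊔ Submodule.span K {γ • b + e} := by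
      rw [show ({a, γ • b + e} : Set W) = insert a {γ • b + e} from rfl,
        Submodule.span_insert, ← sup_assoc]
    have hnotin : γ • b + e ∉ Z ⊔ Submodule.span K {a} := by
      rw [← hVxeq]
      intro hcon
      apply heSab
      have h4 : e = (γ • b + e) - γ • b := by abel
      rw [h4]
      apply Submodule.sub_mem
      · rw [hVxeq] at hcon
        exact (sup_le_sup_left hspanab Z) hcon
      · exact Submodule.mem_sup_right (hspanb (Submodule.smul_mem _ _
          (Submodule.mem_span_singleton_self b)))
    have hbigrank : finrank K ↥(Z ⊔ Submodule.span K {a, γ • b + e}) = n := by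
      rw [hsplit, finrank_sup_span _ _ hnotin, ← hVxeq, hvx]
      omega
    exact (Submodule.eq_of_le_of_finrank_le hle
      (le_of_eq (by rw [hbigrank, hudim _ (hΔy γ)]))).symm
  have hΔinj : Function.Injective Δ := by
    intro γ γ' hγ
    by_contra hne
    have h1 : Z ⊔ Submodule.span K {a, γ • b + e} = Z ⊔ Submodule.span K {a, γ' • b + e} := by
      rw [← hUDel γ, ← hUDel γ', hγ]
    have h2 : γ • b + e ∈ Z ⊔ Submodule.span K {a, γ' • b + e} := by
      rw [← h1]
      exact Submodule.mem_sup_right (Submodule.subset_span (by simp))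
    obtain ⟨s, hs, k, l, hkl⟩ := mem_sup_span_pair h2
    have hl1 : l = 1 := by
      by_contra hl1
      apply heSab
      have h3 : (1 - l) • e = s + k • a + (l * γ' - γ) • b := by
        linear_combination (norm := module) hkl
      have h5 : e = (1-l)⁻¹ • ((1-l) • e) := by
        rw [smul_smul, inv_mul_cancel₀ (sub_ne_zero.2 (Ne.symm hl1)), one_smul]
      rw [h5, h3]
      refine Submodule.smul_mem _ _ (Submodule.add_mem _ (Submodule.add_mem _ ?_ ?_) ?_)
      · exact Submodule.mem_sup_left hs
      · exact Submodule.mem_sup_right (Submodule.smul_mem _ _ (Submodule.subset_span (by simp)))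
      · exact Submodule.mem_sup_right (Submodule.smul_mem _ _ (Submodule.subset_span (by simp)))
    rw [hl1, one_smul] at hkl
    have h6 : (γ - γ') • b = s + k • a := by
      linear_combination (norm := module) hkl
    have h7 : (γ - γ') • b ∈ V x := by
      rw [hVxeq, h6]
      exact Submodule.add_mem _ (Submodule.mem_sup_left hs)
        (Submodule.mem_sup_right (Submodule.smul_mem _ _ (Submodule.mem_span_singleton_self a)))
    apply hbVx
    have h8 := (V x).smul_mem (γ - γ')⁻¹ h7
    rwa [smul_smul, inv_mul_cancel₀ (sub_ne_zero.2 hne), one_smul] at h8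
  -- assembly
  let κ : Fin q ≃ K := Fintype.equivOfCardEq (by simp)
  let fσ : Fin (q+1) → Fin (q+1) := Fin.lastCases x (fun i => Γ (κ i))
  have hfσ_last : fσ (Fin.last q) = x := by
    show Fin.lastCases x (fun i => Γ (κ i)) (Fin.last q) = x
    exact Fin.lastCases_last
  have hfσ_cast : ∀ i : Fin q, fσ i.castSucc = Γ (κ i) := by
    intro i
    show Fin.lastCases x (fun i => Γ (κ i)) i.castSucc = Γ (κ i)
    exact Fin.lastCases_castSucc i
  have hfσinj : Function.Injective fσ := by
    intro i j hij
    rcases Fin.eq_castSucc_or_eq_last i with ⟨i', rfl⟩ | rfl <;>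
      rcases Fin.eq_castSucc_or_eq_last j with ⟨j', rfl⟩ | rfl
    · rw [hfσ_cast i', hfσ_cast j'] at hij
      rw [κ.injective (hΓinj hij)]
    · rw [hfσ_cast i', hfσ_last] at hij
      exact absurd hij (hΓx (κ i'))
    · rw [hfσ_cast j', hfσ_last] at hij
      exact absurd hij.symm (hΓx (κ j'))
    · rfl
  let fτ : Fin (q+1) → Fin (q+1) := Fin.lastCases y (fun i => Δ (κ i))
  have hfτ_last : fτ (Fin.last q) = y := by
    show Fin.lastCases y (fun i => Δ (κ i)) (Fin.last q) = y
    exact Fin.lastCases_last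
  have hfτ_cast : ∀ i : Fin q, fτ i.castSucc = Δ (κ i) := by
    intro i
    show Fin.lastCases y (fun i => Δ (κ i)) i.castSucc = Δ (κ i)
    exact Fin.lastCases_castSucc i
  have hfτinj : Function.Injective fτ := by
    intro i j hij
    rcases Fin.eq_castSucc_or_eq_last i with ⟨i', rfl⟩ | rfl <;>
      rcases Fin.eq_castSucc_or_eq_last j with ⟨j', rfl⟩ | rfl
    · rw [hfτ_cast i', hfτ_cast j'] at hij
      rw [κ.injective (hΔinj hij)]
    · rw [hfτ_cast i', hfτ_last] at hij
      exact absurd hij (hΔy (κ i'))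
    · rw [hfτ_cast j', hfτ_last] at hij
      exact absurd hij.symm (hΔy (κ j'))
    · rfl
  refine ⟨Equiv.ofBijective fσ (Finite.injective_iff_bijective.1 hfσinj),
    Equiv.ofBijective fτ (Finite.injective_iff_bijective.1 hfτinj),
    Z, a, b, e, hLI, hbot, fun i => κ i, κ.bijective, ?_, ?_, ?_, ?_⟩
  · rw [show (Equiv.ofBijective fσ (Finite.injective_iff_bijective.1 hfσinj)) (Fin.last q)
      = fσ (Fin.last q) from rfl, hfσ_last]
    exact hVxeq
  · intro i
    rw [show (Equiv.ofBijective fσ (Finite.injective_iff_bijective.1 hfσinj)) i.castSucc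
      = fσ i.castSucc from rfl, hfσ_cast i]
    exact hVGam (κ i)
  · rw [show (Equiv.ofBijective fτ (Finite.injective_iff_bijective.1 hfτinj)) (Fin.last q)
      = fτ (Fin.last q) from rfl, hfτ_last]
    exact hUyeq
  · intro i
    rw [show (Equiv.ofBijective fτ (Finite.injective_iff_bijective.1 hfτinj)) i.castSucc
      = fτ i.castSucc from rfl, hfτ_cast i]
    exact hUDel (κ i)


end IsoB


/-- A nontrivial minimal solution with equal maximal dimensions `n > 1` in which exactly one
space of each tuple has dimension `n - 1` is equivalent to a pair of Type B. -/
theorem nontrivial_solution_is_typeB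
    (K W : Type*) [Field K] [Fintype K] [AddCommGroup W] [Module K W]
    [FiniteDimensional K W]
    (U V : Fin (Fintype.card K + 1) → Submodule K W)
    (hsol : IsometrySolution U V) (hnontriv : ¬ TuplesEquiv U V)
    (n : ℕ) (hn : 1 < n)
    (hmaxV : (Finset.univ.sup fun i => Module.finrank K ↥(V i)) = n)
    (hmaxU : (Finset.univ.sup fun i => Module.finrank K ↥(U i)) = n)
    (hX : (Finset.univ.filter fun i => Module.finrank K ↥(V i) = n - 1).card = 1)
    (hY : (Finset.univ.filter fun i => Module.finrank K ↥(U i) = n - 1).card = 1) :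
    ∃ (σ τ : Equiv.Perm (Fin (Fintype.card K + 1))) (S : Submodule K W) (a b c : W),
      LinearIndependent K ![a, b, c] ∧
      S ⊓ Submodule.span K {a, b, c} = ⊥ ∧
      ∃ α : Fin (Fintype.card K) → K, Function.Bijective α ∧
        V (σ (Fin.last (Fintype.card K))) = S ⊔ Submodule.span K {a} ∧
        (∀ i : Fin (Fintype.card K),
          V (σ i.castSucc) = S ⊔ Submodule.span K {b, α i • a + c}) ∧
        U (τ (Fin.last (Fintype.card K))) = S ⊔ Submodule.span K {b} ∧
        (∀ i : Fin (Fintype.card K),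
          U (τ i.castSucc) = S ⊔ Submodule.span K {a, α i • b + c}) := by
  classical
  have hne : ∃ A : Submodule K W, IsoB.fcount n V A ≠ IsoB.fcount n U A := by
    by_contra hcon
    push_neg at hcon
    apply hnontriv
    apply IsoB.tuples_equiv_of_counts
    intro A
    have h := hcon A
    rw [IsoB.fcount_card, IsoB.fcount_card] at h
    exact Nat.eq_of_mul_eq_mul_right (Nat.pow_pos Fintype.card_pos) h
  set D := ((Finset.univ.image V) ∪ (Finset.univ.image U)).filter
    (fun A => IsoB.fcount n V A ≠ IsoB.fcount n U A) with hD
  have hmemD : ∀ A : Submodule K W, IsoB.fcount n V A ≠ IsoB.fcount n U A → A ∈ D := by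
    intro A hA
    refine Finset.mem_filter.2 ⟨?_, hA⟩
    rcases Nat.eq_zero_or_pos (IsoB.fcount n V A) with h0 | hp
    · have h1 : 0 < IsoB.fcount n U A := by omega
      obtain ⟨j, hj⟩ := (IsoB.fcount_pos_iff n U A).1 h1
      exact Finset.mem_union_right _ (hj ▸ Finset.mem_image_of_mem U (Finset.mem_univ j))
    · obtain ⟨i, hi⟩ := (IsoB.fcount_pos_iff n V A).1 hp
      exact Finset.mem_union_left _ (hi ▸ Finset.mem_image_of_mem V (Finset.mem_univ i))
  have hDne : D.Nonempty := by
    obtain ⟨A, hA⟩ := hne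
    exact ⟨A, hmemD A hA⟩
  obtain ⟨M0, hM0D, hM0max⟩ := Finset.exists_max_image D (fun A => Module.finrank K ↥A) hDne
  have hM0ne := (Finset.mem_filter.1 hM0D).2
  have hM0max' : ∀ A : Submodule K W, IsoB.fcount n V A ≠ IsoB.fcount n U A →
      Module.finrank K ↥A ≤ Module.finrank K ↥M0 :=
    fun A hA => hM0max A (hmemD A hA)
  rcases lt_or_gt_of_ne hM0ne with hlt | hgt
  · have hsol2 : IsometrySolution V U := fun w => (hsol w).symm
    have hnontriv2 : ¬ TuplesEquiv V U := by
      rintro ⟨π, hπ⟩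
      exact hnontriv ⟨π.symm, fun i => by rw [hπ (π.symm i), Equiv.apply_symm_apply]⟩
    obtain ⟨σ2, τ2, S, a2, b2, c2, hLI, hbot, α, hα, h1, h2, h3, h4⟩ :=
      IsoB.main_aux V U hsol2 hnontriv2 n hn hmaxU hmaxV hY hX M0 hlt
        (fun A hA => hM0max' A (Ne.symm hA))
    refine ⟨τ2, σ2, S, b2, a2, c2, ?_, ?_, α, hα, h3, h4, h1, h2⟩
    · have hginj : Function.Injective ![(1 : Fin 3), 0, 2] := by decide
      have h5 := hLI.comp ![(1 : Fin 3), 0, 2] hginj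
      have heq : (![a2, b2, c2] ∘ ![(1 : Fin 3), 0, 2]) = ![b2, a2, c2] := by
        funext i; fin_cases i <;> rfl
      rwa [heq] at h5
    · rw [show ({b2, a2, c2} : Set W) = {a2, b2, c2} from Set.insert_comm b2 a2 {c2}]
      exact hbot
  · exact IsoB.main_aux U V hsol hnontriv n hn hmaxV hmaxU hX hY M0 hgt hM0max'
end

section
/- Let K be a finite field with |K| = q and let W be a finite-dimensional K-vector space. Let (U,V) be a pair of tuples of length m = q+1 of Type C: there exist a subspace S ⊆ W, linearly independent vectors a, b, c, d ∈ W with S ∩ span{a,b,c,d} = {0}, and an enumeration [α_1 : β_1], …, [α_m : β_m] of the q+1 points of the projective line over K, such that V_i = S + span{α_i a + β_i b, α_i c + β_i d} and U_i = S + span{α_i a + β_i c, α_i b + β_i d} for all i ∈ {1,…,m}. Then (U,V) is a nontrivial solution of the isometry equation and all the spaces V_1, …, V_m, U_1, …, U_m have the same dimension dim_K S + 2. -/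
open Finset
open scoped Classical

section Aux

variable {K : Type*} [Field K] [Fintype K]

/-- Uniqueness part. -/
private lemma cross_unique {m : ℕ} (α β : Fin m → K)
    (hproj : ∀ i j, i ≠ j → α i * β j ≠ α j * β i)
    {γ δ : K} (h : ¬ (γ = 0 ∧ δ = 0)) {i j : Fin m}
    (hi : γ * β i = δ * α i) (hj : γ * β j = δ * α j) : i = j := by
  by_contra hij
  have h1 : γ * (α i * β j - α j * β i) = 0 := by linear_combination α i * hj - α j * hi
  have h2 : δ * (α i * β j - α j * β i) = 0 := by linear_combination β i * hj - β j * hi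
  apply hproj i j hij
  rcases not_and_or.mp h with hγ | hδ
  · exact sub_eq_zero.mp ((mul_eq_zero.mp h1).resolve_left hγ)
  · exact sub_eq_zero.mp ((mul_eq_zero.mp h2).resolve_left hδ)

private lemma cross_exists (α β : Fin (Fintype.card K + 1) → K)
    (hαβ : ∀ i, (α i, β i) ≠ 0)
    (hproj : ∀ i j, i ≠ j → α i * β j ≠ α j * β i)
    {γ δ : K} (h : ¬ (γ = 0 ∧ δ = 0)) : ∃ i, γ * β i = δ * α i := by
  classical
  set φ : Fin (Fintype.card K + 1) → Option K :=
    fun i => if α i = 0 then none else some (β i / α i) with hφ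
  have hinj : Function.Injective φ := by
    intro i j hij
    by_contra hne
    by_cases hi : α i = 0
    · by_cases hj : α j = 0
      · exact hproj i j hne (by rw [hi, hj]; ring)
      · simp [hφ, hi, hj] at hij
    · by_cases hj : α j = 0
      · simp [hφ, hi, hj] at hij
      · simp [hφ, hi, hj] at hij
        apply hproj i j hne
        field_simp at hij
        linear_combination -hij
  have hsurj : Function.Surjective φ := by
    have hcard : Fintype.card (Fin (Fintype.card K + 1)) = Fintype.card (Option K) := by
      simp
    exact ((Fintype.bijective_iff_injective_and_card φ).mpr ⟨hinj, hcard⟩).2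
  by_cases hγ : γ = 0
  · have hδ : δ ≠ 0 := by tauto
    obtain ⟨i, hi⟩ := hsurj none
    have : α i = 0 := by
      by_contra hai; simp [hφ, hai] at hi
    refine ⟨i, by rw [hγ, this]; ring⟩
  · obtain ⟨i, hi⟩ := hsurj (some (δ / γ))
    have hai : α i ≠ 0 := by
      intro hai; simp [hφ, hai] at hi
    refine ⟨i, ?_⟩
    simp [hφ, hai] at hi
    field_simp at hi
    linear_combination hi

/-- In the rank-one case the number of solutions is one. -/
private lemma count_one (α β : Fin (Fintype.card K + 1) → K)
    (hαβ : ∀ i, (α i, β i) ≠ 0)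
    (hproj : ∀ i j, i ≠ j → α i * β j ≠ α j * β i)
    (x y z t : K) (hdet : x * t = y * z) (hne : ¬ (x = 0 ∧ y = 0 ∧ z = 0 ∧ t = 0)) :
    (univ.filter (fun i => x * β i = y * α i ∧ z * β i = t * α i)).card = 1 := by
  classical
  by_cases hxy : x = 0 ∧ y = 0
  · -- condition reduces to second conjunct, (z,t) ≠ 0
    have hzt : ¬ (z = 0 ∧ t = 0) := by tauto
    obtain ⟨i₀, hi₀⟩ := cross_exists α β hαβ hproj hzt
    rw [Finset.card_eq_one]
    refine ⟨i₀, ?_⟩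
    ext i
    simp only [mem_filter, mem_univ, true_and, Finset.mem_singleton]
    constructor
    · rintro ⟨-, h2⟩; exact cross_unique α β hproj hzt h2 hi₀
    · intro h; rw [h]; exact ⟨by rw [hxy.1, hxy.2]; ring, hi₀⟩
  · obtain ⟨i₀, hi₀⟩ := cross_exists α β hαβ hproj hxy
    have key : ∀ i, x * β i = y * α i → z * β i = t * α i := by
      intro i h1
      by_cases hx : x = 0
      · have hy : y ≠ 0 := by tauto
        have hz : z = 0 := by
          have : y * z = 0 := by rw [← hdet, hx]; ring
          rcases mul_eq_zero.mp this with h | h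
          · exact absurd h hy
          · exact h
        have hta : y * (t * α i) = 0 := by
          have : y * (t * α i) = t * (y * α i) := by ring
          rw [this, ← h1, hx]; ring
        rcases mul_eq_zero.mp hta with h | h
        · exact absurd h hy
        · rw [hz, h]; ring
      · have : x * (z * β i) = x * (t * α i) := by
          calc x * (z * β i) = z * (x * β i) := by ring
          _ = z * (y * α i) := by rw [h1]
          _ = (y * z) * α i := by ring
          _ = (x * t) * α i := by rw [hdet]
          _ = x * (t * α i) := by ring
        exact mul_left_cancel₀ hx this
    rw [Finset.card_eq_one]
    refine ⟨i₀, ?_⟩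
    ext i
    simp only [mem_filter, mem_univ, true_and, Finset.mem_singleton]
    constructor
    · rintro ⟨h1, -⟩; exact cross_unique α β hproj hxy h1 hi₀
    · intro h; rw [h]; exact ⟨hi₀, key i₀ hi₀⟩

private lemma count_zero {m : ℕ} (α β : Fin m → K)
    (hαβ : ∀ i, (α i, β i) ≠ 0)
    (x y z t : K) (hdet : x * t ≠ y * z) :
    (univ.filter (fun i => x * β i = y * α i ∧ z * β i = t * α i)).card = 0 := by
  classical
  rw [Finset.card_eq_zero, Finset.filter_eq_empty_iff]
  rintro i - ⟨h1, h2⟩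
  apply hdet
  by_cases ha : α i = 0
  · have hb : β i ≠ 0 := by
      intro hb; exact hαβ i (by simp [Prod.ext_iff, ha, hb])
    have hx : x = 0 := by
      have : x * β i = 0 := by rw [h1, ha]; ring
      rcases mul_eq_zero.mp this with h | h
      · exact h
      · exact absurd h hb
    have hz : z = 0 := by
      have : z * β i = 0 := by rw [h2, ha]; ring
      rcases mul_eq_zero.mp this with h | h
      · exact h
      · exact absurd h hb
    rw [hx, hz]; ring
  · by_cases hb : β i = 0
    · have hy : y = 0 := by
        have : y * α i = 0 := by rw [← h1, hb]; ring
        rcases mul_eq_zero.mp this with h | h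
        · exact h
        · exact absurd h ha
      have ht : t = 0 := by
        have : t * α i = 0 := by rw [← h2, hb]; ring
        rcases mul_eq_zero.mp this with h | h
        · exact h
        · exact absurd h ha
      rw [hy, ht]; ring
    · -- αβ(xt - yz) = 0 with α β ≠ 0
      have : (α i * β i) * (x * t) = (α i * β i) * (y * z) := by
        calc (α i * β i) * (x * t) = (x * β i) * (t * α i) := by ring
        _ = (y * α i) * (z * β i) := by rw [h1, ← h2]
        _ = (α i * β i) * (y * z) := by ring
      exact mul_left_cancel₀ (mul_ne_zero ha hb) this

/-- The main counting identity. -/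
private lemma count_eq (α β : Fin (Fintype.card K + 1) → K)
    (hαβ : ∀ i, (α i, β i) ≠ 0)
    (hproj : ∀ i j, i ≠ j → α i * β j ≠ α j * β i)
    (x y z t : K) :
    (univ.filter (fun i => x * β i = y * α i ∧ z * β i = t * α i)).card =
    (univ.filter (fun i => x * β i = z * α i ∧ y * β i = t * α i)).card := by
  classical
  by_cases hall : x = 0 ∧ y = 0 ∧ z = 0 ∧ t = 0
  · obtain ⟨hx, hy, hz, ht⟩ := hall
    subst hx; subst hy; subst hz; subst ht
    simp
  · by_cases hdet : x * t = y * z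
    · rw [count_one α β hαβ hproj x y z t hdet hall,
        count_one α β hαβ hproj x z y t (by rw [hdet]; ring) (by tauto)]
    · rw [count_zero α β hαβ x y z t hdet,
        count_zero α β hαβ x z y t (fun h => hdet (by rw [h]; ring))]

end Aux

section Mem

variable {K W : Type*} [Field K] [AddCommGroup W] [Module K W]

private lemma span_pair_le (a b c d : W) (γ δ : K) :
    Submodule.span K {γ • a + δ • b, γ • c + δ • d} ≤ Submodule.span K {a, b, c, d} := by
  apply Submodule.span_le.mpr
  rintro v (rfl | rfl)
  · exact add_mem (Submodule.smul_mem _ _ (Submodule.subset_span (by simp)))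
      (Submodule.smul_mem _ _ (Submodule.subset_span (by simp)))
  · exact add_mem (Submodule.smul_mem _ _ (Submodule.subset_span (by simp)))
      (Submodule.smul_mem _ _ (Submodule.subset_span (by simp)))

private lemma coeffs_eq (a b c d : W) (habcd : LinearIndependent K ![a, b, c, d])
    {p q r s p' q' r' s' : K}
    (h : p • a + q • b + r • c + s • d = p' • a + q' • b + r' • c + s' • d) :
    p = p' ∧ q = q' ∧ r = r' ∧ s = s' := by
  have h0 : (p - p') • a + (q - q') • b + (r - r') • c + (s - s') • d = 0 := by
    have hsub : (p • a + q • b + r • c + s • d) - (p' • a + q' • b + r' • c + s' • d) = 0 :=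
      sub_eq_zero.mpr h
    simp only [sub_smul]
    rw [← hsub]
    abel
  have := Fintype.linearIndependent_iff.mp habcd ![p - p', q - q', r - r', s - s'] ?_
  · refine ⟨sub_eq_zero.mp (this 0), sub_eq_zero.mp (this 1),
      sub_eq_zero.mp (this 2), sub_eq_zero.mp (this 3)⟩
  · rw [Fin.sum_univ_four]
    simpa using h0

/-- Membership criterion for `S ⊔ span {γa+δb, γc+δd}`. -/
private lemma mem_crit (S : Submodule K W) (a b c d : W)
    (habcd : LinearIndependent K ![a, b, c, d])
    (hSabcd : S ⊓ Submodule.span K {a, b, c, d} = ⊥)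
    (γ δ : K) (hγδ : ¬ (γ = 0 ∧ δ = 0))
    {s : W} (hs : s ∈ S) (x y z t : K) :
    s + (x • a + y • b + z • c + t • d) ∈
      S ⊔ Submodule.span K {γ • a + δ • b, γ • c + δ • d} ↔
      (x * δ = y * γ ∧ z * δ = t * γ) := by
  classical
  have hspan4 : (x • a + y • b + z • c + t • d) ∈ Submodule.span K {a, b, c, d} := by
    refine add_mem (add_mem (add_mem ?_ ?_) ?_) ?_ <;>
      exact Submodule.smul_mem _ _ (Submodule.subset_span (by simp))
  constructor
  · intro hmem
    have h1 : (x • a + y • b + z • c + t • d) ∈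
        S ⊔ Submodule.span K {γ • a + δ • b, γ • c + δ • d} := by
      have := Submodule.sub_mem _ hmem (Submodule.mem_sup_left hs)
      simpa using this
    rw [Submodule.mem_sup] at h1
    obtain ⟨s', hs', p, hp, hsum⟩ := h1
    have hps : s' ∈ S ⊓ Submodule.span K {a, b, c, d} := by
      refine ⟨hs', ?_⟩
      have : s' = (x • a + y • b + z • c + t • d) - p := by
        rw [← hsum]; abel
      rw [this]
      exact Submodule.sub_mem _ hspan4 (span_pair_le a b c d γ δ hp)
    rw [hSabcd] at hps
    have hs0 : s' = 0 := hps
    rw [hs0, zero_add] at hsum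
    rw [Submodule.mem_span_pair] at hp
    obtain ⟨lam, mu, hlm⟩ := hp
    rw [← hlm] at hsum
    have hexp : (lam * γ) • a + (lam * δ) • b + (mu * γ) • c + (mu * δ) • d =
        x • a + y • b + z • c + t • d := by
      rw [← hsum]
      simp only [smul_add, smul_smul]
      abel
    obtain ⟨e1, e2, e3, e4⟩ := coeffs_eq a b c d habcd hexp
    constructor
    · rw [← e1, ← e2]; ring
    · rw [← e3, ← e4]; ring
  · rintro ⟨h1, h2⟩
    apply Submodule.add_mem _ (Submodule.mem_sup_left hs)
    apply Submodule.mem_sup_right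
    rw [Submodule.mem_span_pair]
    by_cases hγ : γ = 0
    · have hδ : δ ≠ 0 := by tauto
      have hx : x = 0 := by
        have : x * δ = 0 := by rw [h1, hγ]; ring
        rcases mul_eq_zero.mp this with h | h
        · exact h
        · exact absurd h hδ
      have hz : z = 0 := by
        have : z * δ = 0 := by rw [h2, hγ]; ring
        rcases mul_eq_zero.mp this with h | h
        · exact h
        · exact absurd h hδ
      refine ⟨y / δ, t / δ, ?_⟩
      simp only [smul_add, smul_smul]
      rw [hγ, hx, hz]
      field_simp
      simp only [mul_zero, zero_mul, zero_div, zero_smul, zero_add, add_zero]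
    · refine ⟨x / γ, z / γ, ?_⟩
      simp only [smul_add, smul_smul]
      have hy : x / γ * δ = y := by
        field_simp; linear_combination h1
      have ht : z / γ * δ = t := by
        field_simp; linear_combination h2
      rw [div_mul_cancel₀ _ hγ, div_mul_cancel₀ _ hγ, hy, ht]
      abel

/-- Dimension of `S ⊔ span {γa+δb, γc+δd}`. -/
private lemma dim_crit (S : Submodule K W) [FiniteDimensional K W] (a b c d : W)
    (habcd : LinearIndependent K ![a, b, c, d])
    (hSabcd : S ⊓ Submodule.span K {a, b, c, d} = ⊥)
    (γ δ : K) (hγδ : ¬ (γ = 0 ∧ δ = 0)) :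
    Module.finrank K ↥(S ⊔ Submodule.span K {γ • a + δ • b, γ • c + δ • d}) =
      Module.finrank K ↥S + 2 := by
  classical
  set v := γ • a + δ • b
  set w := γ • c + δ • d
  have hindep : LinearIndependent K ![v, w] := by
    rw [LinearIndependent.pair_iff]
    intro p q hpq
    have : (p * γ) • a + (p * δ) • b + (q * γ) • c + (q * δ) • d =
        (0:K) • a + (0:K) • b + (0:K) • c + (0:K) • d := by
      simp only [zero_smul, add_zero, zero_add]
      rw [← hpq]
      simp only [v, w, smul_add, smul_smul]
      abel
    obtain ⟨e1, e2, e3, e4⟩ := coeffs_eq a b c d habcd this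
    constructor
    · rcases not_and_or.mp hγδ with h | h
      · rcases mul_eq_zero.mp e1 with h' | h'
        · exact h'
        · exact absurd h' h
      · rcases mul_eq_zero.mp e2 with h' | h'
        · exact h'
        · exact absurd h' h
    · rcases not_and_or.mp hγδ with h | h
      · rcases mul_eq_zero.mp e3 with h' | h'
        · exact h'
        · exact absurd h' h
      · rcases mul_eq_zero.mp e4 with h' | h'
        · exact h'
        · exact absurd h' h
  have hrange : Set.range ![v, w] = {v, w} := by
    simp only [Matrix.range_cons, Matrix.range_empty, Set.union_empty, Set.union_singleton]
    exact Set.pair_comm w v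
  have hspan2 : Module.finrank K ↥(Submodule.span K {v, w}) = 2 := by
    have := finrank_span_eq_card hindep
    rw [hrange] at this
    simpa using this
  have hinf : S ⊓ Submodule.span K {v, w} = ⊥ := by
    rw [eq_bot_iff]
    intro u hu
    rw [← hSabcd]
    exact ⟨hu.1, span_pair_le a b c d γ δ hu.2⟩
  have := Submodule.finrank_sup_add_finrank_inf_eq S (Submodule.span K {v, w})
  rw [hinf] at this
  simp only [finrank_bot, add_zero] at this
  rw [this, hspan2]

end Mem

/-- A pair of Type C is a nontrivial solution of the isometry equation, and all its spaces
have dimension `dim S + 2`. -/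
theorem typeC_is_nontrivial_solution
    (K W : Type*) [Field K] [Fintype K] [AddCommGroup W] [Module K W]
    [FiniteDimensional K W]
    (S : Submodule K W) (a b c d : W)
    (habcd : LinearIndependent K ![a, b, c, d])
    (hSabcd : S ⊓ Submodule.span K {a, b, c, d} = ⊥)
    (α β : Fin (Fintype.card K + 1) → K)
    (hαβ : ∀ i, (α i, β i) ≠ 0)
    (hproj : ∀ i j, i ≠ j → α i * β j ≠ α j * β i)
    (U V : Fin (Fintype.card K + 1) → Submodule K W)
    (hV : ∀ i, V i = S ⊔ Submodule.span K {α i • a + β i • b, α i • c + β i • d})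
    (hU : ∀ i, U i = S ⊔ Submodule.span K {α i • a + β i • c, α i • b + β i • d}) :
    IsometrySolution U V ∧ ¬ TuplesEquiv U V ∧
    (∀ i, Module.finrank K ↥(V i) = Module.finrank K ↥S + 2 ∧
          Module.finrank K ↥(U i) = Module.finrank K ↥S + 2) := by

  classical
  have hαβ' : ∀ i, ¬ (α i = 0 ∧ β i = 0) := by
    intro i h
    exact hαβ i (by rw [h.1, h.2]; rfl)
  -- swapped versions of the independence/intersection hypotheses
  have habcd' : LinearIndependent K ![a, c, b, d] := by
    have hinj : Function.Injective (![0, 2, 1, 3] : Fin 4 → Fin 4) := by decide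
    have := habcd.comp (![0, 2, 1, 3] : Fin 4 → Fin 4) hinj
    have heq : (![a, b, c, d] ∘ (![0, 2, 1, 3] : Fin 4 → Fin 4)) = ![a, c, b, d] := by
      funext i; fin_cases i <;> rfl
    rwa [heq] at this
  have hsetswap : ({a, c, b, d} : Set W) = {a, b, c, d} := by
    rw [Set.insert_comm c b]
  have hSabcd' : S ⊓ Submodule.span K {a, c, b, d} = ⊥ := by
    rw [hsetswap]; exact hSabcd
  -- dimensions
  have hdimV : ∀ i, Module.finrank K ↥(V i) = Module.finrank K ↥S + 2 := by
    intro i; rw [hV i]; exact dim_crit S a b c d habcd hSabcd _ _ (hαβ' i)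
  have hdimU : ∀ i, Module.finrank K ↥(U i) = Module.finrank K ↥S + 2 := by
    intro i; rw [hU i]; exact dim_crit S a c b d habcd' hSabcd' _ _ (hαβ' i)
  refine ⟨?_, ?_, fun i => ⟨hdimV i, hdimU i⟩⟩
  · -- the isometry equation
    intro w
    have hcard : ∀ (p : Submodule K W), Module.finrank K ↥p = Module.finrank K ↥S + 2 →
        Nat.card ↥p = Fintype.card K ^ (Module.finrank K ↥S + 2) := by
      intro p hp
      have : Finite ↥p := Module.finite_of_finite K
      have : Fintype ↥p := Fintype.ofFinite _
      rw [Nat.card_eq_fintype_card, Module.card_eq_pow_finrank (K := K), hp]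
    have hcV : ∀ i, Nat.card ↥(V i) = Fintype.card K ^ (Module.finrank K ↥S + 2) :=
      fun i => hcard _ (hdimV i)
    have hcU : ∀ i, Nat.card ↥(U i) = Fintype.card K ^ (Module.finrank K ↥S + 2) :=
      fun i => hcard _ (hdimU i)
    simp only [hcV, hcU, ← Finset.mul_sum]
    congr 1
    rw [Finset.sum_boole, Finset.sum_boole]
    congr 1
    -- now it is a counting statement
    by_cases hw : w ∈ S ⊔ Submodule.span K {a, b, c, d}
    · rw [Submodule.mem_sup] at hw
      obtain ⟨s, hs, u, hu, hsum⟩ := hw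
      have hset4 : ({a, b, c, d} : Set W) = Set.range ![a, b, c, d] := by
        ext x
        simp [Matrix.range_cons, Matrix.range_empty]
        tauto
      rw [hset4, Submodule.mem_span_range_iff_exists_fun] at hu
      obtain ⟨f, hf⟩ := hu
      rw [Fin.sum_univ_four] at hf
      simp only [Matrix.cons_val_zero, Matrix.cons_val_one, Matrix.head_cons,
        Matrix.cons_val_two, Matrix.tail_cons, Matrix.cons_val_three] at hf
      have hw' : w = s + (f 0 • a + f 1 • b + f 2 • c + f 3 • d) := by
        rw [hf, hsum]
      have hVmem : ∀ i, w ∈ V i ↔ (f 0 * β i = f 1 * α i ∧ f 2 * β i = f 3 * α i) := by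
        intro i
        rw [hw', hV i]
        exact mem_crit S a b c d habcd hSabcd _ _ (hαβ' i) hs _ _ _ _
      have hUmem : ∀ i, w ∈ U i ↔ (f 0 * β i = f 2 * α i ∧ f 1 * β i = f 3 * α i) := by
        intro i
        have hw'' : w = s + (f 0 • a + f 2 • c + f 1 • b + f 3 • d) := by
          rw [hw']; abel_nf
        rw [hw'', hU i]
        exact mem_crit S a c b d habcd' hSabcd' _ _ (hαβ' i) hs _ _ _ _
      have e1 : (univ.filter fun i => w ∈ V i) =
          univ.filter fun i => (f 0 * β i = f 1 * α i ∧ f 2 * β i = f 3 * α i) :=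
        Finset.filter_congr (fun i _ => by rw [hVmem i])
      have e2 : (univ.filter fun i => w ∈ U i) =
          univ.filter fun i => (f 0 * β i = f 2 * α i ∧ f 1 * β i = f 3 * α i) :=
        Finset.filter_congr (fun i _ => by rw [hUmem i])
      rw [e1, e2]
      exact_mod_cast count_eq α β hαβ hproj (f 0) (f 1) (f 2) (f 3)
    · have hVempty : ∀ i, ¬ (w ∈ V i) := by
        intro i hmem
        apply hw
        rw [hV i] at hmem
        exact sup_le_sup_left (span_pair_le a b c d (α i) (β i)) S hmem
      have hUempty : ∀ i, ¬ (w ∈ U i) := by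
        intro i hmem
        apply hw
        have := sup_le_sup_left (span_pair_le a c b d (α i) (β i)) S
          ((hU i) ▸ hmem)
        rwa [hsetswap] at this
      rw [Finset.filter_false_of_mem (fun i _ => hVempty i),
        Finset.filter_false_of_mem (fun i _ => hUempty i)]
  · -- nontriviality
    rintro ⟨π, hπ⟩
    set j := π 0 with hj
    have h1 : α 0 • a + β 0 • b ∈ U j := by
      rw [← hπ 0, hV 0]
      exact Submodule.mem_sup_right (Submodule.subset_span (by simp))
    have h2 : α 0 • c + β 0 • d ∈ U j := by
      rw [← hπ 0, hV 0]
      exact Submodule.mem_sup_right (Submodule.subset_span (by simp))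
    have h1' : (0:W) + (α 0 • a + (0:K) • c + β 0 • b + (0:K) • d) ∈
        S ⊔ Submodule.span K {α j • a + β j • c, α j • b + β j • d} := by
      have : (0:W) + (α 0 • a + (0:K) • c + β 0 • b + (0:K) • d) =
          α 0 • a + β 0 • b := by simp
      rw [this, ← hU j]; exact h1
    have h2' : (0:W) + ((0:K) • a + α 0 • c + (0:K) • b + β 0 • d) ∈
        S ⊔ Submodule.span K {α j • a + β j • c, α j • b + β j • d} := by
      have : (0:W) + ((0:K) • a + α 0 • c + (0:K) • b + β 0 • d) =
          α 0 • c + β 0 • d := by simp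
      rw [this, ← hU j]; exact h2
    have c1 := (mem_crit S a c b d habcd' hSabcd' _ _ (hαβ' j)
      (Submodule.zero_mem S) (α 0) 0 (β 0) 0).mp h1'
    have c2 := (mem_crit S a c b d habcd' hSabcd' _ _ (hαβ' j)
      (Submodule.zero_mem S) 0 (α 0) 0 (β 0)).mp h2'
    -- c1 : α 0 * β j = 0 * α j ∧ β 0 * β j = 0 * α j
    -- c2 : 0 * β j = α 0 * α j ∧ 0 * β j = β 0 * α j
    apply hαβ' j
    rcases not_and_or.mp (hαβ' 0) with h0 | h0
    · constructor
      · have := c2.1; rcases mul_eq_zero.mp (by linear_combination -this : α 0 * α j = 0)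
          with h | h
        · exact absurd h h0
        · exact h
      · have := c1.1; rcases mul_eq_zero.mp (by linear_combination this : α 0 * β j = 0)
          with h | h
        · exact absurd h h0
        · exact h
    · constructor
      · have := c2.2; rcases mul_eq_zero.mp (by linear_combination -this : β 0 * α j = 0)
          with h | h
        · exact absurd h h0
        · exact h
      · have := c1.2; rcases mul_eq_zero.mp (by linear_combination this : β 0 * β j = 0)
          with h | h
        · exact absurd h h0
        · exact h
end
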